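/- arXiv:math/0509315 — 8 statements merged into one kernel-verified Lean document; each statement's English description precedes it below -/
import Mathlib

section
/- Let (a_n) be a bounded sequence of real numbers and let T_N = (1/N) ∑_{n=1}^N a_n. Then T_N converges to a limit t if and only if there exists a strictly increasing sequence of indices N_i with N_i / N_{i+1} → 1 such that T_{N_i} → t. -/
open Filter Finset

lemma cesaro_diff_bound (a : ℕ → ℝ) (C : ℝ) (hbd : ∀ n, |a n| ≤ C)
    {M N : ℕ} (hM : 1 ≤ M) (hMN : M ≤ N) :
    |(1 / (N : ℝ)) * ∑ n ∈ Finset.Icc 1 N, a n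
      - (1 / (M : ℝ)) * ∑ n ∈ Finset.Icc 1 M, a n| ≤ 2 * C * ((N : ℝ) / M - 1) := by
  have hC0 : 0 ≤ C := (abs_nonneg _).trans (hbd 0)
  have hMr : (1 : ℝ) ≤ (M : ℝ) := by exact_mod_cast hM
  have hNr : (M : ℝ) ≤ (N : ℝ) := by exact_mod_cast hMN
  have hMpos : (0 : ℝ) < M := by linarith
  have hNpos : (0 : ℝ) < N := by linarith
  set x : ℝ := ∑ n ∈ Finset.Icc 1 M, a n with hx
  set y : ℝ := ∑ n ∈ Finset.Ioc M N, a n with hy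
  have hsplit : ∑ n ∈ Finset.Icc 1 N, a n = x + y := by
    rw [hx, hy, show (1 : ℕ) = 0 + 1 from rfl, Finset.Icc_add_one_left_eq_Ioc, Finset.Icc_add_one_left_eq_Ioc]
    exact (Finset.sum_Ioc_consecutive _ (Nat.zero_le M) hMN).symm
  have hxb : |x| ≤ C * M := by
    calc |x| ≤ ∑ n ∈ Finset.Icc 1 M, |a n| := Finset.abs_sum_le_sum_abs _ _
      _ ≤ ∑ n ∈ Finset.Icc 1 M, C := Finset.sum_le_sum fun n _ => hbd n
      _ = C * M := by rw [Finset.sum_const, Nat.card_Icc, nsmul_eq_mul]; push_cast; ring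
  have hyb : |y| ≤ C * ((N : ℝ) - M) := by
    calc |y| ≤ ∑ n ∈ Finset.Ioc M N, |a n| := Finset.abs_sum_le_sum_abs _ _
      _ ≤ ∑ n ∈ Finset.Ioc M N, C := Finset.sum_le_sum fun n _ => hbd n
      _ = C * ((N : ℝ) - M) := by
          rw [Finset.sum_const, Nat.card_Ioc, nsmul_eq_mul, Nat.cast_sub hMN]
          ring
  rw [hsplit]
  have key : (1 / (N : ℝ)) * (x + y) - (1 / (M : ℝ)) * x
      = y / N - x * ((N : ℝ) - M) / (N * M) := by
    field_simp
    ring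
  rw [key]
  calc |y / (N : ℝ) - x * ((N : ℝ) - M) / (N * M)|
      ≤ |y / (N : ℝ)| + |x * ((N : ℝ) - M) / (N * M)| := abs_sub _ _
    _ = |y| / N + |x| * ((N : ℝ) - M) / (N * M) := by
        rw [abs_div, abs_div, abs_mul, abs_of_pos hNpos, abs_of_pos (mul_pos hNpos hMpos),
          abs_of_nonneg (by linarith : (0:ℝ) ≤ (N : ℝ) - M)]
    _ ≤ C * ((N : ℝ) - M) / N + (C * M) * ((N : ℝ) - M) / (N * M) := by
        gcongr
    _ = 2 * C * ((N : ℝ) - M) / N := by field_simp; ring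
    _ ≤ 2 * C * ((N : ℝ) - M) / M := by
        have h0 : (0:ℝ) ≤ 2 * C * ((N : ℝ) - M) := by nlinarith
        exact div_le_div_of_nonneg_left h0 hMpos hNr
    _ = 2 * C * ((N : ℝ) / M - 1) := by field_simp

theorem cesaro_limit_iff_ratio_subsequence
    (a : ℕ → ℝ) (C : ℝ) (hbd : ∀ n, |a n| ≤ C)
    (T : ℕ → ℝ) (hT : ∀ N, T N = (1 / (N : ℝ)) * ∑ n ∈ Finset.Icc 1 N, a n)
    (t : ℝ) :
    Filter.Tendsto T Filter.atTop (nhds t) ↔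
      ∃ N' : ℕ → ℕ, StrictMono N' ∧
        Filter.Tendsto (fun i => (N' i : ℝ) / (N' (i + 1) : ℝ)) Filter.atTop (nhds 1) ∧
        Filter.Tendsto (fun i => T (N' i)) Filter.atTop (nhds t) := by
  constructor
  · intro h
    refine ⟨id, strictMono_id, ?_, h.comp tendsto_id⟩
    have := tendsto_natCast_div_add_atTop (𝕜 := ℝ) 1
    simpa [Nat.cast_add] using this
  · rintro ⟨N', hmono, hratio, hlim⟩
    have hC0 : 0 ≤ C := (abs_nonneg _).trans (hbd 0)
    -- ratio N'(i+1)/N'(i) → 1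
    have hratio' : Tendsto (fun i => (N' (i + 1) : ℝ) / (N' i : ℝ)) atTop (nhds 1) := by
      have := (hratio.inv₀ one_ne_zero)
      simpa [inv_div] using this
    have herr : Tendsto (fun i => 2 * C * ((N' (i + 1) : ℝ) / (N' i : ℝ) - 1)) atTop (nhds 0) := by
      have : Tendsto (fun i => 2 * C * ((N' (i + 1) : ℝ) / (N' i : ℝ) - 1)) atTop
          (nhds (2 * C * (1 - 1))) := (hratio'.sub_const 1).const_mul _
      simpa using this
    rw [Metric.tendsto_atTop] at hlim ⊢
    intro ε hε
    obtain ⟨I₁, hI₁⟩ := hlim (ε / 2) (by linarith)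
    have herr' := (Metric.tendsto_atTop.mp herr) (ε / 2) (by linarith)
    obtain ⟨I₂, hI₂⟩ := herr'
    set I := max (max I₁ I₂) 1 with hI
    refine ⟨N' I, fun N hN => ?_⟩
    -- find i with N' i ≤ N < N' (i+1)
    have hIN : I ≤ N := le_trans hmono.le_apply hN
    set i := Nat.findGreatest (fun j => N' j ≤ N) N with hi
    have hiI : I ≤ i := Nat.le_findGreatest (P := fun j => N' j ≤ N) hIN hN
    have hle : N' i ≤ N := Nat.findGreatest_spec (P := fun j => N' j ≤ N) hIN hN
    have hlt : N < N' (i + 1) := by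
      by_contra hcon
      push_neg at hcon
      exact Nat.findGreatest_is_greatest (P := fun j => N' j ≤ N) (Nat.lt_succ_self i)
        (le_trans hmono.le_apply hcon) hcon
    have hi1 : 1 ≤ N' i := le_trans (le_trans (le_max_right _ _) hiI) hmono.le_apply
    -- bound |T N - T (N' i)|
    have hbound : |T N - T (N' i)| ≤ 2 * C * ((N' (i + 1) : ℝ) / (N' i : ℝ) - 1) := by
      have h1 : |T N - T (N' i)| ≤ 2 * C * ((N : ℝ) / (N' i : ℝ) - 1) := by
        rw [hT, hT]
        exact cesaro_diff_bound a C hbd hi1 hle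
      refine h1.trans ?_
      have hNipos : (0 : ℝ) < (N' i : ℝ) := by exact_mod_cast hi1
      have : (N : ℝ) ≤ (N' (i + 1) : ℝ) := by exact_mod_cast hlt.le
      have hdiv : (N : ℝ) / (N' i : ℝ) ≤ (N' (i + 1) : ℝ) / (N' i : ℝ) := by gcongr
      nlinarith
    have hd1 : dist (T (N' i)) t < ε / 2 := hI₁ i ((le_max_left I₁ I₂).trans ((le_max_left _ 1).trans hiI))
    have hd2 : dist (2 * C * ((N' (i + 1) : ℝ) / (N' i : ℝ) - 1)) 0 < ε / 2 :=
      hI₂ i ((le_max_right I₁ I₂).trans ((le_max_left _ 1).trans hiI))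
    rw [Real.dist_eq] at hd1 hd2 ⊢
    simp only [sub_zero] at hd2
    have h2 : 2 * C * ((N' (i + 1) : ℝ) / (N' i : ℝ) - 1) < ε / 2 := (le_abs_self _).trans_lt hd2
    calc |T N - t| ≤ |T N - T (N' i)| + |T (N' i) - t| := abs_sub_le _ _ _
      _ < ε / 2 + ε / 2 := by
          have := hbound.trans_lt h2
          linarith [abs_nonneg (T N - T (N' i))]
      _ = ε := by ring
end

section
/- Let (a_n) be a bounded sequence of real numbers and T_N = (1/N) ∑_{n=1}^N a_n. If T_{N^{40}} → 0 as N → ∞, then T_N → 0. -/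
open Filter Finset Topology

theorem cesaro_limit_of_pow40_subsequence
    (a : ℕ → ℝ) (C : ℝ) (hbd : ∀ n, |a n| ≤ C)
    (T : ℕ → ℝ) (hT : ∀ N, T N = (1 / (N : ℝ)) * ∑ n ∈ Finset.Icc 1 N, a n)
    (h : Filter.Tendsto (fun N : ℕ => T (N ^ 40)) Filter.atTop (nhds 0)) :
    Filter.Tendsto T Filter.atTop (nhds 0) := by
  have hC : 0 ≤ C := le_trans (abs_nonneg _) (hbd 0)
  set m : ℕ → ℕ := fun N => Nat.findGreatest (fun k => k ^ 40 ≤ N) N with hm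
  have hm1 : ∀ N, 1 ≤ N → 1 ≤ m N := by
    intro N hN
    exact Nat.le_findGreatest (P := fun k => k ^ 40 ≤ N) hN (by simpa using hN)
  have hm_le : ∀ N, 1 ≤ N → m N ^ 40 ≤ N := by
    intro N hN
    exact Nat.findGreatest_spec (P := fun k => k ^ 40 ≤ N) (m := 1) hN (by simpa using hN)
  have hm_lt : ∀ N, 1 ≤ N → N < (m N + 1) ^ 40 := by
    intro N hN
    by_contra hc
    push_neg at hc
    have h1 : m N + 1 ≤ N := le_trans (Nat.le_self_pow (by norm_num) _) hc
    have h2 : m N + 1 ≤ m N := Nat.le_findGreatest (P := fun k => k ^ 40 ≤ N) h1 hc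
    omega
  have hm_tendsto : Tendsto m atTop atTop := by
    refine tendsto_atTop_atTop.2 fun b => ⟨b ^ 40, fun N hN => ?_⟩
    exact Nat.le_findGreatest (P := fun k => k ^ 40 ≤ N) (le_trans (Nat.le_self_pow (by norm_num) _) hN) hN
  -- bound function
  have key : ∀ N, 1 ≤ N →
      |T N| ≤ |T (m N ^ 40)| + C * ((1 + 1 / (m N : ℝ)) ^ 40 - 1) := by
    intro N hN
    set M := m N with hM
    have hM1 : 1 ≤ M := hm1 N hN
    have hK : M ^ 40 ≤ N := hm_le N hN
    have hlt : N < (M + 1) ^ 40 := hm_lt N hN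
    have hMpos : (0:ℝ) < (M:ℝ) := by exact_mod_cast hM1
    have hKpos : (0:ℝ) < ((M:ℝ)) ^ 40 := by positivity
    have hNpos : (0:ℝ) < (N:ℝ) := by exact_mod_cast hN
    have hKN : ((M:ℝ)) ^ 40 ≤ (N:ℝ) := by exact_mod_cast hK
    -- sum splitting
    have hsplit : (∑ n ∈ Icc 1 N, a n)
        = (∑ n ∈ Icc 1 (M ^ 40), a n) + ∑ n ∈ Ioc (M ^ 40) N, a n := by
      rw [show Icc 1 N = Ioc 0 N from by rw [← Finset.Icc_add_one_left_eq_Ioc]; rfl,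
          show Icc 1 (M ^ 40) = Ioc 0 (M ^ 40) from by rw [← Finset.Icc_add_one_left_eq_Ioc]; rfl]
      rw [← Finset.sum_Ioc_consecutive _ (Nat.zero_le _) hK]
    have htail : |∑ n ∈ Ioc (M ^ 40) N, a n| ≤ ((N : ℝ) - (M:ℝ) ^ 40) * C := by
      calc |∑ n ∈ Ioc (M ^ 40) N, a n| ≤ ∑ n ∈ Ioc (M ^ 40) N, |a n| :=
            Finset.abs_sum_le_sum_abs _ _
        _ ≤ ∑ n ∈ Ioc (M ^ 40) N, C := Finset.sum_le_sum fun i _ => hbd i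
        _ = ((Ioc (M ^ 40) N).card : ℝ) * C := by rw [Finset.sum_const, nsmul_eq_mul]
        _ = ((N : ℝ) - (M:ℝ) ^ 40) * C := by
            rw [Nat.card_Ioc]
            rw [Nat.cast_sub hK]
            push_cast
            ring
    have hTN : |T N| = |∑ n ∈ Icc 1 N, a n| / N := by
      rw [hT N, abs_mul, abs_of_nonneg (by positivity : (0:ℝ) ≤ 1 / (N:ℝ))]
      rw [one_div, inv_mul_eq_div]
    have hTK : |T (M ^ 40)| = |∑ n ∈ Icc 1 (M ^ 40), a n| / (M:ℝ) ^ 40 := by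
      rw [hT (M ^ 40), abs_mul,
        abs_of_nonneg (by positivity : (0:ℝ) ≤ 1 / ((M ^ 40 : ℕ):ℝ))]
      push_cast
      rw [one_div, inv_mul_eq_div]
    rw [hTN, hTK]
    have step1 : |∑ n ∈ Icc 1 N, a n| / N ≤
        (|∑ n ∈ Icc 1 (M ^ 40), a n| + ((N : ℝ) - (M:ℝ) ^ 40) * C) / N := by
      gcongr
      calc |∑ n ∈ Icc 1 N, a n|
          ≤ |∑ n ∈ Icc 1 (M ^ 40), a n| + |∑ n ∈ Ioc (M ^ 40) N, a n| := by
            rw [hsplit]; exact abs_add_le _ _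
        _ ≤ _ := by linarith [htail]
    refine step1.trans ?_
    rw [add_div]
    have step2 : |∑ n ∈ Icc 1 (M ^ 40), a n| / N ≤
        |∑ n ∈ Icc 1 (M ^ 40), a n| / (M:ℝ) ^ 40 :=
      div_le_div_of_nonneg_left (abs_nonneg _) hKpos hKN
    have step3 : ((N : ℝ) - (M:ℝ) ^ 40) * C / N ≤ C * ((1 + 1 / (M : ℝ)) ^ 40 - 1) := by
      have hNle : (N:ℝ) ≤ ((M:ℝ) + 1) ^ 40 := by
        have : (N:ℝ) < (((M + 1 : ℕ)) ^ 40 : ℕ) := by exact_mod_cast hlt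
        push_cast at this
        linarith
      have e1 : (1 + 1 / (M : ℝ)) ^ 40 = ((M:ℝ) + 1) ^ 40 / (M:ℝ) ^ 40 := by
        rw [← div_pow]
        congr 1
        field_simp
      rw [e1]
      have : ((N : ℝ) - (M:ℝ) ^ 40) * C / N ≤ (((M:ℝ)+1) ^ 40 - (M:ℝ) ^ 40) * C / (M:ℝ) ^ 40 := by
        apply div_le_div₀ (mul_nonneg (by linarith) hC) ?_ hKpos hKN
        have := mul_le_mul_of_nonneg_right (sub_le_sub_right hNle ((M:ℝ) ^ 40)) hC
        linarith
      refine this.trans_eq ?_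
      field_simp
    linarith
  -- bound tends to zero
  have herr : Tendsto (fun M : ℕ => C * ((1 + 1 / (M : ℝ)) ^ 40 - 1)) atTop (𝓝 0) := by
    have h1 : Tendsto (fun M : ℕ => (1 + 1 / (M : ℝ)) ^ 40) atTop (𝓝 1) := by
      have := (tendsto_const_nhds (x := (1:ℝ)) (f := atTop (α := ℕ))).add
        tendsto_one_div_atTop_nhds_zero_nat
      have h2 := this.pow 40
      simpa using h2
    have h3 : Tendsto (fun M : ℕ => (1 + 1 / (M : ℝ)) ^ 40 - 1) atTop (𝓝 0) := by
      simpa using h1.sub (tendsto_const_nhds (x := (1:ℝ)))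
    simpa using h3.const_mul C
  have hb : Tendsto (fun N => |T (m N ^ 40)| + C * ((1 + 1 / (m N : ℝ)) ^ 40 - 1))
      atTop (𝓝 0) := by
    have h1 : Tendsto (fun N => |T (m N ^ 40)|) atTop (𝓝 0) := by
      have := (h.comp hm_tendsto).abs
      simpa using this
    have h2 := herr.comp hm_tendsto
    simpa using h1.add h2
  refine squeeze_zero_norm' ?_ hb
  filter_upwards [eventually_ge_atTop 1] with N hN
  simpa using key N hN
end

section
/- There exists a constant C (depending on k and i_1 < ... < i_k) such that for all N ≥ 1, ∑_{n=1}^N 2^{h(n)} ≤ C · N^{1.45}, where h(n) denotes the number of prime factors of the squarefree part of ξ(n) = n(n+i_1)⋯(n+i_k). -/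
-- auxiliary: 2^ω(m) ≤ C * m^ε
lemma two_pow_omega_le (ε : ℝ) (hε : 0 < ε) :
    ∃ C : ℝ, 0 < C ∧ ∀ m : ℕ, 1 ≤ m →
      (2 : ℝ) ^ m.primeFactors.card ≤ C * (m : ℝ) ^ ε := by
  obtain ⟨T, hT⟩ : ∃ T : ℕ, (2 : ℝ) ≤ (T : ℝ) ^ ε := by
    refine ⟨⌈(2 : ℝ) ^ ε⁻¹⌉₊, ?_⟩
    have h1 : ((2 : ℝ) ^ ε⁻¹) ^ ε = 2 := Real.rpow_inv_rpow (by norm_num) hε.ne'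
    calc (2 : ℝ) = ((2 : ℝ) ^ ε⁻¹) ^ ε := h1.symm
      _ ≤ (⌈(2 : ℝ) ^ ε⁻¹⌉₊ : ℝ) ^ ε :=
          Real.rpow_le_rpow (Real.rpow_nonneg (by norm_num) _) (Nat.le_ceil _) hε.le
  refine ⟨2 ^ T, by positivity, fun m hm => ?_⟩
  set S := m.primeFactors with hS
  set A := S.filter (fun p => p < T) with hA
  set B := S.filter (fun p => ¬ p < T) with hB
  have hcard : S.card = A.card + B.card :=
    (Finset.card_filter_add_card_filter_not _).symm
  have hAcard : A.card ≤ T := by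
    have : A ⊆ Finset.range T := fun p hp => by
      simp only [hA, Finset.mem_filter] at hp
      exact Finset.mem_range.2 hp.2
    simpa using Finset.card_le_card this
  have hBle : (2 : ℝ) ^ B.card ≤ (m : ℝ) ^ ε := by
    have hprod : (∏ p ∈ B, p) ∣ m := by
      refine Finset.prod_primes_dvd m (fun p hp => ?_) (fun p hp => ?_)
      · simp only [hB, Finset.mem_filter] at hp
        exact (Nat.prime_of_mem_primeFactors hp.1).prime
      · simp only [hB, Finset.mem_filter] at hp
        exact Nat.dvd_of_mem_primeFactors hp.1
    have hmpos : 0 < m := hm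
    have hle : (∏ p ∈ B, p) ≤ m := Nat.le_of_dvd hmpos hprod
    calc (2 : ℝ) ^ B.card = ∏ p ∈ B, (2 : ℝ) := by simp
      _ ≤ ∏ p ∈ B, (p : ℝ) ^ ε := by
          refine Finset.prod_le_prod (fun p _ => by norm_num) (fun p hp => ?_)
          simp only [hB, Finset.mem_filter, not_lt] at hp
          exact hT.trans (Real.rpow_le_rpow (Nat.cast_nonneg _) (by exact_mod_cast hp.2) hε.le)
      _ = ((∏ p ∈ B, p : ℕ) : ℝ) ^ ε := by
          rw [Nat.cast_prod]
          exact Real.finset_prod_rpow B _ (fun p _ => Nat.cast_nonneg p) ε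
      _ ≤ (m : ℝ) ^ ε :=
          Real.rpow_le_rpow (Nat.cast_nonneg _) (by exact_mod_cast hle) hε.le
  calc (2 : ℝ) ^ S.card = 2 ^ A.card * 2 ^ B.card := by rw [hcard, pow_add]
    _ ≤ 2 ^ T * (m : ℝ) ^ ε := by
        refine mul_le_mul ?_ hBle (by positivity) (by positivity)
        exact pow_le_pow_right₀ (by norm_num) hAcard

theorem sum_two_pow_h_bound
    (k : ℕ) (i : Fin k → ℕ) (hpos : ∀ j, 0 < i j) (hmono : StrictMono i)
    (ξ : ℕ → ℕ) (hξ : ∀ x, ξ x = x * ∏ j, (x + i j))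
    (h : ℕ → ℕ)
    (hh : ∀ x, h x =
      ((ξ x).primeFactors.filter fun p => Odd ((ξ x).factorization p)).card) :
    ∃ C : ℝ, ∀ N : ℕ, 1 ≤ N →
      ∑ n ∈ Finset.Icc 1 N, (2 : ℝ) ^ h n ≤ C * (N : ℝ) ^ (1.45 : ℝ) := by
  set ε : ℝ := 0.45 / (k + 1) with hεdef
  have hε : 0 < ε := by positivity
  obtain ⟨C₁, hC₁pos, hC₁⟩ := two_pow_omega_le ε hε
  set M : ℕ := ∑ j, i j with hM
  refine ⟨C₁ * ((1 + M : ℕ) : ℝ) ^ (0.45 : ℝ), fun N hN => ?_⟩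
  have key : ∀ n ∈ Finset.Icc 1 N,
      (2 : ℝ) ^ h n ≤ C₁ * ((1 + M : ℕ) : ℝ) ^ (0.45 : ℝ) * (N : ℝ) ^ (0.45 : ℝ) := by
    intro n hn
    rw [Finset.mem_Icc] at hn
    have hn1 : 1 ≤ n := hn.1
    have hξpos : 1 ≤ ξ n := by
      rw [hξ]
      exact Nat.one_le_iff_ne_zero.2 (by positivity)
    have h1 : (2 : ℝ) ^ h n ≤ (2 : ℝ) ^ (ξ n).primeFactors.card := by
      refine pow_le_pow_right₀ (by norm_num) ?_
      rw [hh]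
      exact Finset.card_le_card (Finset.filter_subset _ _)
    have h2 : (2 : ℝ) ^ (ξ n).primeFactors.card ≤ C₁ * ((ξ n : ℕ) : ℝ) ^ ε :=
      hC₁ _ hξpos
    have hξle : ξ n ≤ (n + M) ^ (k + 1) := by
      rw [hξ, pow_succ, mul_comm ((n+M)^k)]
      refine Nat.mul_le_mul (Nat.le_add_right _ _) ?_
      calc ∏ j, (n + i j) ≤ ∏ j : Fin k, (n + M) := by
            refine Finset.prod_le_prod' (fun j _ => Nat.add_le_add_left ?_ n)
            exact Finset.single_le_sum (f := i) (fun j _ => Nat.zero_le _) (Finset.mem_univ j)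
        _ = (n + M) ^ k := by simp
    have hnM : n + M ≤ (1 + M) * N := by
      calc n + M ≤ N + M * N := Nat.add_le_add hn.2 (Nat.le_mul_of_pos_right M hN)
        _ = (1 + M) * N := by ring
    have h3 : ((ξ n : ℕ) : ℝ) ^ ε ≤ ((1 + M : ℕ) : ℝ) ^ (0.45 : ℝ) * (N : ℝ) ^ (0.45 : ℝ) := by
      have step1 : ((ξ n : ℕ) : ℝ) ^ ε ≤ (((n + M : ℕ) : ℝ)) ^ ((k + 1 : ℝ) * ε) := by
        have : (((n + M : ℕ) : ℝ)) ^ ((k + 1 : ℝ) * ε)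
            = ((((n + M) ^ (k + 1) : ℕ) : ℝ)) ^ ε := by
          rw [Real.rpow_mul (Nat.cast_nonneg _)]
          congr 1
          push_cast
          rw [← Real.rpow_natCast ((n : ℝ) + M) (k + 1)]
          push_cast
          ring_nf
        rw [this]
        exact Real.rpow_le_rpow (Nat.cast_nonneg _) (by exact_mod_cast hξle) hε.le
      have hexp : (k + 1 : ℝ) * ε = 0.45 := by
        rw [hεdef]; field_simp
      rw [hexp] at step1
      refine step1.trans ?_
      have : (((n + M : ℕ) : ℝ)) ^ (0.45 : ℝ) ≤ (((1 + M) * N : ℕ) : ℝ) ^ (0.45 : ℝ) :=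
        Real.rpow_le_rpow (Nat.cast_nonneg _) (by exact_mod_cast hnM) (by norm_num)
      refine this.trans_eq ?_
      push_cast
      rw [Real.mul_rpow (by positivity) (Nat.cast_nonneg _)]
    calc (2 : ℝ) ^ h n ≤ C₁ * ((ξ n : ℕ) : ℝ) ^ ε := h1.trans h2
      _ ≤ C₁ * (((1 + M : ℕ) : ℝ) ^ (0.45 : ℝ) * (N : ℝ) ^ (0.45 : ℝ)) :=
          mul_le_mul_of_nonneg_left h3 hC₁pos.le
      _ = C₁ * ((1 + M : ℕ) : ℝ) ^ (0.45 : ℝ) * (N : ℝ) ^ (0.45 : ℝ) := by ring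
  calc ∑ n ∈ Finset.Icc 1 N, (2 : ℝ) ^ h n
      ≤ ∑ n ∈ Finset.Icc 1 N, C₁ * ((1 + M : ℕ) : ℝ) ^ (0.45 : ℝ) * (N : ℝ) ^ (0.45 : ℝ) :=
        Finset.sum_le_sum key
    _ = N * (C₁ * ((1 + M : ℕ) : ℝ) ^ (0.45 : ℝ) * (N : ℝ) ^ (0.45 : ℝ)) := by
        rw [Finset.sum_const, Nat.card_Icc]; simp [mul_comm]
    _ = C₁ * ((1 + M : ℕ) : ℝ) ^ (0.45 : ℝ) * (N : ℝ) ^ (1.45 : ℝ) := by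
        have hNpos : (0 : ℝ) < N := by exact_mod_cast hN
        have : (N : ℝ) ^ (1.45 : ℝ) = (N : ℝ) * (N : ℝ) ^ (0.45 : ℝ) := by
          rw [show (1.45 : ℝ) = 1 + 0.45 by norm_num, Real.rpow_add hNpos, Real.rpow_one]
        rw [this]; ring
end

section
/- If A ⊆ ℕ is a normal set and a ∈ ℕ is positive, then A_a = {n ∈ ℕ : a·n ∈ A} is also a normal set. -/
open Filter Finset Topology


open scoped Classical

/-- A set of natural numbers is *normal* if every nonempty binary word `w` occurs
in the indicator sequence of `A` (read off at positions 1, 2, 3, ...) with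
asymptotic frequency `2 ^ (-|w|)`. -/
def IsNormalSet (A : Set ℕ) : Prop :=
  ∀ w : List Bool, w ≠ [] →
    Filter.Tendsto
      (fun N : ℕ =>
        (((Finset.Icc 1 N).filter fun n =>
            ∀ i : Fin w.length, (n + (i : ℕ) ∈ A ↔ w.get i = true)).card : ℝ) / N)
      Filter.atTop (nhds (1 / 2 ^ w.length))

/-- `S` has natural density `d`. -/
def HasDensity (S : Set ℕ) (d : ℝ) : Prop :=
  Filter.Tendsto
    (fun N : ℕ => (((Finset.Icc 1 N).filter fun n => n ∈ S).card : ℝ) / N)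
    Filter.atTop (nhds d)

/-- pattern occurrence predicate, function form -/
def PatQ (A : Set ℕ) (g : ℕ → Bool) (m n : ℕ) : Prop :=
  ∀ i < m, (n + i ∈ A ↔ g i = true)

noncomputable def nY (A : Set ℕ) (g : ℕ → Bool) (m n : ℕ) : ℝ :=
  if PatQ A g m n then 1 else 0

lemma nY_nonneg (A : Set ℕ) (g : ℕ → Bool) (m n : ℕ) : 0 ≤ nY A g m n := by
  unfold nY; split <;> norm_num

lemma nY_le_one (A : Set ℕ) (g : ℕ → Bool) (m n : ℕ) : nY A g m n ≤ 1 := by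
  unfold nY; split <;> norm_num

lemma density_sum {A : Set ℕ} (hA : IsNormalSet A) (g : ℕ → Bool) (m : ℕ) (hm : 1 ≤ m) :
    Tendsto (fun N : ℕ => (∑ n ∈ Finset.Ioc 0 N, nY A g m n) / N) atTop
      (𝓝 (1 / 2 ^ m)) := by
  set w : List Bool := List.ofFn (fun i : Fin m => g i) with hw
  have hlen : w.length = m := by simp [hw]
  have hne : w ≠ [] := by
    intro h; rw [h] at hlen; simp at hlen; omega
  have h := hA w hne
  rw [show (1:ℝ)/2^m = 1/2^w.length by rw [hlen]]
  refine h.congr fun N => ?_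
  congr 1
  rw [show Finset.Icc 1 N = Finset.Ioc 0 N from Finset.Icc_add_one_left_eq_Ioc 0 N]
  rw [← Finset.sum_boole]
  apply Finset.sum_congr rfl
  intro n _
  have : (∀ i : Fin w.length, (n + (i : ℕ) ∈ A ↔ w.get i = true)) ↔ PatQ A g m n := by
    constructor
    · intro h i hi
      have := h ⟨i, by omega⟩
      simpa [hw, List.get_ofFn] using this
    · intro h i
      have := h i (by omega)
      simpa [hw, List.get_ofFn] using this
  unfold nY
  simp only [this]
lemma sum_Ioc_shift (f : ℕ → ℝ) (t N : ℕ) :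
    ∑ n ∈ Finset.Ioc 0 N, f (n + t) = ∑ n ∈ Finset.Ioc t (N + t), f n := by
  rw [show Finset.Ioc t (N + t) = (Finset.Ioc 0 N).map (addRightEmbedding t) by
    rw [Finset.map_add_right_Ioc]; simp, Finset.sum_map]
  simp [addRightEmbedding]

lemma abs_sum_Ioc_le (f : ℕ → ℝ) (hb : ∀ n, |f n| ≤ 1) (s t : ℕ) :
    |∑ n ∈ Finset.Ioc s t, f n| ≤ (t - s : ℕ) := by
  calc |∑ n ∈ Finset.Ioc s t, f n| ≤ ∑ n ∈ Finset.Ioc s t, |f n| :=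
        Finset.abs_sum_le_sum_abs _ _
    _ ≤ ∑ _n ∈ Finset.Ioc s t, 1 := Finset.sum_le_sum fun n _ => hb n
    _ = ((Finset.Ioc s t).card : ℝ) := by simp
    _ = _ := by rw [Nat.card_Ioc]

lemma sum_shift_diff (f : ℕ → ℝ) (hb : ∀ n, |f n| ≤ 1) (t N : ℕ) :
    |∑ n ∈ Finset.Ioc 0 N, f (n + t) - ∑ n ∈ Finset.Ioc 0 N, f n| ≤ 2 * t := by
  have h1 : ∑ n ∈ Finset.Ioc 0 t, f n + ∑ n ∈ Finset.Ioc t (N + t), f n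
      = ∑ n ∈ Finset.Ioc 0 (N + t), f n :=
    Finset.sum_Ioc_consecutive _ (Nat.zero_le t) (Nat.le_add_left t N)
  have h2 : ∑ n ∈ Finset.Ioc 0 N, f n + ∑ n ∈ Finset.Ioc N (N + t), f n
      = ∑ n ∈ Finset.Ioc 0 (N + t), f n :=
    Finset.sum_Ioc_consecutive _ (Nat.zero_le N) (Nat.le_add_right N t)
  rw [sum_Ioc_shift]
  have e1 := abs_sum_Ioc_le f hb 0 t
  have e2 := abs_sum_Ioc_le f hb N (N + t)
  simp only [Nat.sub_zero] at e1
  rw [show (N + t - N : ℕ) = t by omega] at e2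
  have : ∑ n ∈ Finset.Ioc t (N + t), f n - ∑ n ∈ Finset.Ioc 0 N, f n
      = ∑ n ∈ Finset.Ioc N (N + t), f n - ∑ n ∈ Finset.Ioc 0 t, f n := by
    linarith [h1, h2]
  rw [this]
  calc |_ - _| ≤ |∑ n ∈ Finset.Ioc N (N + t), f n| + |∑ n ∈ Finset.Ioc 0 t, f n| :=
        abs_sub _ _
    _ ≤ 2 * t := by linarith

/-- shifting the argument doesn't change the Cesàro limit -/
lemma tendsto_shift (f : ℕ → ℝ) {c : ℝ}
    (h : Tendsto (fun N : ℕ => (∑ n ∈ Finset.Ioc 0 N, f n) / N) atTop (𝓝 c)) (t : ℕ) :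
    Tendsto (fun N : ℕ => (∑ n ∈ Finset.Ioc 0 N, f (n + t)) / N) atTop (𝓝 c) := by
  have key : ∀ N : ℕ, ∑ n ∈ Finset.Ioc 0 N, f (n + t)
      = ∑ n ∈ Finset.Ioc 0 (N + t), f n - ∑ n ∈ Finset.Ioc 0 t, f n := by
    intro N
    rw [sum_Ioc_shift]
    have := Finset.sum_Ioc_consecutive f (Nat.zero_le t) (Nat.le_add_left t N)
    linarith
  have h1 : Tendsto (fun N : ℕ => (∑ n ∈ Finset.Ioc 0 (N + t), f n) / (N + t) * ((N + t) / N))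
      atTop (𝓝 (c * 1)) := by
    apply Tendsto.mul
    · have := h.comp (tendsto_add_atTop_nat t)
      refine this.congr fun N => ?_
      simp only [Function.comp]
      push_cast; ring_nf
    · have : Tendsto (fun N : ℕ => 1 + (t : ℝ) / N) atTop (𝓝 (1 + 0)) :=
        tendsto_const_nhds.add (tendsto_const_div_atTop_nhds_zero_nat (t : ℝ))
      rw [add_zero] at this
      refine this.congr' ?_
      filter_upwards [eventually_gt_atTop 0] with N hN
      have : (N : ℝ) ≠ 0 := by positivity
      field_simp
  have h2 : Tendsto (fun N : ℕ => (∑ n ∈ Finset.Ioc 0 t, f n) / N) atTop (𝓝 0) :=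
    tendsto_const_div_atTop_nhds_zero_nat _
  have := h1.sub h2
  rw [mul_one, sub_zero] at this
  refine this.congr' ?_
  filter_upwards [eventually_gt_atTop 0] with N hN
  have hN' : (N : ℝ) ≠ 0 := by positivity
  have hNt : ((N : ℝ) + t) ≠ 0 := by positivity
  rw [key N]
  push_cast
  field_simp

/-- the long word gluing `g`, a middle word `v`, and `g` again -/
def Wmid (g : ℕ → Bool) (m t : ℕ) (v : Fin (t - m) → Bool) (i : ℕ) : Bool :=
  if i < m then g i else if h : i - m < t - m then v ⟨i - m, h⟩ else g (i - t)

lemma patQ_W (A : Set ℕ) (g : ℕ → Bool) (m t : ℕ) (ht : m ≤ t) (hm : 1 ≤ m)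
    (v : Fin (t - m) → Bool) (n : ℕ) :
    PatQ A (Wmid g m t v) (t + m) n ↔
      (PatQ A g m n ∧ PatQ A g m (n + t) ∧
        ∀ j : Fin (t - m), (n + (m + (j : ℕ)) ∈ A ↔ v j = true)) := by
  constructor
  · intro h
    refine ⟨?_, ?_, ?_⟩
    · intro i hi
      have hh := h i (by omega)
      rwa [show Wmid g m t v i = g i by unfold Wmid; rw [if_pos hi]] at hh
    · intro i hi
      have hh := h (t + i) (by omega)
      rw [show Wmid g m t v (t + i) = g i by
        unfold Wmid; rw [if_neg (by omega), dif_neg (by omega)]; congr 1; omega] at hh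
      rwa [show n + (t + i) = n + t + i by omega] at hh
    · intro j
      have hj := j.isLt
      have hh := h (m + (j : ℕ)) (by omega)
      rwa [show Wmid g m t v (m + (j : ℕ)) = v j by
        unfold Wmid
        rw [if_neg (by omega), dif_pos (by omega : m + (j : ℕ) - m < t - m)]
        congr 1
        exact Fin.ext (by simp)] at hh
  · rintro ⟨h1, h2, h3⟩ i hi
    unfold Wmid
    by_cases c1 : i < m
    · rw [if_pos c1]; exact h1 i c1
    · rw [if_neg c1]
      by_cases c2 : i - m < t - m
      · rw [dif_pos c2]
        have hh := h3 ⟨i - m, c2⟩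
        rwa [show n + (m + ((⟨i - m, c2⟩ : Fin (t - m)) : ℕ)) = n + i by simp; omega] at hh
      · rw [dif_neg c2]
        have hit : t ≤ i := by omega
        have hh := h2 (i - t) (by omega)
        rwa [show n + t + (i - t) = n + i by omega] at hh

lemma nY_mul_eq_sum (A : Set ℕ) (g : ℕ → Bool) (m t : ℕ) (ht : m ≤ t) (hm : 1 ≤ m) (n : ℕ) :
    nY A g m n * nY A g m (n + t)
      = ∑ v : Fin (t - m) → Bool, nY A (Wmid g m t v) (t + m) n := by
  by_cases h12 : PatQ A g m n ∧ PatQ A g m (n + t)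
  · obtain ⟨h1, h2⟩ := h12
    have lhs : nY A g m n * nY A g m (n + t) = 1 := by
      unfold nY; rw [if_pos h1, if_pos h2, one_mul]
    rw [lhs]
    set v₀ : Fin (t - m) → Bool := fun j => decide (n + (m + (j : ℕ)) ∈ A) with hv₀
    have hv : ∀ v : Fin (t - m) → Bool, PatQ A (Wmid g m t v) (t + m) n ↔ v = v₀ := by
      intro v
      rw [patQ_W A g m t ht hm]
      constructor
      · rintro ⟨-, -, h3⟩
        funext j
        have := h3 j
        simp only [hv₀]
        cases hvj : v j <;> simp [hvj] at this ⊢ <;> simp [this]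
      · rintro rfl
        exact ⟨h1, h2, fun j => by simp [hv₀]⟩
    have : ∀ v : Fin (t - m) → Bool,
        nY A (Wmid g m t v) (t + m) n = if v = v₀ then 1 else 0 := by
      intro v; unfold nY; simp only [hv v]
    rw [Finset.sum_congr rfl fun v _ => this v]
    simp
  · have lhs : nY A g m n * nY A g m (n + t) = 0 := by
      unfold nY
      rcases not_and_or.mp h12 with h | h
      · rw [if_neg h, zero_mul]
      · rw [if_neg h, mul_zero]
    rw [lhs]
    symm
    apply Finset.sum_eq_zero
    intro v _
    unfold nY
    rw [if_neg]
    intro hP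
    exact h12 ⟨((patQ_W A g m t ht hm v n).mp hP).1, ((patQ_W A g m t ht hm v n).mp hP).2.1⟩

lemma corr_tendsto {A : Set ℕ} (hA : IsNormalSet A) (g : ℕ → Bool) (m t : ℕ)
    (hm : 1 ≤ m) (ht : m ≤ t) :
    Tendsto (fun N : ℕ => (∑ n ∈ Finset.Ioc 0 N, nY A g m n * nY A g m (n + t)) / N)
      atTop (𝓝 ((1 / 2 ^ m) * (1 / 2 ^ m))) := by
  have key : ∀ N : ℕ, ∑ n ∈ Finset.Ioc 0 N, nY A g m n * nY A g m (n + t)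
      = ∑ v : Fin (t - m) → Bool, ∑ n ∈ Finset.Ioc 0 N, nY A (Wmid g m t v) (t + m) n := by
    intro N
    rw [Finset.sum_congr rfl fun n _ => nY_mul_eq_sum A g m t ht hm n]
    exact Finset.sum_comm
  have hlim : Tendsto (fun N : ℕ =>
      ∑ v : Fin (t - m) → Bool, (∑ n ∈ Finset.Ioc 0 N, nY A (Wmid g m t v) (t + m) n) / N)
      atTop (𝓝 (∑ _v : Fin (t - m) → Bool, (1 / 2 ^ (t + m) : ℝ))) :=
    tendsto_finset_sum _ fun v _ => density_sum hA (Wmid g m t v) (t + m) (by omega)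
  have hval : (∑ _v : Fin (t - m) → Bool, (1 / 2 ^ (t + m) : ℝ))
      = (1 / 2 ^ m) * (1 / 2 ^ m) := by
    rw [Finset.sum_const]
    simp only [Finset.card_univ, Fintype.card_fun, Fintype.card_fin, Fintype.card_bool,
      nsmul_eq_mul]
    push_cast
    have h2 : (2 : ℝ) ^ (t + m) = 2 ^ (t - m) * 2 ^ m * 2 ^ m := by
      rw [← pow_add, ← pow_add]; congr 1; omega
    rw [h2]
    have : (2 : ℝ) ^ (t - m) ≠ 0 := by positivity
    field_simp
  rw [← hval]
  refine hlim.congr fun N => ?_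
  rw [key N, Finset.sum_div]

lemma corrz_tendsto {A : Set ℕ} (hA : IsNormalSet A) (g : ℕ → Bool) (m t : ℕ)
    (hm : 1 ≤ m) (ht : m ≤ t) :
    Tendsto (fun N : ℕ => (∑ n ∈ Finset.Ioc 0 N,
        (nY A g m n - 1 / 2 ^ m) * (nY A g m (n + t) - 1 / 2 ^ m)) / N)
      atTop (𝓝 0) := by
  set p : ℝ := 1 / 2 ^ m with hp
  have h1 := density_sum hA g m hm
  have h2 := tendsto_shift (nY A g m) h1 t
  have h3 := corr_tendsto hA g m t hm ht
  have key : ∀ N : ℕ, ∑ n ∈ Finset.Ioc 0 N, (nY A g m n - p) * (nY A g m (n + t) - p)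
      = (∑ n ∈ Finset.Ioc 0 N, nY A g m n * nY A g m (n + t))
        - p * (∑ n ∈ Finset.Ioc 0 N, nY A g m (n + t))
        - p * (∑ n ∈ Finset.Ioc 0 N, nY A g m n)
        + (N : ℝ) * (p * p) := by
    intro N
    rw [Finset.mul_sum, Finset.mul_sum]
    rw [show ((N : ℝ)) * (p * p) = ∑ _n ∈ Finset.Ioc 0 N, p * p by
      rw [Finset.sum_const, Nat.card_Ioc, nsmul_eq_mul, Nat.sub_zero]]
    rw [← Finset.sum_sub_distrib, ← Finset.sum_sub_distrib, ← Finset.sum_add_distrib]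
    exact Finset.sum_congr rfl fun n _ => by ring
  have hlim := ((h3.sub (h2.const_mul p)).sub (h1.const_mul p)).add
      (tendsto_const_nhds (x := p * p))
  rw [show p * p - p * p - p * p + p * p = 0 by ring] at hlim
  refine hlim.congr' ?_
  filter_upwards [eventually_gt_atTop 0] with N hN
  have hN' : (N : ℝ) ≠ 0 := by positivity
  rw [key N]
  field_simp

lemma D_est_ord (z : ℕ → ℝ) (hz : ∀ n, |z n| ≤ 1) (a M H j d : ℕ) (hj : j < H) :
    |∑ x ∈ Finset.Ioc 0 M, z (x + a * j) * z (x + a * (j + d))|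
      ≤ 2 * (a * H) + |∑ x ∈ Finset.Ioc 0 M, z x * z (x + a * d)| := by
  have hb : ∀ x, |z x * z (x + a * d)| ≤ 1 := by
    intro x
    rw [abs_mul]
    exact mul_le_one₀ (hz x) (abs_nonneg _) (hz _)
  have key := sum_shift_diff (fun x => z x * z (x + a * d)) hb (a * j) M
  have hre : (∑ x ∈ Finset.Ioc 0 M, z (x + a * j) * z (x + a * (j + d)))
      = ∑ x ∈ Finset.Ioc 0 M, (fun x => z x * z (x + a * d)) (x + a * j) := by
    refine Finset.sum_congr rfl fun x _ => ?_
    simp only []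
    congr 2
    ring
  rw [hre]
  have tri := abs_add_le (∑ x ∈ Finset.Ioc 0 M, (fun x => z x * z (x + a * d)) (x + a * j)
        - ∑ x ∈ Finset.Ioc 0 M, z x * z (x + a * d))
      (∑ x ∈ Finset.Ioc 0 M, z x * z (x + a * d))
  simp only [sub_add_cancel] at tri
  have hcast : (2 : ℝ) * (↑(a * j)) ≤ 2 * (a * H) := by
    push_cast
    have h1 : (j : ℝ) ≤ H := by exact_mod_cast hj.le
    have h2 : (0 : ℝ) ≤ a := Nat.cast_nonneg a
    nlinarith
  linarith

lemma D_est (z : ℕ → ℝ) (hz : ∀ n, |z n| ≤ 1) (a M H j j' : ℕ) (hj : j < H) (hj' : j' < H) :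
    |∑ x ∈ Finset.Ioc 0 M, z (x + a * j) * z (x + a * j')|
      ≤ 2 * (a * H) + |∑ x ∈ Finset.Ioc 0 M, z x * z (x + a * (max j j' - min j j'))| := by
  rcases le_total j j' with h | h
  · obtain ⟨d, rfl⟩ := Nat.exists_eq_add_of_le h
    rw [show max j (j + d) - min j (j + d) = d by omega]
    exact D_est_ord z hz a M H j d hj
  · obtain ⟨d, rfl⟩ := Nat.exists_eq_add_of_le h
    rw [show max (j' + d) j' - min (j' + d) j' = d by omega]
    rw [Finset.sum_congr rfl fun x (_ : x ∈ Finset.Ioc 0 M) =>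
      mul_comm (z (x + a * (j' + d))) (z (x + a * j'))]
    exact D_est_ord z hz a M H j' d hj'

lemma bad_card (H j m : ℕ) :
    (((Finset.range H).filter fun j' => ¬ m ≤ max j j' - min j j').card : ℝ) ≤ 2 * m + 1 := by
  have hsub : ((Finset.range H).filter fun j' => ¬ m ≤ max j j' - min j j')
      ⊆ Finset.Icc (j - m) (j + m) := by
    intro j' hj'
    simp only [Finset.mem_filter, Finset.mem_range] at hj'
    simp only [Finset.mem_Icc]
    omega
  have h1 := Finset.card_le_card hsub
  have h2 : (Finset.Icc (j - m) (j + m)).card ≤ 2 * m + 1 := by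
    rw [Nat.card_Icc]; omega
  exact_mod_cast le_trans h1 h2

lemma C_small {A : Set ℕ} (hA : IsNormalSet A) (g : ℕ → Bool) (m : ℕ) (hm : 1 ≤ m)
    (a : ℕ) (ha : 0 < a) (δ : ℝ) (hδ : 0 < δ) (H : ℕ) :
    ∀ᶠ N : ℕ in atTop, ∀ d ∈ Finset.Ico m H,
      |∑ x ∈ Finset.Ioc 0 (a * N),
          (nY A g m x - 1 / 2 ^ m) * (nY A g m (x + a * d) - 1 / 2 ^ m)|
        ≤ δ * ((a : ℝ) * N) := by
  rw [Filter.eventually_all_finset]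
  intro d hd
  rw [Finset.mem_Ico] at hd
  have htd : m ≤ a * d := le_trans hd.1 (Nat.le_mul_of_pos_left d ha)
  have hcz := corrz_tendsto hA g m (a * d) hm htd
  have hcomp : Tendsto (fun N : ℕ => a * N) atTop atTop :=
    tendsto_atTop_mono (fun N => Nat.le_mul_of_pos_left N ha) tendsto_id
  have h3 := NormedAddCommGroup.tendsto_nhds_zero.mp (hcz.comp hcomp) δ hδ
  filter_upwards [h3, eventually_ge_atTop 1] with N hN hN1
  simp only [Function.comp, Real.norm_eq_abs] at hN
  have haN : (0 : ℝ) < ((a * N : ℕ) : ℝ) := by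
    have : 0 < a * N := Nat.mul_pos ha (by omega)
    exact_mod_cast this
  rw [abs_div, abs_of_nonneg haN.le, div_lt_iff₀ haN] at hN
  have : ((a * N : ℕ) : ℝ) = (a : ℝ) * N := by push_cast; ring
  rw [this] at hN
  exact le_of_lt hN

set_option maxHeartbeats 1000000 in
lemma main_bound {A : Set ℕ} (hA : IsNormalSet A) (g : ℕ → Bool) (m : ℕ) (hm : 1 ≤ m)
    (a : ℕ) (ha : 0 < a) (ε : ℝ) (hε : 0 < ε) :
    ∀ᶠ N : ℕ in atTop,
      |∑ n ∈ Finset.Ioc 0 N, (nY A g m (a * n) - 1 / 2 ^ m)| ≤ ε * N := by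
  set z : ℕ → ℝ := fun n => nY A g m n - 1 / 2 ^ m with hzdef
  have hp0 : (0 : ℝ) ≤ 1 / 2 ^ m := by positivity
  have hp1 : (1 : ℝ) / 2 ^ m ≤ 1 := by
    rw [div_le_one (by positivity)]
    exact one_le_pow₀ one_le_two
  have hz : ∀ n, |z n| ≤ 1 := by
    intro n
    rw [abs_le]
    constructor
    · have := nY_nonneg A g m n; simp only [hzdef]; linarith
    · have := nY_le_one A g m n; simp only [hzdef]; linarith
  have ha' : (0 : ℝ) < a := by exact_mod_cast ha
  set δ : ℝ := ε ^ 2 / (16 * a) with hδdef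
  have hδ : 0 < δ := by positivity
  obtain ⟨H, hH1, hHbig⟩ : ∃ H : ℕ, 1 ≤ H ∧ (2 * (m : ℝ) + 1) * a ≤ ε ^ 2 * H / 16 := by
    refine ⟨⌈16 * (2 * (m : ℝ) + 1) * a / ε ^ 2⌉₊ + 1, Nat.le_add_left 1 _, ?_⟩
    have h1 : 16 * (2 * (m : ℝ) + 1) * a / ε ^ 2
        ≤ ((⌈16 * (2 * (m : ℝ) + 1) * a / ε ^ 2⌉₊ + 1 : ℕ) : ℝ) := by
      have := Nat.le_ceil (16 * (2 * (m : ℝ) + 1) * a / ε ^ 2)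
      push_cast
      linarith
    have hε2 : (0 : ℝ) < ε ^ 2 := by positivity
    rw [div_le_iff₀ hε2] at h1
    nlinarith
  have hH' : (1 : ℝ) ≤ H := by exact_mod_cast hH1
  filter_upwards [C_small hA g m hm a ha δ hδ H, eventually_ge_atTop 1,
    eventually_ge_atTop ⌈32 * (a : ℝ) * H / ε ^ 2⌉₊,
    eventually_ge_atTop ⌈4 * (H : ℝ) / ε⌉₊] with N hC hN1 hN3 hN4
  have hNR : (1 : ℝ) ≤ N := by exact_mod_cast hN1
  have hN3' : 32 * (a : ℝ) * H / ε ^ 2 ≤ N :=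
    le_trans (Nat.le_ceil _) (by exact_mod_cast hN3)
  have hN4' : 4 * (H : ℝ) / ε ≤ N := le_trans (Nat.le_ceil _) (by exact_mod_cast hN4)
  set T : ℝ := ∑ n ∈ Finset.Ioc 0 N, z (a * n) with hTdef
  set G : ℝ := ∑ n ∈ Finset.Ioc 0 N, ∑ j ∈ Finset.range H, z (a * n + a * j) with hGdef
  -- Step 1 : |H*T - G| ≤ 2*H^2
  have step1 : |(H : ℝ) * T - G| ≤ 2 * (H : ℝ) ^ 2 := by
    have hG2 : G = ∑ j ∈ Finset.range H, ∑ n ∈ Finset.Ioc 0 N, z (a * (n + j)) := by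
      rw [hGdef, Finset.sum_comm]
      refine Finset.sum_congr rfl fun j _ => Finset.sum_congr rfl fun n _ => ?_
      congr 1; ring
    have hsplit : (H : ℝ) * T - G
        = ∑ j ∈ Finset.range H, (T - ∑ n ∈ Finset.Ioc 0 N, z (a * (n + j))) := by
      rw [Finset.sum_sub_distrib, Finset.sum_const, Finset.card_range, hG2, nsmul_eq_mul]
    rw [hsplit]
    calc |∑ j ∈ Finset.range H, (T - ∑ n ∈ Finset.Ioc 0 N, z (a * (n + j)))|
        ≤ ∑ j ∈ Finset.range H, |T - ∑ n ∈ Finset.Ioc 0 N, z (a * (n + j))| :=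
          Finset.abs_sum_le_sum_abs _ _
      _ ≤ ∑ j ∈ Finset.range H, 2 * (H : ℝ) := by
          refine Finset.sum_le_sum fun j hj => ?_
          rw [Finset.mem_range] at hj
          have := sum_shift_diff (fun n => z (a * n)) (fun n => hz _) j N
          rw [abs_sub_comm] at this
          have hjH : (j : ℝ) ≤ H := by exact_mod_cast hj.le
          calc |T - ∑ n ∈ Finset.Ioc 0 N, z (a * (n + j))|
              = |∑ n ∈ Finset.Ioc 0 N, (fun n => z (a * n)) n
                  - ∑ n ∈ Finset.Ioc 0 N, (fun n => z (a * n)) (n + j)| := rfl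
            _ ≤ 2 * (j : ℝ) := this
            _ ≤ 2 * (H : ℝ) := by linarith
      _ = (H : ℝ) * (2 * H) := by rw [Finset.sum_const, Finset.card_range, nsmul_eq_mul]
      _ = 2 * (H : ℝ) ^ 2 := by ring
  -- Step 2 : Cauchy-Schwarz and extension to all residues
  have step2 : G ^ 2 ≤ (N : ℝ) * ∑ x ∈ Finset.Ioc 0 (a * N),
      (∑ j ∈ Finset.range H, z (x + a * j)) ^ 2 := by
    have cs := sq_sum_le_card_mul_sum_sq
      (s := Finset.Ioc 0 N) (f := fun n => ∑ j ∈ Finset.range H, z (a * n + a * j))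
    have hcard : ((Finset.Ioc 0 N).card : ℝ) = N := by rw [Nat.card_Ioc]; simp
    rw [hcard] at cs
    refine le_trans cs ?_
    have hmono : ∑ n ∈ Finset.Ioc 0 N, (∑ j ∈ Finset.range H, z (a * n + a * j)) ^ 2
        ≤ ∑ x ∈ Finset.Ioc 0 (a * N), (∑ j ∈ Finset.range H, z (x + a * j)) ^ 2 := by
      have himg : ∑ n ∈ Finset.Ioc 0 N, (∑ j ∈ Finset.range H, z (a * n + a * j)) ^ 2
          = ∑ x ∈ (Finset.Ioc 0 N).image (fun n => a * n),
              (∑ j ∈ Finset.range H, z (x + a * j)) ^ 2 := by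
        rw [Finset.sum_image]
        intro n _ n' _ h
        exact Nat.eq_of_mul_eq_mul_left ha h
      rw [himg]
      refine Finset.sum_le_sum_of_subset_of_nonneg ?_ fun x _ _ => sq_nonneg _
      intro x hx
      rw [Finset.mem_image] at hx
      obtain ⟨n, hn, rfl⟩ := hx
      rw [Finset.mem_Ioc] at hn ⊢
      constructor
      · exact Nat.mul_pos ha hn.1
      · exact Nat.mul_le_mul_left a hn.2
    nlinarith [hmono, hNR]
  -- Step 3+4 : expand the square and bound correlations
  have step34 : ∑ x ∈ Finset.Ioc 0 (a * N), (∑ j ∈ Finset.range H, z (x + a * j)) ^ 2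
      ≤ (H : ℝ) ^ 2 * (2 * (a * H)) + (H : ℝ) ^ 2 * (δ * ((a : ℝ) * N))
        + (H : ℝ) * ((2 * m + 1) * ((a : ℝ) * N)) := by
    have hexp : ∑ x ∈ Finset.Ioc 0 (a * N), (∑ j ∈ Finset.range H, z (x + a * j)) ^ 2
        = ∑ j ∈ Finset.range H, ∑ j' ∈ Finset.range H,
            ∑ x ∈ Finset.Ioc 0 (a * N), z (x + a * j) * z (x + a * j') := by
      rw [Finset.sum_congr rfl fun x (_ : x ∈ Finset.Ioc 0 (a * N)) => by
        rw [sq, Finset.sum_mul_sum]]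
      rw [Finset.sum_comm]
      exact Finset.sum_congr rfl fun j _ => Finset.sum_comm
    rw [hexp]
    have hDbound : ∀ j ∈ Finset.range H, ∀ j' ∈ Finset.range H,
        ∑ x ∈ Finset.Ioc 0 (a * N), z (x + a * j) * z (x + a * j')
          ≤ 2 * ((a : ℝ) * H) + δ * ((a : ℝ) * N)
            + (if ¬ m ≤ max j j' - min j j' then ((a : ℝ) * N) else 0) := by
      intro j hj j' hj'
      rw [Finset.mem_range] at hj hj'
      have hD := D_est z hz a (a * N) H j j' hj hj'
      have hC2 : |∑ x ∈ Finset.Ioc 0 (a * N), z x * z (x + a * (max j j' - min j j'))|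
          ≤ δ * ((a : ℝ) * N) + (if ¬ m ≤ max j j' - min j j' then ((a : ℝ) * N) else 0) := by
        by_cases hgood : m ≤ max j j' - min j j'
        · rw [if_neg (by tauto), add_zero]
          have hlt : max j j' - min j j' < H := by omega
          have h := hC (max j j' - min j j') (Finset.mem_Ico.mpr ⟨hgood, hlt⟩)
          simp only [hzdef]
          exact h
        · rw [if_pos hgood]
          have htriv := abs_sum_Ioc_le (fun x => z x * z (x + a * (max j j' - min j j')))
            (fun x => by rw [abs_mul]; exact mul_le_one₀ (hz x) (abs_nonneg _) (hz _)) 0 (a * N)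
          have heq : ((a * N - 0 : ℕ) : ℝ) = (a : ℝ) * N := by rw [Nat.sub_zero]; push_cast; ring
          rw [heq] at htriv
          have hδaN : 0 ≤ δ * ((a : ℝ) * N) := by positivity
          linarith
      calc ∑ x ∈ Finset.Ioc 0 (a * N), z (x + a * j) * z (x + a * j')
          ≤ |∑ x ∈ Finset.Ioc 0 (a * N), z (x + a * j) * z (x + a * j')| := le_abs_self _
        _ ≤ 2 * ((a : ℝ) * H)
              + |∑ x ∈ Finset.Ioc 0 (a * N), z x * z (x + a * (max j j' - min j j'))| := hD
        _ ≤ _ := by linarith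
    calc ∑ j ∈ Finset.range H, ∑ j' ∈ Finset.range H,
          ∑ x ∈ Finset.Ioc 0 (a * N), z (x + a * j) * z (x + a * j')
        ≤ ∑ j ∈ Finset.range H, ((H : ℝ) * (2 * ((a : ℝ) * H) + δ * ((a : ℝ) * N))
              + (2 * m + 1) * ((a : ℝ) * N)) := by
          refine Finset.sum_le_sum fun j hj => ?_
          calc ∑ j' ∈ Finset.range H,
                ∑ x ∈ Finset.Ioc 0 (a * N), z (x + a * j) * z (x + a * j')
              ≤ ∑ j' ∈ Finset.range H,
                  (2 * ((a : ℝ) * H) + δ * ((a : ℝ) * N)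
                    + (if ¬ m ≤ max j j' - min j j' then ((a : ℝ) * N) else 0)) :=
                Finset.sum_le_sum fun j' hj' => hDbound j hj j' hj'
            _ = (H : ℝ) * (2 * ((a : ℝ) * H) + δ * ((a : ℝ) * N))
                  + ∑ j' ∈ Finset.range H,
                      (if ¬ m ≤ max j j' - min j j' then ((a : ℝ) * N) else 0) := by
                rw [Finset.sum_add_distrib, Finset.sum_const, Finset.card_range, nsmul_eq_mul]
            _ ≤ (H : ℝ) * (2 * ((a : ℝ) * H) + δ * ((a : ℝ) * N))
                  + (2 * m + 1) * ((a : ℝ) * N) := by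
                have hfil : ∑ j' ∈ Finset.range H,
                    (if ¬ m ≤ max j j' - min j j' then ((a : ℝ) * N) else 0)
                    = (((Finset.range H).filter
                        fun j' => ¬ m ≤ max j j' - min j j').card : ℝ) * ((a : ℝ) * N) := by
                  rw [← Finset.sum_filter, Finset.sum_const, nsmul_eq_mul]
                rw [hfil]
                have haN0 : (0 : ℝ) ≤ (a : ℝ) * N := by positivity
                have := bad_card H j m
                nlinarith
      _ = (H : ℝ) * ((H : ℝ) * (2 * ((a : ℝ) * H) + δ * ((a : ℝ) * N))
            + (2 * m + 1) * ((a : ℝ) * N)) := by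
          rw [Finset.sum_const, Finset.card_range, nsmul_eq_mul]
      _ = _ := by push_cast; ring
  -- Step 5 : numerics
  have hG : |G| ≤ ε * H * N / 2 := by
    apply abs_le_of_sq_le_sq
    · have hNpos : (0:ℝ) < N := by linarith
      have e1 : (H : ℝ) ^ 2 * (δ * ((a : ℝ) * N)) = ε ^ 2 * (H:ℝ)^2 * N / 16 := by
        rw [hδdef]; field_simp
      have e2 : (H : ℝ) * ((2 * m + 1) * ((a : ℝ) * N)) ≤ ε ^ 2 * (H:ℝ)^2 * N / 16 := by
        have hmul := mul_le_mul_of_nonneg_right hHbig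
          (by positivity : (0:ℝ) ≤ (H:ℝ) * N)
        nlinarith
      have e3 : (H : ℝ) ^ 2 * (2 * ((a : ℝ) * H)) ≤ ε ^ 2 * (H:ℝ)^2 * N / 16 := by
        have hN3'' : 32 * (a : ℝ) * H ≤ ε ^ 2 * N := by
          rw [div_le_iff₀ (by positivity : (0:ℝ) < ε ^ 2)] at hN3'
          linarith
        nlinarith
      have hsum := step34
      have : G ^ 2 ≤ (N : ℝ) * (3 * (ε ^ 2 * (H:ℝ)^2 * N / 16)) := by
        push_cast at hsum ⊢
        nlinarith
      calc G ^ 2 ≤ (N : ℝ) * (3 * (ε ^ 2 * (H:ℝ)^2 * N / 16)) := this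
        _ ≤ (ε * H * N / 2) ^ 2 := by nlinarith
    · positivity
  have hT : |(H : ℝ) * T| ≤ ε * H * N := by
    have h2H : 2 * (H : ℝ) ^ 2 ≤ ε * H * N / 2 := by
      rw [div_le_iff₀ (by positivity : (0:ℝ) < ε)] at hN4'
      nlinarith
    calc |(H : ℝ) * T| ≤ |(H : ℝ) * T - G| + |G| := by
          have := abs_add_le ((H : ℝ) * T - G) G
          simpa using this
      _ ≤ 2 * (H : ℝ) ^ 2 + ε * H * N / 2 := by linarith
      _ ≤ ε * H * N := by linarith
  rw [abs_mul, abs_of_nonneg (by positivity : (0:ℝ) ≤ (H:ℝ))] at hT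
  have hHpos : (0:ℝ) < H := by linarith
  rw [show ε * (H:ℝ) * N = (H:ℝ) * (ε * N) by ring] at hT
  exact le_of_mul_le_mul_left hT hHpos

/-- every nonempty pattern has the expected density along multiples of `a` -/
lemma stride_tendsto {A : Set ℕ} (hA : IsNormalSet A) (g : ℕ → Bool) (m : ℕ) (hm : 1 ≤ m)
    (a : ℕ) (ha : 0 < a) :
    Tendsto (fun N : ℕ => (∑ n ∈ Finset.Ioc 0 N, nY A g m (a * n)) / N) atTop
      (𝓝 (1 / 2 ^ m)) := by
  have hz : Tendsto (fun N : ℕ =>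
      (∑ n ∈ Finset.Ioc 0 N, (nY A g m (a * n) - 1 / 2 ^ m)) / N) atTop (𝓝 0) := by
    rw [NormedAddCommGroup.tendsto_nhds_zero]
    intro ε hε
    filter_upwards [main_bound hA g m hm a ha (ε / 2) (by positivity),
      eventually_ge_atTop 1] with N h1 hN1
    have hN : (0 : ℝ) < N := by exact_mod_cast hN1
    rw [Real.norm_eq_abs, abs_div, abs_of_nonneg hN.le]
    calc |∑ n ∈ Finset.Ioc 0 N, (nY A g m (a * n) - 1 / 2 ^ m)| / N
        ≤ (ε / 2 * N) / N := by
          gcongr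
      _ = ε / 2 := by field_simp
      _ < ε := by linarith
  have := hz.add (tendsto_const_nhds (x := (1 : ℝ) / 2 ^ m))
  rw [zero_add] at this
  refine this.congr' ?_
  filter_upwards [eventually_ge_atTop 1] with N hN1
  have hN : (0 : ℝ) < N := by exact_mod_cast hN1
  have hsum : ∑ n ∈ Finset.Ioc 0 N, (nY A g m (a * n) - 1 / 2 ^ m)
      = (∑ n ∈ Finset.Ioc 0 N, nY A g m (a * n)) - (N : ℝ) * (1 / 2 ^ m) := by
    rw [Finset.sum_sub_distrib, Finset.sum_const, Nat.card_Ioc, Nat.sub_zero, nsmul_eq_mul]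
  rw [hsum]
  field_simp
  ring

/-- long word encoding the stride-`a` pattern of `w` with free off-positions `v` -/
def Ustr (w : List Bool) (a : ℕ) (v : Fin (w.length - 1) × Fin (a - 1) → Bool) (i : ℕ) : Bool :=
  if a ∣ i then (if h : i / a < w.length then w.get ⟨i / a, h⟩ else false)
  else if h : i / a < w.length - 1 ∧ i % a - 1 < a - 1 then v (⟨i / a, h.1⟩, ⟨i % a - 1, h.2⟩)
  else false

lemma Ustr_mul (w : List Bool) (a : ℕ) (ha : 0 < a)
    (v : Fin (w.length - 1) × Fin (a - 1) → Bool) (q : ℕ) (hq : q < w.length) :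
    Ustr w a v (a * q) = w.get ⟨q, hq⟩ := by
  unfold Ustr
  rw [if_pos (dvd_mul_right a q), Nat.mul_div_cancel_left q ha, dif_pos hq]

lemma Ustr_off (w : List Bool) (a : ℕ) (ha : 0 < a)
    (v : Fin (w.length - 1) × Fin (a - 1) → Bool) (q r : ℕ)
    (hq : q < w.length - 1) (hr : r < a - 1) :
    Ustr w a v (a * q + r + 1) = v (⟨q, hq⟩, ⟨r, hr⟩) := by
  have hra : r + 1 < a := by omega
  have heq : a * q + r + 1 = a * q + (r + 1) := by omega
  have hdiv : (a * q + r + 1) / a = q := by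
    rw [heq, Nat.mul_add_div ha, Nat.div_eq_of_lt hra, add_zero]
  have hmod : (a * q + r + 1) % a = r + 1 := by
    rw [heq, Nat.mul_add_mod, Nat.mod_eq_of_lt hra]
  have hndvd : ¬ a ∣ (a * q + r + 1) := by
    rw [Nat.dvd_iff_mod_eq_zero, hmod]
    omega
  unfold Ustr
  rw [if_neg hndvd]
  rw [dif_pos (by rw [hdiv, hmod]; exact ⟨hq, by omega⟩ : (a * q + r + 1) / a < w.length - 1 ∧ (a * q + r + 1) % a - 1 < a - 1)]
  congr 1
  exact Prod.ext (Fin.ext hdiv) (Fin.ext (show (a * q + r + 1) % a - 1 = r by omega))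

lemma patQ_Ustr (A : Set ℕ) (w : List Bool) (hk : 1 ≤ w.length) (a : ℕ) (ha : 0 < a)
    (v : Fin (w.length - 1) × Fin (a - 1) → Bool) (n : ℕ) :
    PatQ A (Ustr w a v) (a * (w.length - 1) + 1) (a * n) ↔
      ((∀ i : Fin w.length, (a * (n + (i : ℕ)) ∈ A ↔ w.get i = true)) ∧
        ∀ q : Fin (w.length - 1), ∀ r : Fin (a - 1),
          (a * n + (a * (q : ℕ) + (r : ℕ) + 1) ∈ A ↔ v (q, r) = true)) := by
  constructor
  · intro h
    constructor
    · intro i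
      have hik : (i : ℕ) ≤ w.length - 1 := by have := i.isLt; omega
      have hbound : a * (i : ℕ) < a * (w.length - 1) + 1 := by
        have := Nat.mul_le_mul_left a hik
        omega
      have hh := h (a * (i : ℕ)) hbound
      rw [Ustr_mul w a ha v (i : ℕ) i.isLt] at hh
      rw [show a * n + a * (i : ℕ) = a * (n + (i : ℕ)) by ring] at hh
      simpa using hh
    · intro q r
      have hq := q.isLt
      have hr := r.isLt
      have hbound : a * (q : ℕ) + (r : ℕ) + 1 < a * (w.length - 1) + 1 := by
        have h1 : a * ((q : ℕ) + 1) ≤ a * (w.length - 1) := Nat.mul_le_mul_left a (by omega)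
        have h2 : a * ((q : ℕ) + 1) = a * (q : ℕ) + a := by ring
        omega
      have hh := h (a * (q : ℕ) + (r : ℕ) + 1) hbound
      rw [Ustr_off w a ha v (q : ℕ) (r : ℕ) hq hr] at hh
      simpa using hh
  · rintro ⟨h1, h2⟩ i hi
    by_cases hdvd : a ∣ i
    · obtain ⟨q, rfl⟩ := hdvd
      have hqk : q < w.length := by
        have h3 : a * q ≤ a * (w.length - 1) := by omega
        have h4 : q ≤ w.length - 1 := Nat.le_of_mul_le_mul_left (by omega) ha
        omega
      rw [Ustr_mul w a ha v q hqk]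
      have hh := h1 ⟨q, hqk⟩
      rw [show a * (n + q) = a * n + a * q by ring] at hh
      simpa using hh
    · have hmod0 : i % a ≠ 0 := fun hc => hdvd (Nat.dvd_of_mod_eq_zero hc)
      have hmodlt : i % a < a := Nat.mod_lt i ha
      have hdm := Nat.div_add_mod i a
      obtain ⟨q, r, hieq, hrlt⟩ : ∃ q r, i = a * q + r + 1 ∧ r < a - 1 :=
        ⟨i / a, i % a - 1, by omega, by omega⟩
      have hqk : q < w.length - 1 := by
        by_contra hc
        have h3 : a * (w.length - 1) ≤ a * q := Nat.mul_le_mul_left a (by omega)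
        omega
      rw [hieq, Ustr_off w a ha v q r hqk hrlt]
      have hh := h2 ⟨q, hqk⟩ ⟨r, hrlt⟩
      simpa using hh

lemma stride_pointwise (A : Set ℕ) (w : List Bool) (hk : 1 ≤ w.length) (a : ℕ) (ha : 0 < a)
    (n : ℕ) :
    (if (∀ i : Fin w.length, (a * (n + (i : ℕ)) ∈ A ↔ w.get i = true)) then (1 : ℝ) else 0)
      = ∑ v : Fin (w.length - 1) × Fin (a - 1) → Bool,
          nY A (Ustr w a v) (a * (w.length - 1) + 1) (a * n) := by
  by_cases h1 : ∀ i : Fin w.length, (a * (n + (i : ℕ)) ∈ A ↔ w.get i = true)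
  · rw [if_pos h1]
    set v₀ : Fin (w.length - 1) × Fin (a - 1) → Bool :=
      fun p => decide (a * n + (a * (p.1 : ℕ) + (p.2 : ℕ) + 1) ∈ A) with hv₀
    have hv : ∀ v : Fin (w.length - 1) × Fin (a - 1) → Bool,
        PatQ A (Ustr w a v) (a * (w.length - 1) + 1) (a * n) ↔ v = v₀ := by
      intro v
      rw [patQ_Ustr A w hk a ha v n]
      constructor
      · rintro ⟨-, h3⟩
        funext p
        obtain ⟨q, r⟩ := p
        have := h3 q r
        simp only [hv₀]
        cases hvq : v (q, r) <;> simp [hvq] at this ⊢ <;> simp [this]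
      · rintro rfl
        exact ⟨h1, fun q r => by simp [hv₀]⟩
    have heach : ∀ v : Fin (w.length - 1) × Fin (a - 1) → Bool,
        nY A (Ustr w a v) (a * (w.length - 1) + 1) (a * n)
          = if v = v₀ then 1 else 0 := by
      intro v; unfold nY; simp only [hv v]
    rw [Finset.sum_congr rfl fun v _ => heach v]
    simp
  · rw [if_neg h1]
    symm
    apply Finset.sum_eq_zero
    intro v _
    unfold nY
    rw [if_neg]
    intro hP
    exact h1 ((patQ_Ustr A w hk a ha v n).mp hP).1

theorem isNormalSet_dilate (A : Set ℕ) (hA : IsNormalSet A) (a : ℕ) (ha : 0 < a) :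
    IsNormalSet {n : ℕ | a * n ∈ A} := by
  intro w hw
  have hk : 1 ≤ w.length := List.length_pos_iff.mpr hw
  set L : ℕ := a * (w.length - 1) + 1 with hL
  have hlim : Tendsto (fun N : ℕ =>
      ∑ v : Fin (w.length - 1) × Fin (a - 1) → Bool,
        (∑ n ∈ Finset.Ioc 0 N, nY A (Ustr w a v) L (a * n)) / N) atTop
      (𝓝 (∑ _v : Fin (w.length - 1) × Fin (a - 1) → Bool, (1 : ℝ) / 2 ^ L)) :=
    tendsto_finset_sum _ fun v _ => stride_tendsto hA (Ustr w a v) L (by omega) a ha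
  have hval : (∑ _v : Fin (w.length - 1) × Fin (a - 1) → Bool, (1 : ℝ) / 2 ^ L)
      = 1 / 2 ^ w.length := by
    rw [Finset.sum_const]
    simp only [Finset.card_univ, Fintype.card_fun, Fintype.card_prod, Fintype.card_fin,
      Fintype.card_bool, nsmul_eq_mul]
    push_cast
    have hexp : (2 : ℝ) ^ L = 2 ^ ((w.length - 1) * (a - 1)) * 2 ^ w.length := by
      rw [← pow_add]
      congr 1
      rw [hL]
      have key : ∀ k b : ℕ, 1 ≤ k → 1 ≤ b → b * (k - 1) + 1 = (k - 1) * (b - 1) + k := by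
        intro k b hk1 hb1
        obtain ⟨k', rfl⟩ := Nat.exists_eq_add_of_le hk1
        obtain ⟨b', rfl⟩ := Nat.exists_eq_add_of_le hb1
        simp only [Nat.add_sub_cancel_left]
        ring
      exact key w.length a hk ha
    rw [hexp]
    have h2 : (2 : ℝ) ^ ((w.length - 1) * (a - 1)) ≠ 0 := by positivity
    field_simp
  rw [← hval]
  refine hlim.congr fun N => ?_
  rw [← Finset.sum_div]
  congr 1
  have hcard : (((Finset.Icc 1 N).filter fun n =>
      ∀ i : Fin w.length, (n + (i : ℕ) ∈ {n : ℕ | a * n ∈ A} ↔ w.get i = true)).card : ℝ)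
      = ∑ n ∈ Finset.Ioc 0 N,
          (if (∀ i : Fin w.length, (a * (n + (i : ℕ)) ∈ A ↔ w.get i = true))
            then (1 : ℝ) else 0) := by
    rw [show Finset.Icc 1 N = Finset.Ioc 0 N from Finset.Icc_add_one_left_eq_Ioc 0 N, ← Finset.sum_boole]
    refine Finset.sum_congr rfl fun n _ => ?_
    simp only [Set.mem_setOf_eq]
  rw [hcard, Finset.sum_congr rfl fun n (_ : n ∈ Finset.Ioc 0 N) =>
    stride_pointwise A w hk a ha n]
  exact Finset.sum_comm
end

section
/- If A ⊆ ℕ is a normal set and a ∈ ℕ is positive, then the set A_a = {n : a·n ∈ A} has natural density 1/2. -/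
open scoped Classical

open Finset Filter

namespace DilateAux

/-- The binary pattern of length `L` read in `A` at position `n`. -/
noncomputable def patt (A : Set ℕ) (L n : ℕ) : Finset (Fin L) :=
  Finset.univ.filter fun i => n + (i : ℕ) ∈ A

/-- Number of positions `n ∈ [1, M]` where pattern `S` occurs. -/
noncomputable def cnt (A : Set ℕ) (L : ℕ) (S : Finset (Fin L)) (M : ℕ) : ℕ :=
  ((Finset.Ioc 0 M).filter fun n => patt A L n = S).card

lemma patt_eq_iff {A : Set ℕ} {L n : ℕ} {S : Finset (Fin L)} :
    patt A L n = S ↔ ∀ i : Fin L, (n + (i : ℕ) ∈ A ↔ i ∈ S) := by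
  unfold patt
  constructor
  · intro h i
    rw [← h]
    simp
  · intro h
    ext i
    simp [h i]

/-- Chebyshev-type second moment identity over the hypercube. -/
lemma cheb {ι : Type*} [DecidableEq ι] (U : Finset ι) :
    ∀ T : Finset ι, T ⊆ U →
      ∑ S ∈ U.powerset, (((T ∩ S).card : ℝ) - T.card / 2) ^ 2
        = (2:ℝ) ^ U.card * T.card / 4 := by
  induction U using Finset.induction_on with
  | empty =>
    intro T hT
    simp [Finset.subset_empty.mp hT]
  | @insert x U hx ih =>
    intro T hT
    rw [Finset.sum_powerset_insert hx]
    rw [Finset.card_insert_of_notMem hx]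
    by_cases hxT : x ∈ T
    · have hT' : T.erase x ⊆ U := by
        intro y hy
        rcases Finset.mem_insert.mp (hT (Finset.mem_of_mem_erase hy)) with h | h
        · exact absurd h (Finset.mem_erase.mp hy).1
        · exact h
      have h1 : 1 ≤ T.card := Finset.card_pos.mpr ⟨x, hxT⟩
      have hcardT : (T.card : ℝ) = (T.erase x).card + 1 := by
        rw [Finset.card_erase_of_mem hxT, Nat.cast_sub h1]
        ring
      have key : ∀ S ∈ U.powerset,
          (((T ∩ S).card : ℝ) - T.card / 2) ^ 2
            + (((T ∩ insert x S).card : ℝ) - T.card / 2) ^ 2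
          = 2 * ((((T.erase x) ∩ S).card : ℝ) - (T.erase x).card / 2) ^ 2 + 1/2 := by
        intro S hS
        have hxS : x ∉ S := fun h => hx (Finset.mem_powerset.mp hS h)
        have e1 : T ∩ S = (T.erase x) ∩ S := by
          ext y; simp only [Finset.mem_inter, Finset.mem_erase]
          constructor
          · rintro ⟨h1', h2⟩; exact ⟨⟨fun hyx => hxS (hyx ▸ h2), h1'⟩, h2⟩
          · rintro ⟨⟨_, h1'⟩, h2⟩; exact ⟨h1', h2⟩
        have e2 : T ∩ insert x S = insert x ((T.erase x) ∩ S) := by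
          ext y; simp only [Finset.mem_inter, Finset.mem_insert, Finset.mem_erase]
          constructor
          · rintro ⟨h1', h2⟩
            rcases h2 with h2 | h2
            · exact Or.inl h2
            · exact Or.inr ⟨⟨fun hyx => hxS (hyx ▸ h2), h1'⟩, h2⟩
          · rintro (h | ⟨⟨_, h1'⟩, h2⟩)
            · exact ⟨h ▸ hxT, Or.inl h⟩
            · exact ⟨h1', Or.inr h2⟩
        have hxnot : x ∉ (T.erase x) ∩ S := fun h => hxS (Finset.mem_inter.mp h).2
        have e3 : ((T ∩ insert x S).card : ℝ) = ((T.erase x) ∩ S).card + 1 := by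
          rw [e2, Finset.card_insert_of_notMem hxnot]; push_cast; ring
        rw [e1, e3, hcardT]; ring
      rw [← Finset.sum_add_distrib, Finset.sum_congr rfl key, Finset.sum_add_distrib,
        ← Finset.mul_sum, ih _ hT', Finset.sum_const, Finset.card_powerset, nsmul_eq_mul,
        hcardT]
      push_cast
      ring
    · have hT'' : T ⊆ U := fun y hy => by
        rcases Finset.mem_insert.mp (hT hy) with h | h
        · exact absurd (h ▸ hy) hxT
        · exact h
      have key : ∀ S ∈ U.powerset, (((T ∩ insert x S).card : ℝ) - T.card / 2) ^ 2
          = (((T ∩ S).card : ℝ) - T.card / 2) ^ 2 := by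
        intro S hS
        have e : T ∩ insert x S = T ∩ S := by
          ext y; simp only [Finset.mem_inter, Finset.mem_insert]
          constructor
          · rintro ⟨h1, h2 | h2⟩
            · exact absurd (h2 ▸ h1) hxT
            · exact ⟨h1, h2⟩
          · rintro ⟨h1, h2⟩; exact ⟨h1, Or.inr h2⟩
        rw [e]
      rw [Finset.sum_congr rfl key, ih T hT'']
      ring

/-- First-moment (L¹) deviation bound, via Cauchy–Schwarz. -/
lemma cheb_abs {ι : Type*} [DecidableEq ι] [Fintype ι] (T : Finset ι) :
    ∑ S : Finset ι, |((T ∩ S).card : ℝ) - T.card / 2|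
      ≤ (2:ℝ) ^ (Fintype.card ι) * Real.sqrt T.card / 2 := by
  set c := Fintype.card ι with hc
  have h2 : ∑ S : Finset ι, (((T ∩ S).card : ℝ) - T.card / 2) ^ 2
      = (2:ℝ) ^ c * T.card / 4 := by
    rw [← Finset.powerset_univ, cheb Finset.univ T (Finset.subset_univ T),
      Finset.card_univ]
  set X := ∑ S : Finset ι, |((T ∩ S).card : ℝ) - T.card / 2| with hX
  have hXnn : 0 ≤ X := Finset.sum_nonneg fun S _ => abs_nonneg _
  have hsq : X ^ 2 ≤ (2:ℝ) ^ c * ((2:ℝ) ^ c * T.card / 4) := by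
    have := Finset.sum_mul_sq_le_sq_mul_sq Finset.univ (fun _ : Finset ι => (1:ℝ))
      (fun S => |((T ∩ S).card : ℝ) - T.card / 2|)
    simp only [one_mul, one_pow, sq_abs, Finset.sum_const, nsmul_eq_mul, mul_one] at this
    rw [h2] at this
    calc X ^ 2 ≤ (Finset.univ.card : ℝ) * ((2:ℝ) ^ c * T.card / 4) := this
      _ = (2:ℝ) ^ c * ((2:ℝ) ^ c * T.card / 4) := by
          rw [Finset.card_univ, Fintype.card_finset, hc]; push_cast; ring
  have hrhs : (2:ℝ) ^ c * ((2:ℝ) ^ c * T.card / 4) = ((2:ℝ) ^ c / 2) ^ 2 * T.card := by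
    ring
  have : X ≤ Real.sqrt (((2:ℝ) ^ c / 2) ^ 2 * T.card) := by
    rw [← Real.sqrt_sq hXnn]
    exact Real.sqrt_le_sqrt (le_of_le_of_eq hsq hrhs)
  calc X ≤ Real.sqrt (((2:ℝ) ^ c / 2) ^ 2 * T.card) := this
    _ = ((2:ℝ) ^ c / 2) * Real.sqrt T.card := by
        rw [Real.sqrt_mul (sq_nonneg _), Real.sqrt_sq (by positivity)]
    _ = (2:ℝ) ^ c * Real.sqrt T.card / 2 := by ring

/-- From normality: each pattern count has frequency `2^{-L}`. -/
lemma cnt_tendsto {A : Set ℕ} (hA : IsNormalSet A) {L : ℕ} (hL : L ≠ 0)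
    (S : Finset (Fin L)) :
    Tendsto (fun M : ℕ => (cnt A L S M : ℝ) / M) atTop (nhds (1 / 2 ^ L)) := by
  set w : List Bool := List.ofFn (fun i : Fin L => decide (i ∈ S)) with hw
  have hlen : w.length = L := List.length_ofFn
  have hne : w ≠ [] := by
    intro h
    rw [h] at hlen
    exact hL hlen.symm
  have h := hA w hne
  have hpred : ∀ n : ℕ,
      ((∀ i : Fin w.length, (n + (i : ℕ) ∈ A ↔ w.get i = true)) ↔ patt A L n = S) := by
    intro n
    rw [patt_eq_iff]
    constructor
    · intro h' i
      have := h' (Fin.cast hlen.symm i)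
      rw [List.get_ofFn] at this
      simpa using this
    · intro h' i
      rw [List.get_ofFn]
      simpa using h' (Fin.cast hlen i)
  have hfun : ∀ N : ℕ,
      (((Finset.Icc 1 N).filter fun n =>
          ∀ i : Fin w.length, (n + (i : ℕ) ∈ A ↔ w.get i = true)).card : ℝ) / N
        = (cnt A L S N : ℝ) / N := by
    intro N
    have hIcc : Finset.Icc 1 N = Finset.Ioc 0 N := by
      rw [← Finset.Icc_add_one_left_eq_Ioc, zero_add]
    have hfil : ((Finset.Icc 1 N).filter fun n =>
        ∀ i : Fin w.length, (n + (i : ℕ) ∈ A ↔ w.get i = true))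
          = ((Finset.Ioc 0 N).filter fun n => patt A L n = S) := by
      rw [← hIcc]
      exact Finset.filter_congr fun n _ => hpred n
    simp only [cnt, hfil]
  rw [show (1:ℝ) / 2 ^ L = 1 / 2 ^ w.length by rw [hlen]]
  exact Tendsto.congr hfun h

/-- Partition of a sum over positions according to the occurring pattern. -/
lemma partition (A : Set ℕ) (L M : ℕ) (g : Finset (Fin L) → ℝ) :
    ∑ n ∈ Finset.Ioc 0 M, g (patt A L n)
      = ∑ S : Finset (Fin L), (cnt A L S M : ℝ) * g S := by
  rw [← Finset.sum_fiberwise_of_maps_to (t := Finset.univ)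
    (fun n _ => Finset.mem_univ (patt A L n)) (fun n => g (patt A L n))]
  refine Finset.sum_congr rfl fun S _ => ?_
  rw [Finset.sum_congr rfl (fun n hn => by rw [(Finset.mem_filter.mp hn).2] :
    ∀ n ∈ (Finset.Ioc 0 M).filter fun n => patt A L n = S,
      g (patt A L n) = g S)]
  rw [Finset.sum_const, nsmul_eq_mul]
  rfl

noncomputable def err (A : Set ℕ) (L M : ℕ) : ℝ :=
  ∑ S : Finset (Fin L), |(cnt A L S M : ℝ) - M / 2 ^ L|

lemma err_tendsto {A : Set ℕ} (hA : IsNormalSet A) {L : ℕ} (hL : L ≠ 0) :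
    Tendsto (fun M : ℕ => err A L M / M) atTop (nhds 0) := by
  have hterm : ∀ S : Finset (Fin L),
      Tendsto (fun M : ℕ => |(cnt A L S M : ℝ)/M - 1/2^L|) atTop (nhds 0) := by
    intro S
    have := ((cnt_tendsto hA hL S).sub (tendsto_const_nhds (x := (1:ℝ)/2^L))).abs
    simpa using this
  have htot := tendsto_finset_sum (Finset.univ : Finset (Finset (Fin L)))
    (fun S _ => hterm S)
  simp only [Finset.sum_const_zero] at htot
  refine htot.congr' ?_
  filter_upwards [eventually_ge_atTop 1] with M hM
  have hM0 : (M:ℝ) ≠ 0 := by positivity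
  rw [err, Finset.sum_div]
  refine Finset.sum_congr rfl fun S _ => ?_
  have hdiv : ((cnt A L S M : ℝ) - M/2^L)/M = (cnt A L S M : ℝ)/M - 1/2^L := by
    field_simp
  rw [← hdiv, abs_div, Nat.abs_cast]

/-- Positions within a window that are ≡ -r (mod a). -/
noncomputable def Tr (a L r : ℕ) : Finset (Fin L) :=
  Finset.univ.filter fun q => a ∣ (r + (q : ℕ))

lemma mod_of_dvd {a : ℕ} (ha : 0 < a) (r q : ℕ) (hq : a ∣ r + q) :
    q % a = (a - r % a) % a := by
  have h3 : r % a < a := Nat.mod_lt _ ha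
  have h4 : q % a < a := Nat.mod_lt _ ha
  obtain ⟨c, hc⟩ : a ∣ (r % a + q % a) := by
    apply Nat.dvd_of_mod_eq_zero
    rw [← Nat.add_mod]
    exact (Nat.mod_eq_zero_of_dvd hq)
  have h6 : c < 2 := by
    by_contra h
    push_neg at h
    have h7 : 2 * a ≤ c * a := Nat.mul_le_mul_right a h
    have h8 : a * c = c * a := Nat.mul_comm a c
    omega
  interval_cases c
  · have hz : r % a = 0 ∧ q % a = 0 := by omega
    rw [hz.1, hz.2, Nat.sub_zero, Nat.mod_self]
  · have h9 : r % a + q % a = a := by omega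
    by_cases hr : r % a = 0
    · omega
    · rw [Nat.mod_eq_of_lt (by omega : a - r % a < a)]
      omega

lemma dvd_rdelta {a : ℕ} (ha : 0 < a) (r : ℕ) : a ∣ r + (a - r % a) % a := by
  by_cases h : r % a = 0
  · rw [h, Nat.sub_zero, Nat.mod_self, Nat.add_zero]
    exact Nat.dvd_of_mod_eq_zero h
  · have h1 : r % a < a := Nat.mod_lt _ ha
    rw [Nat.mod_eq_of_lt (by omega : a - r % a < a)]
    refine ⟨r / a + 1, ?_⟩
    have h2 := Nat.mod_add_div r a
    have h3 : a * (r / a + 1) = a * (r / a) + a := by ring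
    omega

lemma card_Tr {a : ℕ} (ha : 0 < a) (K r : ℕ) : (Tr a (a * K) r).card = K := by
  have hjlt : ∀ k ∈ Finset.range K, a * k + (a - r % a) % a < a * K := by
    intro k hk
    have hk' : k < K := Finset.mem_range.mp hk
    have hδ : (a - r % a) % a < a := Nat.mod_lt _ ha
    calc a * k + (a - r % a) % a < a * k + a := by omega
      _ = a * (k + 1) := by ring
      _ ≤ a * K := Nat.mul_le_mul_left a (by omega)
  have hcard : (Tr a (a * K) r).card = (Finset.range K).card := by
    refine Finset.card_bij' (fun q _ => (q : ℕ) / a)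
      (fun k hk => (⟨a * k + (a - r % a) % a, hjlt k hk⟩ : Fin (a * K))) ?_ ?_ ?_ ?_
    · intro q hq
      rw [Finset.mem_range, Nat.div_lt_iff_lt_mul ha]
      calc (q : ℕ) < a * K := q.isLt
        _ = K * a := Nat.mul_comm a K
    · intro k hk
      simp only [Tr, Finset.mem_filter, Finset.mem_univ, true_and]
      have e : r + (a * k + (a - r % a) % a) = (r + (a - r % a) % a) + a * k := by ring
      rw [e]
      exact dvd_add (dvd_rdelta ha r) ⟨k, rfl⟩
    · intro q hq
      simp only [Tr, Finset.mem_filter, Finset.mem_univ, true_and] at hq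
      apply Fin.ext
      have h1 := mod_of_dvd ha r q hq
      have h2 := Nat.div_add_mod (q : ℕ) a
      simp only
      omega
    · intro k hk
      simp only
      rw [Nat.mul_add_div ha, Nat.div_eq_of_lt (Nat.mod_lt _ ha), Nat.add_zero]
  rw [hcard, Finset.card_range]

/-- Real-valued indicator of being a multiple of `a` lying in `A`. -/
noncomputable def ind (A : Set ℕ) (a m : ℕ) : ℝ := if a ∣ m ∧ m ∈ A then 1 else 0

lemma ind_nonneg (A : Set ℕ) (a m : ℕ) : 0 ≤ ind A a m := by
  rw [ind]; split <;> norm_num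

lemma ind_le_one (A : Set ℕ) (a m : ℕ) : ind A a m ≤ 1 := by
  rw [ind]; split <;> norm_num

lemma D_eq (A : Set ℕ) {a : ℕ} (ha : 0 < a) (L n : ℕ) :
    ((Tr a L (n % a) ∩ patt A L n).card : ℝ) = ∑ q : Fin L, ind A a (n + q) := by
  have hfil : Tr a L (n % a) ∩ patt A L n
      = Finset.univ.filter fun q : Fin L => a ∣ (n + (q : ℕ)) ∧ (n + (q : ℕ)) ∈ A := by
    rw [Tr, patt, ← Finset.filter_and]
    refine Finset.filter_congr fun q _ => ?_
    have e : a * (n / a) + (n % a + (q : ℕ)) = n + q := by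
      have := Nat.div_add_mod n a
      omega
    have key : a ∣ (n % a + (q : ℕ)) ↔ a ∣ (n + (q : ℕ)) := by
      rw [← e]
      exact (Nat.dvd_add_right ⟨n / a, rfl⟩).symm
    rw [key]
  rw [hfil, Finset.card_filter]
  push_cast
  refine Finset.sum_congr rfl fun q _ => ?_
  simp [ind]

lemma shift_bound {f : ℕ → ℝ} (hf0 : ∀ m, 0 ≤ f m) (hf1 : ∀ m, f m ≤ 1) (M q : ℕ) :
    |∑ n ∈ Finset.Ioc 0 M, f (n + q) - ∑ n ∈ Finset.Ioc 0 M, f n| ≤ q := by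
  have hre : ∑ n ∈ Finset.Ioc 0 M, f (n + q) = ∑ m ∈ Finset.Ioc q (M + q), f m := by
    rw [show Finset.Ioc q (M + q) = Finset.Ioc (0 + q) (M + q) by rw [Nat.zero_add],
      ← Finset.map_add_right_Ioc, Finset.sum_map]
    rfl
  have h1 := Finset.sum_Ioc_consecutive f (Nat.zero_le M) (Nat.le_add_right M q)
  have h2 := Finset.sum_Ioc_consecutive f (Nat.zero_le q) (by omega : q ≤ M + q)
  have hb1 : ∑ n ∈ Finset.Ioc M (M + q), f n ≤ q := by
    have := Finset.sum_le_card_nsmul (Finset.Ioc M (M + q)) f 1 fun x _ => hf1 x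
    rwa [Nat.card_Ioc, nsmul_eq_mul, mul_one, Nat.add_sub_cancel_left] at this
  have hb1' : 0 ≤ ∑ n ∈ Finset.Ioc M (M + q), f n := Finset.sum_nonneg fun x _ => hf0 x
  have hb2 : ∑ n ∈ Finset.Ioc 0 q, f n ≤ q := by
    have := Finset.sum_le_card_nsmul (Finset.Ioc 0 q) f 1 fun x _ => hf1 x
    rwa [Nat.card_Ioc, nsmul_eq_mul, mul_one, Nat.sub_zero] at this
  have hb2' : 0 ≤ ∑ n ∈ Finset.Ioc 0 q, f n := Finset.sum_nonneg fun x _ => hf0 x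
  rw [hre, abs_le]
  constructor <;> linarith

lemma count_eq (A : Set ℕ) {a : ℕ} (ha : 0 < a) (N : ℕ) :
    ∑ m ∈ Finset.Ioc 0 (a * N), ind A a m
      = (((Finset.Ioc 0 N).filter fun k => a * k ∈ A).card : ℝ) := by
  simp only [ind]
  rw [Finset.sum_boole]
  rw [Nat.cast_inj]
  apply Finset.card_bij' (fun m _ => m / a) (fun k _ => a * k)
  · intro m hm
    simp only [Finset.mem_filter, Finset.mem_Ioc] at hm ⊢
    obtain ⟨⟨hm0, hmN⟩, hdvd, hmA⟩ := hm
    have hma : a ≤ m := Nat.le_of_dvd hm0 hdvd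
    refine ⟨⟨?_, ?_⟩, ?_⟩
    · exact Nat.div_pos hma ha
    · have := Nat.div_le_div_right (c := a) hmN
      rwa [Nat.mul_div_cancel_left N ha] at this
    · rwa [Nat.mul_div_cancel' hdvd]
  · intro k hk
    simp only [Finset.mem_filter, Finset.mem_Ioc] at hk ⊢
    obtain ⟨⟨hk0, hkN⟩, hkA⟩ := hk
    exact ⟨⟨by positivity, Nat.mul_le_mul_left a hkN⟩, ⟨k, rfl⟩, hkA⟩
  · intro m hm
    simp only [Finset.mem_filter, Finset.mem_Ioc] at hm
    exact Nat.mul_div_cancel' hm.2.1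
  · intro k hk
    exact Nat.mul_div_cancel_left k ha

lemma key_est (A : Set ℕ) {a K N : ℕ} (ha : 0 < a) (hK : 0 < K) (hN : 0 < N) :
    |(((Finset.Ioc 0 N).filter fun k => a * k ∈ A).card : ℝ) / N - 1 / 2|
      ≤ ((a * K : ℕ) : ℝ) / N + err A (a * K) (a * N) / (2 * N)
        + a * Real.sqrt K / (2 * K) := by
  set L : ℕ := a * K with hLdef
  set M : ℕ := a * N with hMdef
  have hL0 : 0 < L := Nat.mul_pos ha hK
  have hM0 : 0 < M := Nat.mul_pos ha hN
  set F : ℝ := (((Finset.Ioc 0 N).filter fun k => a * k ∈ A).card : ℝ) with hFdef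
  have hFsum : F = ∑ m ∈ Finset.Ioc 0 M, ind A a m := (count_eq A ha N).symm
  set DD : ℕ → ℝ := fun n => ∑ q : Fin L, ind A a (n + q) with hDDdef
  -- Step 1
  have step1 : |∑ n ∈ Finset.Ioc 0 M, DD n - L * F| ≤ (L : ℝ) ^ 2 := by
    have hswap : ∑ n ∈ Finset.Ioc 0 M, DD n
        = ∑ q : Fin L, ∑ n ∈ Finset.Ioc 0 M, ind A a (n + q) := Finset.sum_comm
    have hLF : (L : ℝ) * F = ∑ _q : Fin L, F := by
      rw [Finset.sum_const, Finset.card_univ, Fintype.card_fin, nsmul_eq_mul]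
    calc |∑ n ∈ Finset.Ioc 0 M, DD n - L * F|
        = |∑ q : Fin L, (∑ n ∈ Finset.Ioc 0 M, ind A a (n + q) - F)| := by
          rw [hswap, hLF, ← Finset.sum_sub_distrib]
      _ ≤ ∑ q : Fin L, |∑ n ∈ Finset.Ioc 0 M, ind A a (n + q) - F| :=
          Finset.abs_sum_le_sum_abs _ _
      _ ≤ ∑ _q : Fin L, (L : ℝ) := by
          refine Finset.sum_le_sum fun q _ => ?_
          rw [hFsum]
          refine le_trans (shift_bound (ind_nonneg A a) (ind_le_one A a) M q) ?_
          exact_mod_cast le_of_lt q.isLt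
      _ = (L : ℝ) ^ 2 := by
          rw [Finset.sum_const, Finset.card_univ, Fintype.card_fin, nsmul_eq_mul]
          ring
  -- Step 2
  have hTcard : ∀ r : ℕ, (Tr a L r).card = K := fun r => card_Tr ha K r
  have step2 : ∑ n ∈ Finset.Ioc 0 M, |DD n - (K : ℝ) / 2|
      ≤ (a : ℝ) * ((K : ℝ) / 2 * err A L M + M * Real.sqrt K / 2) := by
    have h1 : ∀ n ∈ Finset.Ioc 0 M, |DD n - (K : ℝ) / 2|
        ≤ ∑ r ∈ Finset.range a, |((Tr a L r ∩ patt A L n).card : ℝ) - (K : ℝ) / 2| := by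
      intro n _
      have hDn : DD n = ((Tr a L (n % a) ∩ patt A L n).card : ℝ) := (D_eq A ha L n).symm
      rw [hDn]
      exact Finset.single_le_sum
        (f := fun r => |((Tr a L r ∩ patt A L n).card : ℝ) - (K : ℝ) / 2|)
        (fun r _ => abs_nonneg _) (Finset.mem_range.mpr (Nat.mod_lt n ha))
    have h2 : ∀ r ∈ Finset.range a,
        ∑ n ∈ Finset.Ioc 0 M, |((Tr a L r ∩ patt A L n).card : ℝ) - (K : ℝ) / 2|
          ≤ (K : ℝ) / 2 * err A L M + M * Real.sqrt K / 2 := by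
      intro r _
      have hpart := partition A L M
        (fun S => |((Tr a L r ∩ S).card : ℝ) - (K : ℝ) / 2|)
      rw [hpart]
      have hgle : ∀ S : Finset (Fin L),
          |((Tr a L r ∩ S).card : ℝ) - (K : ℝ) / 2| ≤ (K : ℝ) / 2 := by
        intro S
        have hcle : (Tr a L r ∩ S).card ≤ K := by
          rw [← hTcard r]
          exact Finset.card_le_card Finset.inter_subset_left
        have hc0 : (0 : ℝ) ≤ ((Tr a L r ∩ S).card : ℝ) := Nat.cast_nonneg _
        have hcle' : ((Tr a L r ∩ S).card : ℝ) ≤ K := Nat.cast_le.mpr hcle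
        rw [abs_le]
        constructor <;> linarith
      have hone : ∀ S : Finset (Fin L),
          (cnt A L S M : ℝ) * |((Tr a L r ∩ S).card : ℝ) - (K : ℝ) / 2|
            ≤ |(cnt A L S M : ℝ) - M / 2 ^ L| * ((K : ℝ) / 2)
              + (M : ℝ) / 2 ^ L * |((Tr a L r ∩ S).card : ℝ) - (K : ℝ) / 2| := by
        intro S
        set g : ℝ := |((Tr a L r ∩ S).card : ℝ) - (K : ℝ) / 2| with hg
        have hg0 : 0 ≤ g := abs_nonneg _
        have e : (cnt A L S M : ℝ) * g
            = ((cnt A L S M : ℝ) - M / 2 ^ L) * g + (M : ℝ) / 2 ^ L * g := by ring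
        rw [e]
        have h3 : ((cnt A L S M : ℝ) - M / 2 ^ L) * g
            ≤ |(cnt A L S M : ℝ) - M / 2 ^ L| * g :=
          mul_le_mul_of_nonneg_right (le_abs_self _) hg0
        have h4 : |(cnt A L S M : ℝ) - M / 2 ^ L| * g
            ≤ |(cnt A L S M : ℝ) - M / 2 ^ L| * ((K : ℝ) / 2) :=
          mul_le_mul_of_nonneg_left (hgle S) (abs_nonneg _)
        linarith
      calc ∑ S : Finset (Fin L), (cnt A L S M : ℝ)
            * |((Tr a L r ∩ S).card : ℝ) - (K : ℝ) / 2|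
          ≤ ∑ S : Finset (Fin L), (|(cnt A L S M : ℝ) - M / 2 ^ L| * ((K : ℝ) / 2)
              + (M : ℝ) / 2 ^ L * |((Tr a L r ∩ S).card : ℝ) - (K : ℝ) / 2|) :=
            Finset.sum_le_sum fun S _ => hone S
        _ = (K : ℝ) / 2 * err A L M + (M : ℝ) / 2 ^ L
              * ∑ S : Finset (Fin L), |((Tr a L r ∩ S).card : ℝ) - (K : ℝ) / 2| := by
            rw [Finset.sum_add_distrib, ← Finset.sum_mul, ← Finset.mul_sum, err]
            ring
        _ ≤ (K : ℝ) / 2 * err A L M + (M : ℝ) / 2 ^ L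
              * ((2 : ℝ) ^ L * Real.sqrt K / 2) := by
            have hcs := cheb_abs (Tr a L r)
            rw [Fintype.card_fin, hTcard r] at hcs
            have hμ : (0 : ℝ) ≤ (M : ℝ) / 2 ^ L := by positivity
            linarith [mul_le_mul_of_nonneg_left hcs hμ]
        _ = (K : ℝ) / 2 * err A L M + (M : ℝ) * Real.sqrt K / 2 := by
            have h2L : (2 : ℝ) ^ L ≠ 0 := by positivity
            field_simp
    calc ∑ n ∈ Finset.Ioc 0 M, |DD n - (K : ℝ) / 2|
        ≤ ∑ n ∈ Finset.Ioc 0 M, ∑ r ∈ Finset.range a,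
            |((Tr a L r ∩ patt A L n).card : ℝ) - (K : ℝ) / 2| :=
          Finset.sum_le_sum h1
      _ = ∑ r ∈ Finset.range a, ∑ n ∈ Finset.Ioc 0 M,
            |((Tr a L r ∩ patt A L n).card : ℝ) - (K : ℝ) / 2| := Finset.sum_comm
      _ ≤ ∑ _r ∈ Finset.range a, ((K : ℝ) / 2 * err A L M + M * Real.sqrt K / 2) :=
          Finset.sum_le_sum h2
      _ = (a : ℝ) * ((K : ℝ) / 2 * err A L M + M * Real.sqrt K / 2) := by
          rw [Finset.sum_const, Finset.card_range, nsmul_eq_mul]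
  -- Step 3
  have step3 : |∑ n ∈ Finset.Ioc 0 M, DD n - (M : ℝ) * ((K : ℝ) / 2)|
      ≤ ∑ n ∈ Finset.Ioc 0 M, |DD n - (K : ℝ) / 2| := by
    have hMK : (M : ℝ) * ((K : ℝ) / 2) = ∑ _n ∈ Finset.Ioc 0 M, ((K : ℝ) / 2) := by
      rw [Finset.sum_const, Nat.card_Ioc, Nat.sub_zero, nsmul_eq_mul]
    rw [hMK, ← Finset.sum_sub_distrib]
    exact Finset.abs_sum_le_sum_abs _ _
  -- Combine
  have main : |(L : ℝ) * F - (M : ℝ) * ((K : ℝ) / 2)|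
      ≤ (L : ℝ) ^ 2 + (a : ℝ) * ((K : ℝ) / 2 * err A L M + M * Real.sqrt K / 2) := by
    calc |(L : ℝ) * F - (M : ℝ) * ((K : ℝ) / 2)|
        ≤ |(L : ℝ) * F - ∑ n ∈ Finset.Ioc 0 M, DD n|
          + |∑ n ∈ Finset.Ioc 0 M, DD n - (M : ℝ) * ((K : ℝ) / 2)| := abs_sub_le _ _ _
      _ ≤ (L : ℝ) ^ 2 + (a : ℝ) * ((K : ℝ) / 2 * err A L M + M * Real.sqrt K / 2) := by
          rw [abs_sub_comm] at step1
          exact add_le_add step1 (le_trans step3 step2)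
  -- Division
  have haR : (0 : ℝ) < a := Nat.cast_pos.mpr ha
  have hKR : (0 : ℝ) < K := Nat.cast_pos.mpr hK
  have hNR : (0 : ℝ) < N := Nat.cast_pos.mpr hN
  have hLR : (0 : ℝ) < L := Nat.cast_pos.mpr hL0
  have hMR : (M : ℝ) = a * N := by rw [hMdef]; push_cast; ring
  have hLRe : (L : ℝ) = a * K := by rw [hLdef]; push_cast; ring
  have hsqK : (0 : ℝ) ≤ Real.sqrt K := Real.sqrt_nonneg _
  have herr0 : 0 ≤ err A L M := Finset.sum_nonneg fun S _ => abs_nonneg _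
  have hdiv : F / N - 1 / 2 = ((L : ℝ) * F - (M : ℝ) * ((K : ℝ) / 2)) / (L * N) := by
    rw [hMR, hLRe]
    field_simp
  calc |F / N - 1 / 2|
      = |(L : ℝ) * F - (M : ℝ) * ((K : ℝ) / 2)| / ((L : ℝ) * N) := by
        rw [hdiv, abs_div, abs_of_pos (by positivity : (0 : ℝ) < (L : ℝ) * N)]
    _ ≤ ((L : ℝ) ^ 2 + (a : ℝ) * ((K : ℝ) / 2 * err A L M + M * Real.sqrt K / 2))
          / ((L : ℝ) * N) := by
        exact (div_le_div_iff_of_pos_right (by positivity : (0:ℝ) < (L : ℝ) * N)).mpr main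
    _ = (L : ℝ) / N + err A L M / (2 * N) + a * Real.sqrt K / (2 * K) := by
        rw [hLRe, hMR]
        field_simp
        ring

end DilateAux

theorem dilate_density_half (A : Set ℕ) (hA : IsNormalSet A) (a : ℕ) (ha : 0 < a) :
    HasDensity {n : ℕ | a * n ∈ A} (1 / 2) := by
  rw [HasDensity, Metric.tendsto_atTop]
  intro ε hε
  have haR : (0 : ℝ) < a := Nat.cast_pos.mpr ha
  set K : ℕ := ⌈(3 * (a : ℝ) / ε) ^ 2⌉₊ + 1 with hKdef
  have hK0 : 0 < K := Nat.succ_pos _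
  have hKR : (0 : ℝ) < K := Nat.cast_pos.mpr hK0
  have hL0 : a * K ≠ 0 := by positivity
  -- the constant term is at most ε/3
  have hsq2 : 3 * (a : ℝ) / ε ≤ Real.sqrt K := by
    rw [show (3 * (a : ℝ) / ε) = Real.sqrt ((3 * (a : ℝ) / ε) ^ 2) from
      (Real.sqrt_sq (by positivity)).symm]
    apply Real.sqrt_le_sqrt
    calc (3 * (a : ℝ) / ε) ^ 2 ≤ (⌈(3 * (a : ℝ) / ε) ^ 2⌉₊ : ℝ) := Nat.le_ceil _
      _ ≤ (K : ℝ) := by rw [hKdef]; push_cast; linarith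
  have hsqK0 : (0 : ℝ) < Real.sqrt K := lt_of_lt_of_le (by positivity) hsq2
  have hconst : (a : ℝ) * Real.sqrt K / (2 * K) ≤ ε / 3 := by
    have hKeq : (K : ℝ) = Real.sqrt K * Real.sqrt K :=
      (Real.mul_self_sqrt (le_of_lt hKR)).symm
    have he : (a : ℝ) * Real.sqrt K / (2 * K) = a / (2 * Real.sqrt K) := by
      nth_rewrite 2 [hKeq]
      rw [show (2:ℝ) * (Real.sqrt K * Real.sqrt K)
          = (2 * Real.sqrt K) * Real.sqrt K from by ring]
      exact mul_div_mul_right _ _ (ne_of_gt hsqK0)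
    rw [he, div_le_iff₀ (by positivity)]
    rw [div_le_iff₀ hε] at hsq2
    nlinarith
  -- the two N-dependent terms tend to 0
  have hterm1 : Filter.Tendsto (fun N : ℕ => ((a * K : ℕ) : ℝ) / N)
      Filter.atTop (nhds 0) := tendsto_const_div_atTop_nhds_zero_nat _
  have hcomp : Filter.Tendsto (fun N : ℕ => a * N) Filter.atTop Filter.atTop := by
    apply Filter.tendsto_atTop_mono (fun N => Nat.le_mul_of_pos_left N ha)
    exact Filter.tendsto_id
  have herr0 := (DilateAux.err_tendsto hA hL0).comp hcomp
  have hterm2 : Filter.Tendsto (fun N : ℕ => DilateAux.err A (a * K) (a * N) / (2 * N))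
      Filter.atTop (nhds 0) := by
    have h5 := herr0.const_mul ((a : ℝ) / 2)
    rw [mul_zero] at h5
    refine h5.congr' ?_
    filter_upwards [Filter.eventually_gt_atTop 0] with N hN
    have hNR : (0 : ℝ) < N := Nat.cast_pos.mpr hN
    have hMR : ((a * N : ℕ) : ℝ) = (a : ℝ) * N := by push_cast; ring
    simp only [Function.comp_apply]
    rw [hMR]
    field_simp
  have hsum := hterm1.add hterm2
  rw [add_zero] at hsum
  have hev : ∀ᶠ N : ℕ in Filter.atTop,
      ((a * K : ℕ) : ℝ) / N + DilateAux.err A (a * K) (a * N) / (2 * N) < 2 * ε / 3 := by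
    have := hsum.eventually_lt_const (by linarith : (0 : ℝ) < 2 * ε / 3)
    exact this
  have hev2 := hev.and (Filter.eventually_gt_atTop 0)
  rw [Filter.eventually_atTop] at hev2
  obtain ⟨N₀, hN₀⟩ := hev2
  refine ⟨N₀, fun N hN => ?_⟩
  obtain ⟨hsmall, hNpos⟩ := hN₀ N hN
  -- identify the counting function
  have hfil : ((Finset.Icc 1 N).filter fun n => n ∈ {n : ℕ | a * n ∈ A})
      = (Finset.Ioc 0 N).filter fun k => a * k ∈ A := by
    have hIcc : Finset.Icc 1 N = Finset.Ioc 0 N := by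
      rw [← Finset.Icc_add_one_left_eq_Ioc, zero_add]
    rw [hIcc]
    exact Finset.filter_congr fun n _ => by simp [Set.mem_setOf_eq]
  rw [Real.dist_eq, hfil]
  calc |(((Finset.Ioc 0 N).filter fun k => a * k ∈ A).card : ℝ) / N - 1 / 2|
      ≤ ((a * K : ℕ) : ℝ) / N + DilateAux.err A (a * K) (a * N) / (2 * N)
        + (a : ℝ) * Real.sqrt K / (2 * K) := DilateAux.key_est A ha hK0 hNpos
    _ < 2 * ε / 3 + ε / 3 := by linarith
    _ = ε := by ring
end

section
/- Every normal set A ⊆ ℕ contains elements x, y, z with x ≠ y such that x·y = z². -/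
open scoped Classical

namespace NormalAux


open Filter Finset

noncomputable def Fn (A : Set ℕ) (j : ℕ) : ℝ := if j ∈ A then 1/2 else -(1/2)

noncomputable def eb (b : Bool) : ℝ := if b then 1/2 else -(1/2)

lemma abs_Fn_le (A : Set ℕ) (j : ℕ) : |Fn A j| ≤ 1/2 := by
  unfold Fn; split <;> rw [abs_le] <;> constructor <;> norm_num

lemma abs_Fn_mul_le (A : Set ℕ) (j j' : ℕ) : |Fn A j * Fn A j'| ≤ 1/4 := by
  rw [abs_mul]
  calc |Fn A j| * |Fn A j'| ≤ (1/2) * (1/2) :=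
        mul_le_mul (abs_Fn_le A j) (abs_Fn_le A j') (abs_nonneg _) (by norm_num)
    _ = 1/4 := by norm_num

lemma Fn_eq_eb (A : Set ℕ) (x : ℕ) : Fn A x = eb (decide (x ∈ A)) := by
  by_cases h : x ∈ A <;> simp [Fn, eb, h]

lemma eb_not (b : Bool) : eb (!b) = - eb b := by cases b <;> simp [eb]


lemma Fn_eq (A : Set ℕ) (j : ℕ) : Fn A j = (if j ∈ A then (1:ℝ) else 0) - 1/2 := by
  unfold Fn; split <;> norm_num

/-- Master lemma: normality gives the limit of any pattern-weighted average. -/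
lemma key (A : Set ℕ) (hA : IsNormalSet A) {L : ℕ} (hL : 0 < L)
    (φ : (Fin L → Bool) → ℝ) :
    Tendsto (fun N : ℕ =>
        (∑ n ∈ Icc 1 N, φ (fun i => decide (n + (i : ℕ) ∈ A))) / N)
      atTop (nhds ((∑ v : Fin L → Bool, φ v) / 2 ^ L)) := by
  classical
  have hsplit : ∀ N : ℕ, (∑ n ∈ Icc 1 N, φ (fun i => decide (n + (i : ℕ) ∈ A)))
      = ∑ v : Fin L → Bool, φ v *
        (((Icc 1 N).filter fun n => (fun i : Fin L => decide (n + (i : ℕ) ∈ A)) = v).card : ℝ) := by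
    intro N
    have h1 : ∀ n : ℕ, φ (fun i => decide (n + (i : ℕ) ∈ A))
        = ∑ v : Fin L → Bool,
            if (fun i : Fin L => decide (n + (i : ℕ) ∈ A)) = v then φ v else 0 := by
      intro n
      rw [Finset.sum_ite_eq Finset.univ (fun i : Fin L => decide (n + (i : ℕ) ∈ A)) φ]
      simp
    calc (∑ n ∈ Icc 1 N, φ (fun i => decide (n + (i : ℕ) ∈ A)))
        = ∑ n ∈ Icc 1 N, ∑ v : Fin L → Bool,
            if (fun i : Fin L => decide (n + (i : ℕ) ∈ A)) = v then φ v else 0 :=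
          Finset.sum_congr rfl fun n _ => h1 n
      _ = ∑ v : Fin L → Bool, ∑ n ∈ Icc 1 N,
            if (fun i : Fin L => decide (n + (i : ℕ) ∈ A)) = v then φ v else 0 :=
          Finset.sum_comm
      _ = _ := by
          refine Finset.sum_congr rfl fun v _ => ?_
          rw [← Finset.sum_filter, Finset.sum_const, nsmul_eq_mul, mul_comm]
  have hv : ∀ v : Fin L → Bool,
      Tendsto (fun N : ℕ =>
        ((((Icc 1 N).filter fun n => (fun i : Fin L => decide (n + (i : ℕ) ∈ A)) = v).card : ℝ)) / N)
        atTop (nhds (1 / 2 ^ L)) := by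
    intro v
    have hw := hA (List.ofFn v) (by simpa [List.ofFn_eq_nil_iff] using hL.ne')
    have hcard : ∀ N : ℕ,
        ((Icc 1 N).filter fun n =>
          ∀ i : Fin (List.ofFn v).length, (n + (i : ℕ) ∈ A ↔ (List.ofFn v).get i = true))
        = ((Icc 1 N).filter fun n => (fun i : Fin L => decide (n + (i : ℕ) ∈ A)) = v) := by
      intro N
      apply Finset.filter_congr
      intro n _
      constructor
      · intro h
        funext i
        have h2 := h (Fin.cast (List.length_ofFn (f := v)).symm i)
        rw [List.get_ofFn] at h2
        have hcoe : ((Fin.cast (List.length_ofFn (f := v)).symm i : Fin (List.ofFn v).length) : ℕ)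
            = (i : ℕ) := rfl
        rw [hcoe] at h2
        have hvv : v (Fin.cast (by simp) (Fin.cast (List.length_ofFn (f := v)).symm i)) = v i := rfl
        rw [hvv] at h2
        cases hvi : v i
        · rw [hvi] at h2
          exact decide_eq_false (by simp [h2])
        · rw [hvi] at h2
          exact decide_eq_true (h2.mpr rfl)
      · intro h i
        rw [List.get_ofFn]
        have h3 := congrFun h (Fin.cast (by simp) i)
        have hcoe2 : ((Fin.cast (by simp) i : Fin L) : ℕ) = (i : ℕ) := rfl
        simp only [hcoe2] at h3
        rw [← h3]
        simp
    have := hw.congr (fun N => by rw [hcard N])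
    have hlen : (List.ofFn v).length = L := List.length_ofFn (f := v)
    rw [hlen] at this
    exact this
  have hsum := tendsto_finset_sum (Finset.univ : Finset (Fin L → Bool))
    (fun v _ => (hv v).const_mul (φ v))
  have heq : (fun N : ℕ =>
      (∑ n ∈ Icc 1 N, φ (fun i => decide (n + (i : ℕ) ∈ A))) / N)
      = fun N : ℕ => ∑ v : Fin L → Bool, φ v *
        ((((Icc 1 N).filter fun n => (fun i : Fin L => decide (n + (i : ℕ) ∈ A)) = v).card : ℝ)) / N := by
    funext N
    rw [hsplit N, Finset.sum_div]
  rw [heq]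
  have hval : ((∑ v : Fin L → Bool, φ v) / 2 ^ L)
      = ∑ v : Fin L → Bool, φ v * (1 / 2 ^ L) := by
    rw [← Finset.sum_mul]
    ring
  rw [hval]
  refine hsum.congr fun N => ?_
  exact Finset.sum_congr rfl fun v _ => by rw [mul_div_assoc]

lemma P0 (A : Set ℕ) (hA : IsNormalSet A) :
    Tendsto (fun N : ℕ => (∑ j ∈ Icc 1 N, Fn A j) / N) atTop (nhds 0) := by
  have h := key A hA (L := 1) one_pos (fun v => eb (v 0))
  have hsum : (∑ v : Fin 1 → Bool, eb (v 0)) = 0 := by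
    refine Finset.sum_ninvolution (fun v => Function.update v 0 (!(v 0))) ?_ ?_ (fun _ => mem_univ _) ?_
    · intro v
      simp [Function.update_self, eb_not]
    · intro v hv
      intro hupd
      have := congrFun hupd 0
      simp [Function.update_self] at this
    · intro v
      funext j
      rcases eq_or_ne j 0 with rfl | hj
      · simp [Function.update_self]
      · simp [Function.update_of_ne hj]
  rw [hsum] at h
  simp only [zero_div] at h
  refine h.congr fun N => ?_
  congr 1
  refine Finset.sum_congr rfl fun n _ => ?_
  rw [Fn_eq_eb]
  norm_num

lemma Pt (A : Set ℕ) (hA : IsNormalSet A) (t : ℕ) (ht : 1 ≤ t) :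
    Tendsto (fun N : ℕ => (∑ j ∈ Icc 1 N, Fn A j * Fn A (j + t)) / N) atTop (nhds 0) := by
  have htlt : t < t + 1 := Nat.lt_succ_self t
  have hne : (⟨t, htlt⟩ : Fin (t + 1)) ≠ 0 := by
    intro hcontra
    have := congrArg Fin.val hcontra
    simp at this
    omega
  have h := key A hA (L := t + 1) (Nat.succ_pos t)
    (fun v => eb (v 0) * eb (v ⟨t, htlt⟩))
  have hsum : (∑ v : Fin (t + 1) → Bool, eb (v 0) * eb (v ⟨t, htlt⟩)) = 0 := by
    refine Finset.sum_ninvolution (fun v => Function.update v 0 (!(v 0))) ?_ ?_ (fun _ => mem_univ _) ?_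
    · intro v
      simp only [Function.update_self, Function.update_of_ne hne, eb_not]
      ring
    · intro v hv hupd
      have := congrFun hupd 0
      simp [Function.update_self] at this
    · intro v
      funext j
      rcases eq_or_ne j 0 with rfl | hj
      · simp [Function.update_self]
      · simp [Function.update_of_ne hj]
  rw [hsum] at h
  simp only [zero_div] at h
  refine h.congr fun N => ?_
  congr 1
  refine Finset.sum_congr rfl fun n _ => ?_
  rw [Fn_eq_eb, Fn_eq_eb]
  norm_num

lemma sum_diff_bound (f : ℕ → ℝ) (c : ℝ) (hf : ∀ j, |f j| ≤ c) (s t : Finset ℕ) :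
    |∑ j ∈ s, f j - ∑ j ∈ t, f j| ≤ c * (s \ t).card + c * (t \ s).card := by
  have hs : ∑ j ∈ s, f j = (∑ j ∈ s ∩ t, f j) + ∑ j ∈ s \ t, f j :=
    (Finset.sum_inter_add_sum_sdiff s t f).symm
  have ht' : ∑ j ∈ t, f j = (∑ j ∈ s ∩ t, f j) + ∑ j ∈ t \ s, f j := by
    rw [Finset.inter_comm]
    exact (Finset.sum_inter_add_sum_sdiff t s f).symm
  rw [hs, ht']
  have h1 : |∑ j ∈ s \ t, f j| ≤ c * (s \ t).card := by
    calc |∑ j ∈ s \ t, f j| ≤ ∑ j ∈ s \ t, |f j| := Finset.abs_sum_le_sum_abs _ _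
      _ ≤ ∑ _j ∈ s \ t, c := Finset.sum_le_sum fun j _ => hf j
      _ = c * (s \ t).card := by rw [Finset.sum_const, nsmul_eq_mul, mul_comm]
  have h2 : |∑ j ∈ t \ s, f j| ≤ c * (t \ s).card := by
    calc |∑ j ∈ t \ s, f j| ≤ ∑ j ∈ t \ s, |f j| := Finset.abs_sum_le_sum_abs _ _
      _ ≤ ∑ _j ∈ t \ s, c := Finset.sum_le_sum fun j _ => hf j
      _ = c * (t \ s).card := by rw [Finset.sum_const, nsmul_eq_mul, mul_comm]
  calc |(∑ j ∈ s ∩ t, f j) + ∑ j ∈ s \ t, f j - ((∑ j ∈ s ∩ t, f j) + ∑ j ∈ t \ s, f j)|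
      = |∑ j ∈ s \ t, f j - ∑ j ∈ t \ s, f j| := by ring_nf
    _ ≤ |∑ j ∈ s \ t, f j| + |∑ j ∈ t \ s, f j| := abs_sub _ _
    _ ≤ c * (s \ t).card + c * (t \ s).card := add_le_add h1 h2

lemma shift_sum_bound (f : ℕ → ℝ) (c : ℝ) (hc : 0 ≤ c) (hf : ∀ j, |f j| ≤ c) (M k : ℕ) :
    |∑ m ∈ Icc 1 M, f (m + k) - ∑ m ∈ Icc 1 M, f m| ≤ 2 * c * k := by
  have h1 : ∑ m ∈ Icc 1 M, f (m + k) = ∑ j ∈ Icc (1 + k) (M + k), f j := by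
    rw [← Finset.map_add_right_Icc, Finset.sum_map]
    simp [addRightEmbedding]
  rw [h1]
  have hb := sum_diff_bound f c hf (Icc (1 + k) (M + k)) (Icc 1 M)
  have hc1 : ((Icc (1 + k) (M + k) \ Icc 1 M).card : ℝ) ≤ k := by
    have hsub : Icc (1 + k) (M + k) \ Icc 1 M ⊆ Icc (M + 1) (M + k) := by
      intro j hj
      simp only [Finset.mem_sdiff, Finset.mem_Icc] at hj ⊢
      omega
    have := Finset.card_le_card hsub
    rw [Nat.card_Icc] at this
    exact_mod_cast this.trans (by omega)
  have hc2 : ((Icc 1 M \ Icc (1 + k) (M + k)).card : ℝ) ≤ k := by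
    have hsub : Icc 1 M \ Icc (1 + k) (M + k) ⊆ Icc 1 k := by
      intro j hj
      simp only [Finset.mem_sdiff, Finset.mem_Icc] at hj ⊢
      omega
    have := Finset.card_le_card hsub
    rw [Nat.card_Icc] at this
    exact_mod_cast this.trans (by omega)
  have h2 : c * ((Icc (1 + k) (M + k) \ Icc 1 M).card : ℝ) ≤ c * k :=
    mul_le_mul_of_nonneg_left hc1 hc
  have h3 : c * ((Icc 1 M \ Icc (1 + k) (M + k)).card : ℝ) ≤ c * k :=
    mul_le_mul_of_nonneg_left hc2 hc
  linarith

set_option maxHeartbeats 2000000 in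
lemma wall (A : Set ℕ) (hA : IsNormalSet A) (q : ℕ) (hq : 1 ≤ q) :
    Tendsto (fun M : ℕ => (∑ m ∈ Icc 1 M, Fn A (q * m)) / M) atTop (nhds 0) := by
  rw [Metric.tendsto_atTop]
  intro ε hε
  have hq0R : (0:ℝ) < q := by exact_mod_cast hq
  have hε2 : (0:ℝ) < ε ^ 2 := by positivity
  -- parameters
  obtain ⟨K, hK1, hKε⟩ : ∃ K : ℕ, 1 ≤ K ∧ 2 * (q:ℝ) ≤ K * ε ^ 2 := by
    refine ⟨⌈(2 * (q : ℝ)) / ε ^ 2⌉₊ + 1, Nat.le_add_left 1 _, ?_⟩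
    have h1 := Nat.le_ceil ((2 * (q : ℝ)) / ε ^ 2)
    rw [div_le_iff₀ hε2] at h1
    push_cast
    nlinarith
  have hK1R : (1 : ℝ) ≤ K := by exact_mod_cast hK1
  obtain ⟨ε₁, hε₁pos, hε₁q⟩ : ∃ e : ℝ, 0 < e ∧ e * (q:ℝ) = ε ^ 2 / 16 :=
    ⟨ε ^ 2 / (16 * q), by positivity, by field_simp⟩
  -- correlation control
  have hcorr : ∀ᶠ N : ℕ in atTop, ∀ d ∈ Icc 1 K,
      |∑ j ∈ Icc 1 N, Fn A j * Fn A (j + q * d)| ≤ ε₁ * N := by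
    rw [eventually_all_finset]
    intro d hd
    have hd1 : 1 ≤ d := (Finset.mem_Icc.1 hd).1
    have hqd : 1 ≤ q * d := Nat.mul_pos hq hd1
    have hPt := Pt A hA (q * d) hqd
    filter_upwards [hPt (Metric.ball_mem_nhds (0:ℝ) hε₁pos), eventually_ge_atTop 1] with N h1 hN1
    simp only [Set.mem_preimage, Metric.mem_ball, dist_zero_right, Real.norm_eq_abs, abs_div,
      Nat.abs_cast] at h1
    have hNpos : (0:ℝ) < N := by exact_mod_cast hN1
    rw [div_lt_iff₀ hNpos] at h1
    linarith
  obtain ⟨N₁, hN₁⟩ := eventually_atTop.1 hcorr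
  -- choose M₀
  obtain ⟨Ma, hMa⟩ : ∃ Ma : ℕ, ∀ M : ℕ, Ma ≤ M → 16 * (q:ℝ) * K ≤ M * ε ^ 2 := by
    refine ⟨⌈(16 * (q:ℝ) * K) / ε ^ 2⌉₊, fun M hM => ?_⟩
    have h1 := Nat.le_ceil ((16 * (q:ℝ) * K) / ε ^ 2)
    have h2 : ((⌈(16 * (q:ℝ) * K) / ε ^ 2⌉₊ : ℝ)) ≤ M := by exact_mod_cast hM
    rw [div_le_iff₀ hε2] at h1
    nlinarith
  obtain ⟨Mb, hMb⟩ : ∃ Mb : ℕ, ∀ M : ℕ, Mb ≤ M → 1 ≤ M → 16 * (K:ℝ) ^ 2 ≤ (M:ℝ) ^ 2 * ε ^ 2 := by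
    refine ⟨⌈(16 * (K:ℝ) ^ 2) / ε ^ 2⌉₊, fun M hM hM1 => ?_⟩
    have h1 := Nat.le_ceil ((16 * (K:ℝ) ^ 2) / ε ^ 2)
    have h2 : ((⌈(16 * (K:ℝ) ^ 2) / ε ^ 2⌉₊ : ℝ)) ≤ M := by exact_mod_cast hM
    have hM1R : (1:ℝ) ≤ M := by exact_mod_cast hM1
    rw [div_le_iff₀ hε2] at h1
    have h3 : 16 * (K:ℝ) ^ 2 ≤ (M:ℝ) * ε ^ 2 := by nlinarith
    have h4 : (M:ℝ) * ε ^ 2 ≤ (M:ℝ) ^ 2 * ε ^ 2 := by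
      nlinarith [mul_nonneg (mul_nonneg (by linarith : (0:ℝ) ≤ (M:ℝ))
        (by linarith : (0:ℝ) ≤ (M:ℝ) - 1)) (le_of_lt hε2)]
    linarith
  refine ⟨max (max N₁ 1) (max Ma Mb), fun M hM => ?_⟩
  have hMN₁ : N₁ ≤ M := by omega
  have hM1 : 1 ≤ M := by omega
  have hM1R : (1:ℝ) ≤ M := by exact_mod_cast hM1
  have hMpos : (0:ℝ) < M := by linarith
  have hM2 : 16 * (q:ℝ) * K ≤ M * ε ^ 2 := hMa M (by omega)
  have hM3 : 16 * (K:ℝ) ^ 2 ≤ (M:ℝ) ^ 2 * ε ^ 2 := hMb M (by omega) hM1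
  -- abbreviations
  set F : ℕ → ℝ := Fn A with hFdef
  set SM : ℝ := ∑ m ∈ Icc 1 M, F (q * m) with hSMdef
  set g : ℕ → ℝ := fun j => ∑ k ∈ Icc 1 K, F (j + q * k) with hgdef
  set G : ℝ := ∑ m ∈ Icc 1 M, g (q * m) with hGdef
  set N : ℕ := q * M with hNdef
  clear_value F SM g G N
  have habsF : ∀ j, |F j| ≤ 1/2 := fun j => by rw [hFdef]; exact abs_Fn_le A j
  have habsFF : ∀ j j', |F j * F j'| ≤ 1/4 := fun j j' => by
    rw [hFdef]; exact abs_Fn_mul_le A j j'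
  have hNM : (N:ℝ) = q * M := by exact_mod_cast hNdef
  have hNN₁ : N₁ ≤ N := le_trans hMN₁ (by rw [hNdef]; exact Nat.le_mul_of_pos_left M hq)
  -- Step A : |G - K * SM| ≤ K^2
  have hstepA : |G - (K:ℝ) * SM| ≤ (K:ℝ) ^ 2 := by
    have hGrw : G = ∑ k ∈ Icc 1 K, ∑ m ∈ Icc 1 M, F (q * (m + k)) := by
      rw [hGdef]
      have : ∀ m, g (q * m) = ∑ k ∈ Icc 1 K, F (q * (m + k)) := by
        intro m
        rw [hgdef]
        exact Finset.sum_congr rfl fun k _ => by rw [Nat.mul_add]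
      rw [Finset.sum_congr rfl fun m _ => this m]
      exact Finset.sum_comm
    have hKSM : (K:ℝ) * SM = ∑ _k ∈ Icc 1 K, SM := by
      rw [Finset.sum_const, Nat.card_Icc, nsmul_eq_mul]
      norm_num
    rw [hGrw, hKSM, ← Finset.sum_sub_distrib]
    calc |∑ k ∈ Icc 1 K, ((∑ m ∈ Icc 1 M, F (q * (m + k))) - SM)|
        ≤ ∑ k ∈ Icc 1 K, |(∑ m ∈ Icc 1 M, F (q * (m + k))) - SM| :=
          Finset.abs_sum_le_sum_abs _ _
      _ ≤ ∑ k ∈ Icc 1 K, (k:ℝ) := by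
          refine Finset.sum_le_sum fun k _ => ?_
          have h := shift_sum_bound (fun j => F (q * j)) (1/2) (by norm_num)
            (fun j => habsF (q * j)) M k
          beta_reduce at h
          rw [hSMdef]
          norm_num at h
          exact h
      _ ≤ ∑ _k ∈ Icc 1 K, (K:ℝ) := by
          refine Finset.sum_le_sum fun k hk => ?_
          exact_mod_cast Nat.cast_le.2 (Finset.mem_Icc.1 hk).2
      _ = (K:ℝ) ^ 2 := by
          rw [Finset.sum_const, Nat.card_Icc, nsmul_eq_mul]
          push_cast
          ring
  -- Step B : G^2 ≤ M * ∑ (g (q*m))^2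
  have hstepB : G ^ 2 ≤ (M:ℝ) * ∑ m ∈ Icc 1 M, (g (q * m)) ^ 2 := by
    have h := Finset.sum_mul_sq_le_sq_mul_sq (Icc 1 M) (fun _ => (1:ℝ)) (fun m => g (q * m))
    rw [hGdef]
    simpa [Nat.card_Icc] using h
  -- Step C : ∑ (g (q*m))^2 ≤ ∑_{j ≤ N} (g j)^2
  have hstepC : (∑ m ∈ Icc 1 M, (g (q * m)) ^ 2) ≤ ∑ j ∈ Icc 1 N, (g j) ^ 2 := by
    have hinj : ∀ x ∈ Icc 1 M, ∀ y ∈ Icc 1 M, q * x = q * y → x = y := by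
      intro x _ y _ h
      exact Nat.eq_of_mul_eq_mul_left (by omega) h
    have himg : ∑ j ∈ (Icc 1 M).image (fun m => q * m), (g j) ^ 2
        = ∑ m ∈ Icc 1 M, (g (q * m)) ^ 2 := Finset.sum_image hinj
    rw [← himg]
    refine Finset.sum_le_sum_of_subset_of_nonneg ?_ fun j _ _ => sq_nonneg _
    intro j hj
    obtain ⟨m, hm, rfl⟩ := Finset.mem_image.1 hj
    rw [Finset.mem_Icc] at hm ⊢
    rw [hNdef]
    constructor
    · calc 1 ≤ 1 * 1 := by norm_num
        _ ≤ q * m := Nat.mul_le_mul hq hm.1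
    · exact Nat.mul_le_mul_left q hm.2
  -- Step D : second moment bound
  have hstepD : (∑ j ∈ Icc 1 N, (g j) ^ 2)
      ≤ (K:ℝ) * ((N:ℝ) / 4) + (K:ℝ) ^ 2 * (ε₁ * N + (q:ℝ) * K) := by
    have hT : ∀ k k' : ℕ, k ∈ Icc 1 K → k' ∈ Icc 1 K →
        |∑ j ∈ Icc 1 N, F (j + q * k) * F (j + q * k')|
          ≤ (if k = k' then (N:ℝ) / 4 else 0) + (ε₁ * N + (q:ℝ) * K) := by
      have hoff : ∀ k k' : ℕ, k ∈ Icc 1 K → k' ∈ Icc 1 K → k < k' →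
          |∑ j ∈ Icc 1 N, F (j + q * k) * F (j + q * k')| ≤ ε₁ * N + (q:ℝ) * K := by
        intro k k' hk hk' hlt
        rw [Finset.mem_Icc] at hk hk'
        obtain ⟨d, hkd, hd1, hdK⟩ : ∃ d, k' = k + d ∧ 1 ≤ d ∧ d ≤ K :=
          ⟨k' - k, by omega, by omega, by omega⟩
        have hrw : ∀ j, F (j + q * k) * F (j + q * k')
            = F (j + q * k) * F ((j + q * k) + q * d) := by
          intro j
          congr 2
          rw [hkd, Nat.mul_add]
          ring
        rw [Finset.sum_congr rfl fun j _ => hrw j]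
        have hshift := shift_sum_bound (fun j => F j * F (j + q * d)) (1/4) (by norm_num)
          (fun j => habsFF j (j + q * d)) N (q * k)
        beta_reduce at hshift
        have hcast : ((q * k : ℕ) : ℝ) = (q:ℝ) * k := by push_cast; ring
        rw [hcast] at hshift
        have hC := hN₁ N hNN₁ d (Finset.mem_Icc.2 ⟨hd1, hdK⟩)
        have hqk : (q:ℝ) * k ≤ (q:ℝ) * K := by
          have hkK : (k:ℝ) ≤ K := by exact_mod_cast hk.2
          nlinarith
        have habs2 := abs_sub_abs_le_abs_sub
          (∑ j ∈ Icc 1 N, F (j + q * k) * F ((j + q * k) + q * d))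
          (∑ j ∈ Icc 1 N, F j * F (j + q * d))
        linarith [hshift, habs2, hC]
      intro k k' hk hk'
      rcases lt_trichotomy k k' with hlt | heq | hgt
      · rw [if_neg (by omega : ¬ k = k')]
        have := hoff k k' hk hk' hlt
        linarith
      · subst heq
        rw [if_pos rfl]
        have hb : |∑ j ∈ Icc 1 N, F (j + q * k) * F (j + q * k)| ≤ (N:ℝ) / 4 := by
          calc |∑ j ∈ Icc 1 N, F (j + q * k) * F (j + q * k)|
              ≤ ∑ j ∈ Icc 1 N, |F (j + q * k) * F (j + q * k)| :=
                Finset.abs_sum_le_sum_abs _ _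
            _ ≤ ∑ _j ∈ Icc 1 N, (1/4 : ℝ) :=
                Finset.sum_le_sum fun j _ => habsFF _ _
            _ = (N:ℝ) / 4 := by
                rw [Finset.sum_const, Nat.card_Icc, nsmul_eq_mul]
                push_cast
                ring
        have hnn : 0 ≤ ε₁ * N + (q:ℝ) * K := by positivity
        linarith
      · rw [if_neg (by omega : ¬ k = k')]
        have := hoff k' k hk' hk hgt
        have hcomm : (∑ j ∈ Icc 1 N, F (j + q * k) * F (j + q * k'))
            = ∑ j ∈ Icc 1 N, F (j + q * k') * F (j + q * k) :=
          Finset.sum_congr rfl fun j _ => mul_comm _ _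
        rw [hcomm]
        linarith
    have hexp : (∑ j ∈ Icc 1 N, (g j) ^ 2)
        = ∑ k ∈ Icc 1 K, ∑ k' ∈ Icc 1 K, ∑ j ∈ Icc 1 N, F (j + q * k) * F (j + q * k') := by
      have h1 : ∀ j, (g j) ^ 2 = ∑ k ∈ Icc 1 K, ∑ k' ∈ Icc 1 K, F (j + q * k) * F (j + q * k') := by
        intro j
        rw [hgdef, sq]
        exact Finset.sum_mul_sum (Icc 1 K) (Icc 1 K)
          (fun k => F (j + q * k)) (fun k' => F (j + q * k'))
      rw [Finset.sum_congr rfl fun j _ => h1 j]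
      exact Finset.sum_comm.trans (Finset.sum_congr rfl fun k _ => Finset.sum_comm)
    rw [hexp]
    calc (∑ k ∈ Icc 1 K, ∑ k' ∈ Icc 1 K, ∑ j ∈ Icc 1 N, F (j + q * k) * F (j + q * k'))
        ≤ ∑ k ∈ Icc 1 K, ∑ k' ∈ Icc 1 K,
            ((if k = k' then (N:ℝ) / 4 else 0) + (ε₁ * N + (q:ℝ) * K)) := by
          refine Finset.sum_le_sum fun k hk => Finset.sum_le_sum fun k' hk' => ?_
          exact le_trans (le_abs_self _) (hT k k' hk hk')
      _ = ∑ k ∈ Icc 1 K, ((N:ℝ) / 4 + (K:ℝ) * (ε₁ * N + (q:ℝ) * K)) := by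
          refine Finset.sum_congr rfl fun k hk => ?_
          rw [Finset.sum_add_distrib, Finset.sum_ite_eq, if_pos hk, Finset.sum_const,
            Nat.card_Icc, nsmul_eq_mul]
          push_cast
          ring
      _ = (K:ℝ) * ((N:ℝ) / 4) + (K:ℝ) ^ 2 * (ε₁ * N + (q:ℝ) * K) := by
          rw [Finset.sum_const, Nat.card_Icc, nsmul_eq_mul]
          push_cast
          ring
  -- Step E : combine
  have hKSMsq : ((K:ℝ) * SM) ^ 2 ≤ 2 * G ^ 2 + 2 * (K:ℝ) ^ 4 := by
    have h5 : (G - (K:ℝ) * SM) ^ 2 ≤ (K:ℝ) ^ 4 := by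
      have := sq_abs (G - (K:ℝ) * SM)
      nlinarith [abs_nonneg (G - (K:ℝ) * SM), sq_nonneg ((K:ℝ)^2)]
    nlinarith [sq_nonneg (G + (G - (K:ℝ) * SM))]
  have hchain : ((K:ℝ) * SM) ^ 2
      ≤ 2 * ((M:ℝ) * ((K:ℝ) * ((N:ℝ) / 4) + (K:ℝ) ^ 2 * (ε₁ * N + (q:ℝ) * K))) + 2 * (K:ℝ) ^ 4 := by
    have hBC : G ^ 2 ≤ (M:ℝ) * ((K:ℝ) * ((N:ℝ) / 4) + (K:ℝ) ^ 2 * (ε₁ * N + (q:ℝ) * K)) := by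
      calc G ^ 2 ≤ (M:ℝ) * ∑ m ∈ Icc 1 M, (g (q * m)) ^ 2 := hstepB
        _ ≤ (M:ℝ) * ∑ j ∈ Icc 1 N, (g j) ^ 2 :=
            mul_le_mul_of_nonneg_left hstepC (le_of_lt hMpos)
        _ ≤ _ := mul_le_mul_of_nonneg_left hstepD (le_of_lt hMpos)
    linarith
  have hfinal : SM ^ 2 < ε ^ 2 * (M:ℝ) ^ 2 := by
    have hKpos : (0:ℝ) < (K:ℝ) ^ 2 := by positivity
    have t1 : 2 * (q:ℝ) * ((K:ℝ) * (M:ℝ)^2 / 4) ≤ ((K:ℝ) * ε^2) * ((K:ℝ) * (M:ℝ)^2 / 4) :=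
      mul_le_mul_of_nonneg_right hKε (by positivity)
    have t3 : (16 * (q:ℝ) * K) * ((K:ℝ)^2 * M / 8) ≤ ((M:ℝ) * ε^2) * ((K:ℝ)^2 * M / 8) :=
      mul_le_mul_of_nonneg_right hM2 (by positivity)
    have t4 : (16 * (K:ℝ)^2) * ((K:ℝ)^2 / 8) ≤ ((M:ℝ)^2 * ε^2) * ((K:ℝ)^2 / 8) :=
      mul_le_mul_of_nonneg_right hM3 (by positivity)
    have hX : (0:ℝ) < ε^2 * (K:ℝ)^2 * (M:ℝ)^2 := by positivity
    have hKSM2 : ((K:ℝ) * SM) ^ 2 = (K:ℝ)^2 * SM^2 := by ring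
    rw [hKSM2] at hchain
    rw [hNM] at hchain
    -- expand ε₁ * (q * M) = (ε₁ * q) * M = (ε^2/16) * M
    have hexp2 : ε₁ * ((q:ℝ) * M) = ε^2 / 16 * M := by
      rw [← mul_assoc, hε₁q]
    rw [hexp2] at hchain
    have hlt : (K:ℝ)^2 * SM^2 < (K:ℝ)^2 * (ε^2 * (M:ℝ)^2) := by
      nlinarith [hchain, t1, t3, t4, hX]
    exact lt_of_mul_lt_mul_left hlt (le_of_lt hKpos)
  -- conclude
  have habsSM : |SM| < ε * M := by
    have h1 : SM ^ 2 < (ε * M) ^ 2 := by nlinarith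
    have h2 : |SM| ^ 2 < (ε * M) ^ 2 := by rw [sq_abs]; exact h1
    exact lt_of_pow_lt_pow_left₀ 2 (by positivity) h2
  rw [dist_zero_right, Real.norm_eq_abs, abs_div, Nat.abs_cast, div_lt_iff₀ hMpos]
  linarith

end NormalAux

theorem normal_set_contains_xy_eq_zsq (A : Set ℕ) (hA : IsNormalSet A) :
    ∃ x ∈ A, ∃ y ∈ A, ∃ z ∈ A, x ≠ y ∧ x * y = z ^ 2 := by
  classical
  open NormalAux Finset Filter in
  obtain ⟨c, hc1, hcC⟩ : ∃ c : ℕ, 1 ≤ c ∧ cornersTheoremBound ((1:ℝ)/3/3) ≤ c :=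
    ⟨max (cornersTheoremBound ((1:ℝ)/3/3)) 1, le_max_right _ _, le_max_left _ _⟩
  have hcR : (1:ℝ) ≤ c := by exact_mod_cast hc1
  -- pigeonhole: find m with many n ∈ range c such that 2^n * m ∈ A
  obtain ⟨m, hm1, hmcount⟩ : ∃ m : ℕ, 1 ≤ m ∧
      (1/3 : ℝ) * c ≤ (((Finset.range c).filter fun n => 2^n * m ∈ A).card : ℝ) := by
    have h1 : Tendsto (fun M : ℕ =>
        ∑ n ∈ range c, (∑ m ∈ Icc 1 M, Fn A (2^n * m)) / M) atTop (nhds 0) := by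
      have h := tendsto_finset_sum (range c)
        (fun n (_ : n ∈ range c) => wall A hA (2^n) Nat.one_le_two_pow)
      simpa using h
    have hpos : (0:ℝ) < (c:ℝ)/12 := by linarith
    have hev : ∀ᶠ M : ℕ in atTop,
        (∑ n ∈ range c, (∑ m ∈ Icc 1 M, Fn A (2^n * m)) / M) ∈ Metric.ball (0:ℝ) ((c:ℝ)/12) :=
      h1 (Metric.ball_mem_nhds (0:ℝ) hpos)
    obtain ⟨M, hMball, hM1⟩ := (hev.and (eventually_ge_atTop 1)).exists
    simp only [Set.mem_preimage, Metric.mem_ball, dist_zero_right, Real.norm_eq_abs] at hMball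
    have hMR : (1:ℝ) ≤ M := by exact_mod_cast hM1
    have hMpos : (0:ℝ) < M := by linarith
    rw [← Finset.sum_div] at hMball
    have hub : -((c:ℝ)/12) * M < ∑ n ∈ range c, ∑ m ∈ Icc 1 M, Fn A (2^n * m) := by
      have h2 := (abs_lt.1 hMball).1
      rw [lt_div_iff₀ hMpos] at h2
      linarith
    rw [Finset.sum_comm] at hub
    have hinner : ∀ m : ℕ, (∑ n ∈ range c, Fn A (2^n * m))
        = (((range c).filter fun n => 2^n * m ∈ A).card : ℝ) - c/2 := by
      intro m
      rw [Finset.sum_congr rfl fun n _ => Fn_eq A (2^n * m)]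
      rw [Finset.sum_sub_distrib, Finset.sum_boole, Finset.sum_const, card_range, nsmul_eq_mul]
      ring
    rw [Finset.sum_congr rfl fun m _ => hinner m] at hub
    by_contra hcon
    push_neg at hcon
    have hlt : (∑ m ∈ Icc 1 M,
          ((((range c).filter fun n => 2^n * m ∈ A).card : ℝ) - c/2))
        < ∑ _m ∈ Icc 1 M, ((1/3:ℝ)*c - c/2) := by
      apply Finset.sum_lt_sum_of_nonempty (Finset.nonempty_Icc.2 hM1)
      intro i hi
      have := hcon i (Finset.mem_Icc.1 hi).1
      linarith
    rw [Finset.sum_const, Nat.card_Icc, nsmul_eq_mul] at hlt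
    have hcard : ((M + 1 - 1 : ℕ) : ℝ) = M := by
      rw [Nat.add_sub_cancel]
    rw [hcard] at hlt
    nlinarith
  -- Roth
  set Fm : Finset ℕ := (Finset.range c).filter fun n => 2^n * m ∈ A with hFm
  have hsub : Fm ⊆ Finset.range c := Finset.filter_subset _ _
  have hnotAP : ¬ ThreeAPFree (Fm : Set ℕ) :=
    roth_3ap_theorem_nat ((1:ℝ)/3) (by norm_num) hcC Fm hsub hmcount
  have hex : ∃ a ∈ Fm, ∃ b ∈ Fm, ∃ c' ∈ Fm, a + c' = b + b ∧ a ≠ b := by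
    by_contra hcon
    push_neg at hcon
    exact hnotAP fun a ha b hb c' hc' habc =>
      by_contra fun hne => hne (hcon a ha b hb c' hc' habc)
  obtain ⟨a, ha, b, hb, c', hc', habc, hne⟩ := hex
  have hmemA : ∀ n ∈ Fm, 2^n * m ∈ A := fun n hn => (Finset.mem_filter.1 hn).2
  have hac : a ≠ c' := by
    intro h
    subst h
    exact hne (by omega)
  refine ⟨2^a * m, hmemA a ha, 2^c' * m, hmemA c' hc', 2^b * m, hmemA b hb, ?_, ?_⟩
  · intro h
    have hm0 : 0 < m := hm1
    have h2 : (2:ℕ)^a = 2^c' := by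
      have := Nat.eq_of_mul_eq_mul_right hm0 h
      exact this
    exact hac (Nat.pow_right_injective (by norm_num) h2)
  · calc (2^a * m) * (2^c' * m) = 2^(a + c') * (m * m) := by rw [pow_add]; ring
      _ = 2^(b + b) * (m * m) := by rw [habc]
      _ = (2^b * m)^2 := by rw [pow_add]; ring
end

section
/- Every normal set A ⊆ ℕ contains elements x, y such that x² + y² is a perfect square. -/
open scoped Classical

open Filter Finset

namespace NormalAux

noncomputable def g (A : Set ℕ) (n : ℕ) : ℝ := if n ∈ A then 1 else 0
noncomputable def f (A : Set ℕ) (n : ℕ) : ℝ := g A n - 1/2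

lemma f_abs (A : Set ℕ) (n : ℕ) : |f A n| ≤ 1/2 := by
  unfold f g
  have : |(1:ℝ)/2| = 1/2 := abs_of_nonneg (by norm_num)
  split <;> simp [abs_sub_comm, this] <;> norm_num [abs_of_nonneg]

lemma f_sq (A : Set ℕ) (n : ℕ) : f A n * f A n = 1/4 := by
  unfold f g; split <;> norm_num

/-- Shifting a sequence doesn't change its Cesàro average. -/
lemma shift_avg (g : ℕ → ℝ) (s : ℕ) (c : ℝ)
    (h : Tendsto (fun M : ℕ => (∑ m ∈ Ioc 0 M, g m) / M) atTop (nhds c)) :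
    Tendsto (fun M : ℕ => (∑ m ∈ Ioc 0 M, g (m + s)) / M) atTop (nhds c) := by
  have key : ∀ M : ℕ, ∑ m ∈ Ioc 0 M, g (m + s)
      = (∑ m ∈ Ioc 0 (M + s), g m) - ∑ m ∈ Ioc 0 s, g m := by
    intro M
    have h1 : ∑ m ∈ Ioc 0 M, g (m + s) = ∑ m ∈ Ioc s (M + s), g m := by
      have : Ioc s (M + s) = (Ioc 0 M).map (addRightEmbedding s) := by
        rw [Finset.map_add_right_Ioc]; simp
      rw [this, Finset.sum_map]; rfl
    have h2 := Finset.sum_Ioc_consecutive g (Nat.zero_le s) (Nat.le_add_left s M)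
    rw [h1]; linarith
  have hmain : Tendsto (fun M : ℕ =>
      (∑ m ∈ Ioc 0 (M + s), g m) / (M + s) * ((M + s) / M)
        - (∑ m ∈ Ioc 0 s, g m) * (1 / M)) atTop (nhds c) := by
    have t1 : Tendsto (fun M : ℕ => (∑ m ∈ Ioc 0 (M + s), g m) / ((M : ℝ) + s)) atTop (nhds c) := by
      have := h.comp (tendsto_add_atTop_nat s)
      apply this.congr
      intro M
      simp [Function.comp]
    have t2 : Tendsto (fun M : ℕ => ((M : ℝ) + s) / M) atTop (nhds 1) := by
      have h0 : Tendsto (fun M : ℕ => (s : ℝ) / M) atTop (nhds 0) :=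
        tendsto_const_div_atTop_nhds_zero_nat (s : ℝ)
      have : Tendsto (fun M : ℕ => 1 + (s : ℝ) / M) atTop (nhds (1 + 0)) :=
        tendsto_const_nhds.add h0
      rw [add_zero] at this
      apply this.congr'
      filter_upwards [eventually_gt_atTop 0] with M hM
      have : (M : ℝ) ≠ 0 := Nat.cast_ne_zero.2 hM.ne'
      field_simp
    have t3 : Tendsto (fun M : ℕ => (∑ m ∈ Ioc 0 s, g m) * (1 / (M : ℝ))) atTop (nhds 0) := by
      have := tendsto_const_div_atTop_nhds_zero_nat (∑ m ∈ Ioc 0 s, g m)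
      simpa [div_eq_mul_inv, mul_comm] using this
    have h4 := (t1.mul t2).sub t3
    rw [mul_one, sub_zero] at h4
    exact h4
  apply hmain.congr'
  filter_upwards [eventually_gt_atTop 0] with M hM
  have hM0 : (M : ℝ) ≠ 0 := Nat.cast_ne_zero.2 hM.ne'
  have hMs : (M : ℝ) + s ≠ 0 := by positivity
  rw [key M]
  push_cast
  field_simp
  try ring

section Pattern

variable {A : Set ℕ}

def IsNormalSet' (A : Set ℕ) : Prop :=
  ∀ w : List Bool, w ≠ [] →
    Filter.Tendsto
      (fun N : ℕ =>
        (((Finset.Icc 1 N).filter fun n =>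
            ∀ i : Fin w.length, (n + (i : ℕ) ∈ A ↔ w.get i = true)).card : ℝ) / N)
      Filter.atTop (nhds (1 / 2 ^ w.length))

lemma pattern_density (hA : IsNormalSet' A) :
    ∀ (k L : ℕ) (σ : Fin L → Option Bool),
      (Finset.univ.filter fun i => σ i = none).card = k →
      Tendsto (fun N : ℕ =>
          (((Finset.Ioc 0 N).filter fun n =>
              ∀ (i : Fin L) (b : Bool), σ i = some b → (n + (i : ℕ) ∈ A ↔ b = true)).card : ℝ) / N)
        atTop (nhds ((1/2 : ℝ) ^ (L - k))) := by
  intro k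
  induction k with
  | zero =>
    intro L σ hσ
    have hall : ∀ i, ∃ b, σ i = some b := by
      intro i
      cases h : σ i with
      | none =>
        exfalso
        have hmem : i ∈ Finset.univ.filter fun i => σ i = none := by simp [h]
        rw [Finset.card_eq_zero] at hσ
        simp [hσ] at hmem
      | some b => exact ⟨b, rfl⟩
    rcases Nat.eq_zero_or_pos L with hL | hL
    · subst hL
      have : ∀ N : ℕ, ((Finset.Ioc 0 N).filter fun n =>
          ∀ (i : Fin 0) (b : Bool), σ i = some b → (n + (i : ℕ) ∈ A ↔ b = true)) = Finset.Ioc 0 N := by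
        intro N
        apply Finset.filter_true_of_mem
        intro n _ i
        exact i.elim0
      simp only [this, Nat.card_Ioc, Nat.sub_zero, pow_zero]
      apply tendsto_const_nhds.congr'
      filter_upwards [eventually_gt_atTop 0] with N hN
      rw [div_self (by exact_mod_cast hN.ne')]
    · have hiff : ∀ n : ℕ,
          (∀ i : Fin (List.ofFn fun i => (σ i).getD false).length,
              (n + (i : ℕ) ∈ A ↔ (List.ofFn fun i => (σ i).getD false).get i = true))
          ↔ (∀ (i : Fin L) (b : Bool), σ i = some b → (n + (i : ℕ) ∈ A ↔ b = true)) := by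
        intro n
        simp only [Fin.forall_iff, List.length_ofFn, List.get_ofFn]
        constructor
        · intro h m hm b hb
          have := h m hm
          simp only [Fin.cast_mk, Option.getD] at this
          rw [hb] at this
          simpa using this
        · intro h m hm
          obtain ⟨b, hb⟩ := hall ⟨m, hm⟩
          have := h m hm b hb
          simp only [Fin.cast_mk]
          show n + m ∈ A ↔ (σ ⟨m, hm⟩).getD false = true
          rw [hb]
          simp only [Option.getD_some]
          rcases b with _ | _ <;> simp_all
      have hwne : (List.ofFn fun i : Fin L => (σ i).getD false) ≠ [] := by
        intro hcon
        have := congrArg List.length hcon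
        simp at this
        omega
      have key := hA _ hwne
      have hlen : (List.ofFn fun i : Fin L => (σ i).getD false).length = L := List.length_ofFn
      have hlim : (1 / 2 ^ (List.ofFn fun i : Fin L => (σ i).getD false).length : ℝ)
          = (1/2 : ℝ) ^ (L - 0) := by
        rw [hlen, Nat.sub_zero, div_pow, one_pow]
      rw [← hlim]
      apply key.congr
      intro N
      rw [show Finset.Icc 1 N = Finset.Ioc 0 N from Finset.Icc_add_one_left_eq_Ioc 0 N,
        Finset.filter_congr (fun n _ => hiff n)]
  | succ k ih =>
    intro L σ hσ
    have hex : ∃ j, σ j = none := by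
      by_contra hcon
      push_neg at hcon
      have : (Finset.univ.filter fun i => σ i = none) = ∅ := by
        apply Finset.filter_false_of_mem
        intro i _
        exact hcon i
      rw [this] at hσ
      simp at hσ
    obtain ⟨j, hj⟩ := hex
    set σt := Function.update σ j (some true) with hσt
    set σf := Function.update σ j (some false) with hσf
    have hcardt : (Finset.univ.filter fun i => σt i = none).card = k := by
      have : (Finset.univ.filter fun i => σt i = none)
          = (Finset.univ.filter fun i => σ i = none).erase j := by
        ext i
        simp only [Finset.mem_filter, Finset.mem_erase, Finset.mem_univ, true_and]
        rw [hσt]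
        rcases eq_or_ne i j with h | h
        · subst h; simp [Function.update_self]
        · simp [Function.update_of_ne h, h]
      rw [this, Finset.card_erase_of_mem (by simp [hj]), hσ]
      omega
    have hcardf : (Finset.univ.filter fun i => σf i = none).card = k := by
      have : (Finset.univ.filter fun i => σf i = none)
          = (Finset.univ.filter fun i => σ i = none).erase j := by
        ext i
        simp only [Finset.mem_filter, Finset.mem_erase, Finset.mem_univ, true_and]
        rw [hσf]
        rcases eq_or_ne i j with h | h
        · subst h; simp [Function.update_self]
        · simp [Function.update_of_ne h, h]
      rw [this, Finset.card_erase_of_mem (by simp [hj]), hσ]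
      omega
    have hkL : k + 1 ≤ L := by
      rw [← hσ]
      calc (Finset.univ.filter fun i => σ i = none).card ≤ Finset.univ.card :=
            Finset.card_filter_le _ _
        _ = L := by rw [Finset.card_univ, Fintype.card_fin]
    have hsplit : ∀ N : ℕ, ((Finset.Ioc 0 N).filter fun n =>
          ∀ (i : Fin L) (b : Bool), σ i = some b → (n + (i : ℕ) ∈ A ↔ b = true)).card
        = ((Finset.Ioc 0 N).filter fun n =>
            ∀ (i : Fin L) (b : Bool), σt i = some b → (n + (i : ℕ) ∈ A ↔ b = true)).card
          + ((Finset.Ioc 0 N).filter fun n =>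
            ∀ (i : Fin L) (b : Bool), σf i = some b → (n + (i : ℕ) ∈ A ↔ b = true)).card := by
      intro N
      have hunion : ((Finset.Ioc 0 N).filter fun n =>
            ∀ (i : Fin L) (b : Bool), σ i = some b → (n + (i : ℕ) ∈ A ↔ b = true))
          = ((Finset.Ioc 0 N).filter fun n =>
              ∀ (i : Fin L) (b : Bool), σt i = some b → (n + (i : ℕ) ∈ A ↔ b = true))
            ∪ ((Finset.Ioc 0 N).filter fun n =>
              ∀ (i : Fin L) (b : Bool), σf i = some b → (n + (i : ℕ) ∈ A ↔ b = true)) := by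
        ext n
        simp only [Finset.mem_filter, Finset.mem_union]
        constructor
        · rintro ⟨hn, hP⟩
          by_cases hj' : n + (j : ℕ) ∈ A
          · left
            refine ⟨hn, ?_⟩
            intro i b hb
            rcases eq_or_ne i j with h | h
            · subst h
              rw [hσt, Function.update_self] at hb
              obtain rfl : b = true := by injection hb with h'; exact h'.symm
              simpa using hj'
            · rw [hσt, Function.update_of_ne h] at hb
              exact hP i b hb
          · right
            refine ⟨hn, ?_⟩
            intro i b hb
            rcases eq_or_ne i j with h | h
            · subst h
              rw [hσf, Function.update_self] at hb
              obtain rfl : b = false := by injection hb with h'; exact h'.symm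
              simpa using hj'
            · rw [hσf, Function.update_of_ne h] at hb
              exact hP i b hb
        · rintro (⟨hn, hP⟩ | ⟨hn, hP⟩) <;> refine ⟨hn, ?_⟩ <;> intro i b hb
          · have h : i ≠ j := by
              intro hcon; subst hcon; rw [hj] at hb; exact absurd hb (by simp)
            exact hP i b (by rw [hσt, Function.update_of_ne h]; exact hb)
          · have h : i ≠ j := by
              intro hcon; subst hcon; rw [hj] at hb; exact absurd hb (by simp)
            exact hP i b (by rw [hσf, Function.update_of_ne h]; exact hb)
      have hdisj : Disjoint
          ((Finset.Ioc 0 N).filter fun n =>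
              ∀ (i : Fin L) (b : Bool), σt i = some b → (n + (i : ℕ) ∈ A ↔ b = true))
          ((Finset.Ioc 0 N).filter fun n =>
              ∀ (i : Fin L) (b : Bool), σf i = some b → (n + (i : ℕ) ∈ A ↔ b = true)) := by
        rw [Finset.disjoint_filter]
        intro n _ hPt hPf
        have h1 := hPt j true (by rw [hσt, Function.update_self])
        have h2 := hPf j false (by rw [hσf, Function.update_self])
        simp at h1 h2
        exact h2 h1
      rw [hunion, Finset.card_union_of_disjoint hdisj]
    have ht := ih L σt hcardt
    have hf := ih L σf hcardf
    have hexp : (1/2:ℝ)^(L-k) + (1/2:ℝ)^(L-k) = (1/2:ℝ)^(L-(k+1)) := by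
      have h : L - k = (L - (k+1)) + 1 := by omega
      rw [h, pow_succ]
      ring
    rw [← hexp]
    apply (ht.add hf).congr
    intro N
    rw [hsplit N]
    push_cast
    ring

lemma mem_density (hA : IsNormalSet' A) :
    Tendsto (fun N : ℕ => ((((Finset.Ioc 0 N).filter fun n => n ∈ A).card : ℝ)) / N)
      atTop (nhds (1/2)) := by
  have h := pattern_density hA 0 1 (fun _ => some true) (by simp)
  have he : ((1/2:ℝ)) ^ (1 - 0) = 1/2 := by norm_num
  rw [he] at h
  apply h.congr
  intro N
  rw [Finset.filter_congr (q := fun n => n ∈ A) (fun n _ => ?_)]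
  constructor
  · intro h'
    have := h' 0 true rfl
    simpa using this
  · intro hn i b hb
    obtain rfl : b = true := by injection hb with h'; exact h'.symm
    have hi : (i : ℕ) = 0 := by have := i.isLt; omega
    rw [hi]
    simpa using hn

lemma pair_density (hA : IsNormalSet' A) (d : ℕ) (hd : d ≠ 0) :
    Tendsto (fun N : ℕ => ((((Finset.Ioc 0 N).filter fun n => n ∈ A ∧ n + d ∈ A).card : ℝ)) / N)
      atTop (nhds (1/4)) := by
  classical
  have hddlt : d < d + 1 := Nat.lt_succ_self d
  set σ : Fin (d+1) → Option Bool :=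
    fun i => if (i : ℕ) = 0 then some true else if (i : ℕ) = d then some true else none with hσdef
  have hσ0 : σ ⟨0, Nat.succ_pos d⟩ = some true := by rw [hσdef]; simp
  have hσd : σ ⟨d, hddlt⟩ = some true := by rw [hσdef]; simp [hd]
  have hσnone : ∀ i : Fin (d+1), (i : ℕ) ≠ 0 → (i : ℕ) ≠ d → σ i = none := by
    intro i h0 h1
    rw [hσdef]
    simp [h0, h1]
  have hk : (Finset.univ.filter fun i : Fin (d+1) => σ i = none).card = d - 1 := by
    have hpairset : (Finset.univ.filter fun i : Fin (d+1) => ¬ σ i = none)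
        = {⟨0, Nat.succ_pos d⟩, ⟨d, hddlt⟩} := by
      ext i
      simp only [Finset.mem_filter, Finset.mem_univ, true_and, Finset.mem_insert,
        Finset.mem_singleton]
      constructor
      · intro h
        by_cases h0 : (i : ℕ) = 0
        · left; exact Fin.ext h0
        · by_cases h1 : (i : ℕ) = d
          · right; exact Fin.ext h1
          · exact absurd (hσnone i h0 h1) h
      · rintro (rfl | rfl) <;> simp [hσdef, hd]
    have htot := Finset.card_filter_add_card_filter_not
      (s := (Finset.univ : Finset (Fin (d+1)))) (p := fun i => σ i = none)
    rw [hpairset] at htot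
    have hcard2 : ({⟨0, Nat.succ_pos d⟩, ⟨d, hddlt⟩} : Finset (Fin (d+1))).card = 2 := by
      rw [Finset.card_insert_of_notMem, Finset.card_singleton]
      simp only [Finset.mem_singleton]
      intro hcon
      have := congrArg Fin.val hcon
      simp at this
      omega
    rw [hcard2, Finset.card_univ, Fintype.card_fin] at htot
    omega
  have h := pattern_density hA (d-1) (d+1) σ hk
  have he : ((1/2:ℝ)) ^ ((d+1) - (d-1)) = 1/4 := by
    have : (d+1) - (d-1) = 2 := by omega
    rw [this]
    norm_num
  rw [he] at h
  apply h.congr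
  intro N
  rw [Finset.filter_congr (q := fun n => n ∈ A ∧ n + d ∈ A) (fun n _ => ?_)]
  constructor
  · intro h'
    constructor
    · have := h' ⟨0, Nat.succ_pos d⟩ true hσ0
      simpa using this
    · have := h' ⟨d, hddlt⟩ true hσd
      simpa using this
  · rintro ⟨h1, h2⟩ i b hb
    by_cases h0 : (i : ℕ) = 0
    · have : σ i = some true := by rw [hσdef]; simp [h0]
      rw [this] at hb
      obtain rfl : b = true := by injection hb with h'; exact h'.symm
      rw [h0]
      simpa using h1
    · by_cases hd1 : (i : ℕ) = d
      · have : σ i = some true := by rw [hσdef]; simp [h0, hd1]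
        rw [this] at hb
        obtain rfl : b = true := by injection hb with h'; exact h'.symm
        rw [hd1]
        simpa using h2
      · rw [hσnone i h0 hd1] at hb
        exact absurd hb (by simp)

lemma avg_g (hA : IsNormalSet' A) :
    Tendsto (fun N : ℕ => (∑ m ∈ Ioc 0 N, g A m) / N) atTop (nhds (1/2)) := by
  have h := mem_density hA
  apply h.congr
  intro N
  congr 1
  rw [← Finset.sum_boole]
  rfl

lemma avg_gg (hA : IsNormalSet' A) (d : ℕ) (hd : d ≠ 0) :
    Tendsto (fun N : ℕ => (∑ m ∈ Ioc 0 N, g A m * g A (m + d)) / N) atTop (nhds (1/4)) := by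
  have h := pair_density hA d hd
  apply h.congr
  intro N
  congr 1
  rw [← Finset.sum_boole]
  apply Finset.sum_congr rfl
  intro m _
  unfold g
  by_cases h1 : m ∈ A <;> by_cases h2 : m + d ∈ A <;> simp [h1, h2]

lemma t4 : Tendsto (fun M : ℕ => ((M : ℝ)/4)/M) atTop (nhds (1/4)) := by
  apply tendsto_const_nhds.congr'
  filter_upwards [eventually_gt_atTop 0] with M hM
  have hM0 : (M:ℝ) ≠ 0 := Nat.cast_ne_zero.2 hM.ne'
  field_simp

lemma corr (hA : IsNormalSet' A) (d : ℕ) :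
    Tendsto (fun M : ℕ => (∑ m ∈ Ioc 0 M, f A m * f A (m + d)) / M) atTop
      (nhds (if d = 0 then 1/4 else 0)) := by
  rcases eq_or_ne d 0 with rfl | hd
  · rw [if_pos rfl]
    have hsum : ∀ M : ℕ, (∑ m ∈ Ioc 0 M, f A m * f A (m + 0)) = (M : ℝ) / 4 := by
      intro M
      have hpt : ∀ m ∈ Ioc 0 M, f A m * f A (m + 0) = 1/4 := by
        intro m _
        rw [Nat.add_zero]
        exact f_sq A m
      rw [Finset.sum_congr rfl hpt, Finset.sum_const, Nat.card_Ioc, Nat.sub_zero]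
      push_cast
      ring
    apply t4.congr
    intro M
    rw [hsum M]
  · rw [if_neg hd]
    have key : ∀ M : ℕ, (∑ m ∈ Ioc 0 M, f A m * f A (m + d))
        = (∑ m ∈ Ioc 0 M, g A m * g A (m + d)) - (1/2) * (∑ m ∈ Ioc 0 M, g A m)
          - (1/2) * (∑ m ∈ Ioc 0 M, g A (m + d)) + (M : ℝ) / 4 := by
      intro M
      rw [Finset.mul_sum, Finset.mul_sum, ← Finset.sum_sub_distrib, ← Finset.sum_sub_distrib]
      have h4 : (M:ℝ)/4 = ∑ m ∈ Ioc 0 M, (1/4 : ℝ) := by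
        rw [Finset.sum_const, Nat.card_Ioc, Nat.sub_zero]; push_cast; ring
      rw [h4, ← Finset.sum_add_distrib]
      apply Finset.sum_congr rfl
      intro m _
      unfold f
      ring
    have t1 := avg_gg hA d hd
    have t2 := avg_g hA
    have t3 := shift_avg (g A) d _ t2
    have comb := ((t1.sub (t2.const_mul (1/2))).sub (t3.const_mul (1/2))).add t4
    have hval : (1/4 : ℝ) - (1/2) * (1/2) - (1/2) * (1/2) + 1/4 = 0 := by norm_num
    rw [hval] at comb
    apply comb.congr
    intro M
    rw [key M]
    ring

lemma pair_corr_le (hA : IsNormalSet' A) (a : ℕ) (ha : a ≠ 0) (k l : ℕ) (hkl : k ≤ l) :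
    Tendsto (fun M : ℕ => (∑ m ∈ Ioc 0 M, f A (m + a*k) * f A (m + a*l)) / M) atTop
      (nhds (if k = l then 1/4 else 0)) := by
  have hmul : a * k + a * (l - k) = a * l := by
    rw [← Nat.mul_add]
    congr 1
    omega
  have hpt : ∀ m : ℕ, f A (m + a*k) * f A (m + a*l)
      = (fun x => f A x * f A (x + a*(l-k))) (m + a*k) := by
    intro m
    simp only []
    congr 2
    omega
  have base := corr hA (a*(l-k))
  have hshift := shift_avg (fun x => f A x * f A (x + a*(l-k))) (a*k) _ base
  have hval : (if a*(l-k) = 0 then (1/4:ℝ) else 0) = if k = l then 1/4 else 0 := by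
    by_cases h : k = l
    · have : a * (l - k) = 0 := by subst h; simp
      simp [h, this]
    · have : a * (l - k) ≠ 0 := by
        intro hcon
        rcases Nat.mul_eq_zero.1 hcon with h' | h'
        · exact ha h'
        · omega
      simp [h, this]
  rw [hval] at hshift
  apply hshift.congr
  intro M
  congr 1
  apply Finset.sum_congr rfl
  intro m _
  exact (hpt m).symm

lemma pair_corr (hA : IsNormalSet' A) (a : ℕ) (ha : a ≠ 0) (k l : ℕ) :
    Tendsto (fun M : ℕ => (∑ m ∈ Ioc 0 M, f A (m + a*k) * f A (m + a*l)) / M) atTop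
      (nhds (if k = l then 1/4 else 0)) := by
  rcases le_total k l with h | h
  · exact pair_corr_le hA a ha k l h
  · have := pair_corr_le hA a ha l k h
    have heq : (if l = k then (1/4:ℝ) else 0) = (if k = l then 1/4 else 0) := by
      simp [eq_comm]
    rw [heq] at this
    apply this.congr
    intro M
    congr 1
    apply Finset.sum_congr rfl
    intro m _
    ring

lemma avg_Rsq (hA : IsNormalSet' A) (a : ℕ) (ha : a ≠ 0) (K : ℕ) :
    Tendsto (fun M : ℕ => (∑ m ∈ Ioc 0 M, (∑ k ∈ range K, f A (m + a*k))^2) / M) atTop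
      (nhds (K / 4)) := by
  have hexpand : ∀ M : ℕ, (∑ m ∈ Ioc 0 M, (∑ k ∈ range K, f A (m + a*k))^2)
      = ∑ k ∈ range K, ∑ l ∈ range K, ∑ m ∈ Ioc 0 M, f A (m + a*k) * f A (m + a*l) := by
    intro M
    have h1 : ∀ m ∈ Ioc 0 M, (∑ k ∈ range K, f A (m + a*k))^2
        = ∑ k ∈ range K, ∑ l ∈ range K, f A (m+a*k) * f A (m+a*l) := by
      intro m _
      rw [sq, Finset.sum_mul_sum]
    rw [Finset.sum_congr rfl h1, Finset.sum_comm]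
    apply Finset.sum_congr rfl
    intro k _
    rw [Finset.sum_comm]
  have hlim := tendsto_finset_sum (range K)
    (fun k (_ : k ∈ range K) => tendsto_finset_sum (range K)
      (fun l (_ : l ∈ range K) => pair_corr hA a ha k l))
  have hval : (∑ k ∈ range K, ∑ l ∈ range K, (if k = l then (1/4:ℝ) else 0)) = K/4 := by
    have hinner : ∀ k ∈ range K, (∑ l ∈ range K, if k = l then (1/4:ℝ) else 0) = 1/4 := by
      intro k hk
      rw [Finset.sum_ite_eq]
      simp [hk]
    rw [Finset.sum_congr rfl hinner, Finset.sum_const, Finset.card_range]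
    push_cast
    ring
  rw [hval] at hlim
  apply hlim.congr
  intro M
  rw [hexpand M, Finset.sum_div]
  apply Finset.sum_congr rfl
  intro k _
  rw [Finset.sum_div]

set_option maxHeartbeats 1000000 in
lemma main_avg (hA : IsNormalSet' A) (a : ℕ) (ha : a ≠ 0) :
    Tendsto (fun N : ℕ => (∑ t ∈ Ioc 0 N, f A (a*t)) / N) atTop (nhds 0) := by
  rw [NormedAddCommGroup.tendsto_nhds_zero]
  intro ε hε
  set K : ℕ := ⌈(2*a : ℝ)/ε^2⌉₊ + 1 with hKdef
  have hK1 : 1 ≤ K := Nat.le_add_left 1 _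
  have hKpos : (0:ℝ) < K := by exact_mod_cast hK1
  have hKgt : (2*a : ℝ)/ε^2 < K := by
    calc (2*a:ℝ)/ε^2 ≤ ⌈(2*a:ℝ)/ε^2⌉₊ := Nat.le_ceil _
    _ < K := by rw [hKdef]; push_cast; linarith
  have haK : (a:ℝ) < K * ε^2 / 2 := by
    rw [div_lt_iff₀ (by positivity)] at hKgt
    linarith
  -- eventual bound on the average of R²
  have hRsq := avg_Rsq hA a ha K
  have hev : ∀ᶠ M : ℕ in atTop,
      (∑ m ∈ Ioc 0 M, (∑ k ∈ range K, f A (m + a*k))^2) ≤ M * (K/2) := by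
    have hlt : (K:ℝ)/4 < K/2 := by linarith
    have h2 := hRsq.eventually_lt_const hlt
    filter_upwards [h2, eventually_gt_atTop 0] with M hM hM0
    have hMpos : (0:ℝ) < M := by exact_mod_cast hM0
    have := (div_lt_iff₀ hMpos).1 hM
    linarith
  rw [eventually_atTop] at hev
  obtain ⟨M₀, hM₀⟩ := hev
  have hN4 : ∀ᶠ N : ℕ in atTop, (K:ℝ) ≤ ε * N / 4 := by
    have : Tendsto (fun N : ℕ => ε * (N:ℝ) / 4) atTop atTop := by
      apply Tendsto.atTop_div_const (by norm_num)
      exact (tendsto_natCast_atTop_atTop).const_mul_atTop hε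
    exact this.eventually_ge_atTop _
  filter_upwards [eventually_ge_atTop K, eventually_ge_atTop M₀,
    eventually_ge_atTop 1, hN4] with N hNK hNM hN1 hNε
  have hNpos : (0:ℝ) < N := by exact_mod_cast hN1
  set F : ℕ → ℝ := fun u => f A (a*u) with hF
  set S : ℝ := ∑ t ∈ Ioc 0 N, F t with hS
  set R : ℕ → ℝ := fun m => ∑ k ∈ range K, f A (m + a*k) with hR
  -- Step A : |K•S - ∑ R(at)| ≤ K²
  have hsum_small : ∀ s : Finset ℕ, |∑ u ∈ s, F u| ≤ s.card * (1/2) := by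
    intro s
    calc |∑ u ∈ s, F u| ≤ ∑ u ∈ s, |F u| := Finset.abs_sum_le_sum_abs _ _
      _ ≤ s.card * (1/2) := by
        rw [← nsmul_eq_mul]
        apply Finset.sum_le_card_nsmul
        intro x _
        exact f_abs A (a*x)
  have hstepA : |(K:ℝ) * S - ∑ t ∈ Ioc 0 N, R (a*t)| ≤ K^2 := by
    have h1 : ∑ t ∈ Ioc 0 N, R (a*t) = ∑ k ∈ range K, ∑ t ∈ Ioc 0 N, F (t + k) := by
      rw [Finset.sum_comm]
      apply Finset.sum_congr rfl
      intro t _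
      apply Finset.sum_congr rfl
      intro k _
      rw [hF]
      congr 1
      ring
    have h2 : ∀ k, ∑ t ∈ Ioc 0 N, F (t + k)
        = S + (∑ u ∈ Ioc N (N+k), F u) - ∑ u ∈ Ioc 0 k, F u := by
      intro k
      have hmap : ∑ t ∈ Ioc 0 N, F (t + k) = ∑ u ∈ Ioc k (N+k), F u := by
        have : Ioc k (N + k) = (Ioc 0 N).map (addRightEmbedding k) := by
          rw [Finset.map_add_right_Ioc]; simp
        rw [this, Finset.sum_map]
        rfl
      have hc1 := Finset.sum_Ioc_consecutive F (Nat.zero_le k) (Nat.le_add_left k N)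
      have hc2 := Finset.sum_Ioc_consecutive F (Nat.zero_le N) (Nat.le_add_right N k)
      rw [hmap, hS]
      linarith
    rw [h1]
    have h3 : ∑ k ∈ range K, ∑ t ∈ Ioc 0 N, F (t + k)
        = (K:ℝ) * S + ∑ k ∈ range K, ((∑ u ∈ Ioc N (N+k), F u) - ∑ u ∈ Ioc 0 k, F u) := by
      have hpt : ∀ k ∈ range K, ∑ t ∈ Ioc 0 N, F (t + k)
          = S + ((∑ u ∈ Ioc N (N+k), F u) - ∑ u ∈ Ioc 0 k, F u) := by
        intro k _
        rw [h2 k]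
        ring
      rw [Finset.sum_congr rfl hpt, Finset.sum_add_distrib, Finset.sum_const,
        Finset.card_range, nsmul_eq_mul]
    rw [h3]
    have h4 : |∑ k ∈ range K, ((∑ u ∈ Ioc N (N+k), F u) - ∑ u ∈ Ioc 0 k, F u)| ≤ K^2 := by
      calc |∑ k ∈ range K, ((∑ u ∈ Ioc N (N+k), F u) - ∑ u ∈ Ioc 0 k, F u)|
          ≤ ∑ k ∈ range K, |(∑ u ∈ Ioc N (N+k), F u) - ∑ u ∈ Ioc 0 k, F u| :=
            Finset.abs_sum_le_sum_abs _ _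
        _ ≤ ∑ k ∈ range K, (K:ℝ) := by
            apply Finset.sum_le_sum
            intro k hk
            have hb1 := hsum_small (Ioc N (N+k))
            have hb2 := hsum_small (Ioc 0 k)
            have hcard1 : (Ioc N (N+k)).card = k := by rw [Nat.card_Ioc]; omega
            have hcard2 : (Ioc 0 k).card = k := by rw [Nat.card_Ioc]; omega
            rw [hcard1] at hb1
            rw [hcard2] at hb2
            have hkK : (k:ℝ) ≤ K := by
              have := Finset.mem_range.1 hk
              exact_mod_cast this.le
            have := abs_sub (∑ u ∈ Ioc N (N+k), F u) (∑ u ∈ Ioc 0 k, F u)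
            calc |(∑ u ∈ Ioc N (N+k), F u) - ∑ u ∈ Ioc 0 k, F u|
                ≤ |∑ u ∈ Ioc N (N+k), F u| + |∑ u ∈ Ioc 0 k, F u| := abs_sub _ _
              _ ≤ (k:ℝ) * (1/2) + (k:ℝ) * (1/2) := add_le_add hb1 hb2
              _ ≤ (K:ℝ) := by linarith
        _ = (K:ℝ) * K := by rw [Finset.sum_const, Finset.card_range, nsmul_eq_mul]
        _ = (K:ℝ)^2 := by ring
    calc |(K:ℝ) * S - ((K:ℝ) * S + ∑ k ∈ range K, ((∑ u ∈ Ioc N (N+k), F u) - ∑ u ∈ Ioc 0 k, F u))|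
        = |∑ k ∈ range K, ((∑ u ∈ Ioc N (N+k), F u) - ∑ u ∈ Ioc 0 k, F u)| := by
          rw [← abs_neg]; congr 1; ring
      _ ≤ (K:ℝ)^2 := h4
  -- Step B/C : (∑ |R(at)|)² ≤ N * (aN * K/2)
  set X : ℝ := ∑ t ∈ Ioc 0 N, |R (a*t)| with hX
  have hXnonneg : 0 ≤ X := Finset.sum_nonneg fun t _ => abs_nonneg _
  have hstepB : X^2 ≤ N * ∑ t ∈ Ioc 0 N, (R (a*t))^2 := by
    have := sq_sum_le_card_mul_sum_sq (s := Ioc 0 N) (f := fun t => |R (a*t)|)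
    simp only [sq_abs] at this
    rw [hX]
    calc (∑ t ∈ Ioc 0 N, |R (a*t)|)^2 ≤ (Ioc 0 N).card * ∑ t ∈ Ioc 0 N, (R (a*t))^2 := this
      _ = N * ∑ t ∈ Ioc 0 N, (R (a*t))^2 := by rw [Nat.card_Ioc, Nat.sub_zero]
  have hstepC : ∑ t ∈ Ioc 0 N, (R (a*t))^2 ≤ (a*N : ℕ) * ((K:ℝ)/2) := by
    have himg : ∑ t ∈ Ioc 0 N, (R (a*t))^2 = ∑ m ∈ (Ioc 0 N).image (fun t => a*t), (R m)^2 := by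
      rw [Finset.sum_image]
      intro x _ y _ h
      exact Nat.eq_of_mul_eq_mul_left (Nat.pos_of_ne_zero ha) h
    have hsub : (Ioc 0 N).image (fun t => a*t) ⊆ Ioc 0 (a*N) := by
      intro m hm
      rw [Finset.mem_image] at hm
      obtain ⟨t, ht, rfl⟩ := hm
      rw [Finset.mem_Ioc] at ht ⊢
      constructor
      · exact Nat.mul_pos (Nat.pos_of_ne_zero ha) ht.1
      · exact Nat.mul_le_mul_left a ht.2
    rw [himg]
    calc ∑ m ∈ (Ioc 0 N).image (fun t => a*t), (R m)^2
        ≤ ∑ m ∈ Ioc 0 (a*N), (R m)^2 :=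
          Finset.sum_le_sum_of_subset_of_nonneg hsub (fun m _ _ => sq_nonneg _)
      _ ≤ (a*N : ℕ) * ((K:ℝ)/2) := by
          apply hM₀
          calc M₀ ≤ N := hNM
            _ ≤ a * N := Nat.le_mul_of_pos_left N (Nat.pos_of_ne_zero ha)
  -- Combine
  have hX2 : X^2 ≤ ((a:ℝ) * K/2) * N^2 := by
    have : (((a*N : ℕ)):ℝ) = (a:ℝ) * N := by push_cast; ring
    calc X^2 ≤ N * ∑ t ∈ Ioc 0 N, (R (a*t))^2 := hstepB
      _ ≤ (N:ℝ) * ((a*N : ℕ) * ((K:ℝ)/2)) := by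
          apply mul_le_mul_of_nonneg_left hstepC hNpos.le
      _ = ((a:ℝ) * K/2) * N^2 := by rw [this]; ring
  have hXlt : X < (K:ℝ) * ε * N / 2 := by
    have hrhs : (0:ℝ) < (K:ℝ) * ε * N / 2 := by positivity
    have hsq : X^2 < ((K:ℝ) * ε * N / 2)^2 := by
      have h'' := mul_lt_mul_of_pos_right haK hKpos
      have hN2 : (0:ℝ) < (N:ℝ)^2 := by positivity
      have hlt : ((a:ℝ) * K/2) * N^2 < ((K:ℝ) * ε * N / 2)^2 := by
        have hexp : ((K:ℝ) * ε * N / 2)^2 = ((K:ℝ) * ε^2 / 2 * K / 2) * N^2 := by ring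
        rw [hexp]
        apply mul_lt_mul_of_pos_right _ hN2
        linarith
      linarith [hX2]
    exact lt_of_pow_lt_pow_left₀ 2 hrhs.le hsq
  have hRabs : |∑ t ∈ Ioc 0 N, R (a*t)| ≤ X := Finset.abs_sum_le_sum_abs _ _
  have hKS : (K:ℝ) * |S| < (K:ℝ) * (ε * N) := by
    have h1 : (K:ℝ) * |S| ≤ X + K^2 := by
      have htri := abs_sub_abs_le_abs_sub ((K:ℝ) * S) (∑ t ∈ Ioc 0 N, R (a*t))
      have habs : |(K:ℝ) * S| = (K:ℝ) * |S| := by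
        rw [abs_mul, abs_of_nonneg hKpos.le]
      linarith [hstepA, hRabs, htri, habs.le, habs.ge]
    have h2 : (K:ℝ)^2 ≤ (K:ℝ) * (ε * N / 4) := by
      have h' := mul_le_mul_of_nonneg_left hNε hKpos.le
      calc (K:ℝ)^2 = (K:ℝ)*(K:ℝ) := pow_two _
        _ ≤ _ := h'
    have h3 : (K:ℝ) * (ε * N) = (K:ℝ) * ε * N := by ring
    linarith [hXlt, h1, h2]
  have hfinal : |S| < ε * N := lt_of_mul_lt_mul_left hKS hKpos.le
  rw [Real.norm_eq_abs, abs_div, abs_of_nonneg hNpos.le]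
  rw [div_lt_iff₀ hNpos]
  exact hfinal

lemma density_dilate (hA : IsNormalSet' A) (a : ℕ) (ha : a ≠ 0) :
    Tendsto (fun N : ℕ => ((((Finset.Ioc 0 N).filter fun t => a*t ∈ A).card : ℝ)) / N)
      atTop (nhds (1/2)) := by
  have h := main_avg hA a ha
  have comb : Tendsto (fun N : ℕ => (∑ t ∈ Ioc 0 N, f A (a*t))/N + 1/2) atTop
      (nhds (0 + 1/2)) := h.add tendsto_const_nhds
  rw [zero_add] at comb
  apply comb.congr'
  filter_upwards [eventually_gt_atTop 0] with N hN
  have hNpos : (0:ℝ) < N := by exact_mod_cast hN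
  have hsum : ∑ t ∈ Ioc 0 N, f A (a*t)
      = ((((Finset.Ioc 0 N).filter fun t => a*t ∈ A).card : ℝ)) - N/2 := by
    have h1 : ∑ t ∈ Ioc 0 N, f A (a*t) = ∑ t ∈ Ioc 0 N, (g A (a*t) - 1/2) := rfl
    rw [h1, Finset.sum_sub_distrib, Finset.sum_const, Nat.card_Ioc, Nat.sub_zero]
    have h2 : ∑ t ∈ Ioc 0 N, g A (a*t)
        = ((((Finset.Ioc 0 N).filter fun t => a*t ∈ A).card : ℝ)) := by
      rw [← Finset.sum_boole]
      rfl
    rw [h2, nsmul_eq_mul]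
    ring
  rw [hsum]
  field_simp
  ring

end Pattern

end NormalAux

theorem normal_set_sum_of_squares (A : Set ℕ) (hA : IsNormalSet A) :
    ∃ x ∈ A, ∃ y ∈ A, IsSquare (x ^ 2 + y ^ 2) := by
  classical
  have hA' : NormalAux.IsNormalSet' A := hA
  by_contra hcon
  push_neg at hcon
  have key : ∀ p q c : ℕ, p*p + q*q = c*c → ∀ t : ℕ, ¬(p*t ∈ A ∧ q*t ∈ A) := by
    rintro p q c hpq t ⟨h1, h2⟩
    refine hcon (p*t) h1 (q*t) h2 ⟨c*t, ?_⟩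
    have hx : (p*t)^2 + (q*t)^2 = (p*p+q*q)*(t*t) := by ring
    rw [hx, hpq]
    ring
  have h12 := key 44 117 125 (by norm_num)
  have h13 := key 44 240 244 (by norm_num)
  have h23 := key 117 240 267 (by norm_num)
  set s₁ : ℕ → Finset ℕ := fun N => (Finset.Ioc 0 N).filter fun t => 44*t ∈ A with hs₁
  set s₂ : ℕ → Finset ℕ := fun N => (Finset.Ioc 0 N).filter fun t => 117*t ∈ A with hs₂
  set s₃ : ℕ → Finset ℕ := fun N => (Finset.Ioc 0 N).filter fun t => 240*t ∈ A with hs₃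
  have hcards : ∀ N : ℕ, (s₁ N).card + (s₂ N).card + (s₃ N).card ≤ N := by
    intro N
    have hd12 : Disjoint (s₁ N) (s₂ N) := by
      rw [hs₁, hs₂, Finset.disjoint_filter]
      intro t _ ht1 ht2
      exact h12 t ⟨ht1, ht2⟩
    have hd13 : Disjoint (s₁ N) (s₃ N) := by
      rw [hs₁, hs₃, Finset.disjoint_filter]
      intro t _ ht1 ht2
      exact h13 t ⟨ht1, ht2⟩
    have hd23 : Disjoint (s₂ N) (s₃ N) := by
      rw [hs₂, hs₃, Finset.disjoint_filter]
      intro t _ ht1 ht2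
      exact h23 t ⟨ht1, ht2⟩
    have hd : Disjoint (s₁ N ∪ s₂ N) (s₃ N) := Finset.disjoint_union_left.2 ⟨hd13, hd23⟩
    have hcard : (s₁ N ∪ s₂ N ∪ s₃ N).card = (s₁ N).card + (s₂ N).card + (s₃ N).card := by
      rw [Finset.card_union_of_disjoint hd, Finset.card_union_of_disjoint hd12]
    have hsub : s₁ N ∪ s₂ N ∪ s₃ N ⊆ Finset.Ioc 0 N := by
      apply Finset.union_subset
      · apply Finset.union_subset
        · rw [hs₁]; exact Finset.filter_subset _ _
        · rw [hs₂]; exact Finset.filter_subset _ _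
      · rw [hs₃]; exact Finset.filter_subset _ _
    calc (s₁ N).card + (s₂ N).card + (s₃ N).card = (s₁ N ∪ s₂ N ∪ s₃ N).card := hcard.symm
      _ ≤ (Finset.Ioc 0 N).card := Finset.card_le_card hsub
      _ = N := by rw [Nat.card_Ioc, Nat.sub_zero]
  have t1 := NormalAux.density_dilate hA' 44 (by norm_num)
  have t2 := NormalAux.density_dilate hA' 117 (by norm_num)
  have t3 := NormalAux.density_dilate hA' 240 (by norm_num)
  have hsum := (t1.add t2).add t3
  have hval : (1/2 : ℝ) + 1/2 + 1/2 = 3/2 := by norm_num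
  rw [hval] at hsum
  have hle : (3/2 : ℝ) ≤ 1 := by
    apply le_of_tendsto hsum
    filter_upwards [Filter.eventually_gt_atTop 0] with N hN
    have hNpos : (0:ℝ) < N := by exact_mod_cast hN
    have := hcards N
    have hcast : ((s₁ N).card : ℝ) + ((s₂ N).card : ℝ) + ((s₃ N).card : ℝ) ≤ (N : ℝ) := by
      exact_mod_cast this
    rw [← add_div, ← add_div, div_le_one hNpos]
    exact hcast
  linarith
end

section
/- Every normal set A ⊆ ℕ contains elements u, v with u > v such that u² − v² is a perfect square. -/
set_option maxRecDepth 2000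

open Finset Filter


open scoped Classical

noncomputable def cb : Bool → ℝ := fun b => if b then 1/2 else -1/2

lemma lemA (A : Set ℕ) (hA : IsNormalSet A) (L : ℕ) (hL : 0 < L) (φ : (Fin L → Bool) → ℝ)
    (c : ℝ) (hc : (∑ w : Fin L → Bool, φ w) / 2 ^ L = c) :
    Filter.Tendsto (fun N : ℕ => (∑ n ∈ Finset.Icc 1 N, φ (fun i => decide (n + (i:ℕ) ∈ A))) / N)
      Filter.atTop (nhds c) := by
  subst hc
  set pat : ℕ → (Fin L → Bool) := fun n i => decide (n + (i:ℕ) ∈ A) with hpat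
  have key : ∀ f : Fin L → Bool,
      Tendsto (fun N : ℕ => (((Finset.Icc 1 N).filter fun n => pat n = f).card : ℝ) / N)
        atTop (nhds (1 / 2 ^ L)) := by
    intro f
    have hlen : (List.ofFn f).length = L := List.length_ofFn
    have hne : List.ofFn f ≠ [] := by
      intro hcon
      rw [hcon] at hlen
      simp at hlen
      omega
    have h1 := hA (List.ofFn f) hne
    have hsets : ∀ N : ℕ, ((Finset.Icc 1 N).filter fun n =>
        ∀ i : Fin (List.ofFn f).length, (n + (i : ℕ) ∈ A ↔ (List.ofFn f).get i = true))
        = ((Finset.Icc 1 N).filter fun n => pat n = f) := by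
      intro N
      apply Finset.filter_congr
      intro n _
      constructor
      · intro hforall
        funext i
        have hi := hforall (Fin.cast hlen.symm i)
        rw [List.get_ofFn] at hi
        simp only [Fin.cast_cast, Fin.cast_eq_self, Fin.coe_cast] at hi
        simp only [hpat]
        by_cases hmem : n + (i:ℕ) ∈ A
        · simp [hmem, (hi.mp hmem).symm]
        · simp only [hmem, decide_eq_false_iff_not, Bool.not_eq_true] at *
          cases hf : f i
          · rfl
          · exact absurd (hi.mpr hf) hmem
      · intro hfun i
        have := congrFun hfun (Fin.cast hlen i)
        simp only [hpat] at this
        rw [List.get_ofFn]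
        simp only [Fin.coe_cast] at this ⊢
        rw [← this]
        simp
    have h1' : Tendsto (fun N : ℕ => (((Finset.Icc 1 N).filter fun n => pat n = f).card : ℝ) / N)
        atTop (nhds (1 / 2 ^ (List.ofFn f).length)) := by
      refine h1.congr fun N => ?_
      rw [hsets N]
    rw [hlen] at h1'
    exact h1'
  have hdecomp : ∀ N : ℕ, (∑ n ∈ Finset.Icc 1 N, φ (pat n)) / N
      = ∑ f : Fin L → Bool, φ f * ((((Finset.Icc 1 N).filter fun n => pat n = f).card : ℝ) / N) := by
    intro N
    rw [← Finset.sum_fiberwise_of_maps_to (fun n _ => Finset.mem_univ (pat n)) (fun n => φ (pat n))]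
    rw [Finset.sum_div]
    refine Finset.sum_congr rfl fun f _ => ?_
    have : ∑ n ∈ (Finset.Icc 1 N).filter (fun n => pat n = f), φ (pat n)
        = ∑ n ∈ (Finset.Icc 1 N).filter (fun n => pat n = f), φ f := by
      refine Finset.sum_congr rfl fun n hn => ?_
      rw [(Finset.mem_filter.mp hn).2]
    rw [this, Finset.sum_const, nsmul_eq_mul]
    ring
  have := Filter.Tendsto.congr (fun N => (hdecomp N).symm)
    (tendsto_finset_sum Finset.univ (fun f _ => (key f).const_mul (φ f)))
  convert this using 2
  rw [← Finset.sum_mul]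
  ring



lemma cb_not (b : Bool) : cb (!b) = - cb b := by cases b <;> norm_num [cb]

lemma cb_sq (b : Bool) : cb b * cb b = 1/4 := by cases b <;> norm_num [cb]

lemma sum_flip_zero (L : ℕ) (p q : Fin L) (hpq : p ≠ q) :
    ∑ u : Fin L → Bool, cb (u p) * cb (u q) = 0 := by
  refine Finset.sum_involution (fun u _ => Function.update u p (!(u p))) ?_ ?_ ?_ ?_
  · intro u _
    show cb (u p) * cb (u q) + cb ((Function.update u p (!(u p))) p) * cb ((Function.update u p (!(u p))) q) = 0
    have h1 : (Function.update u p (!(u p))) p = !(u p) := Function.update_self _ _ _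
    have h2 : (Function.update u p (!(u p))) q = u q := Function.update_of_ne hpq.symm _ _
    rw [h1, h2, cb_not]
    ring
  · intro u _ _ heq
    have : Function.update u p (!(u p)) = u := heq
    have h3 := congrFun this p
    rw [Function.update_self] at h3
    cases hup : u p <;> rw [hup] at h3 <;> simp at h3
  · intro u _; exact Finset.mem_univ _
  · intro u _
    funext x
    by_cases hx : x = p
    · subst hx
      simp [Function.update_self]
    · simp [Function.update_of_ne hx]

lemma lemB (L K : ℕ) (e : Fin K → Fin L) (he : Function.Injective e) :
    ∑ u : Fin L → Bool, (∑ j : Fin K, cb (u (e j)))^2 = 2^L * ((K:ℝ)/4) := by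
  have expand : ∀ u : Fin L → Bool, (∑ j : Fin K, cb (u (e j)))^2
      = ∑ j : Fin K, ∑ k : Fin K, cb (u (e j)) * cb (u (e k)) := by
    intro u; rw [sq, Finset.sum_mul_sum]
  rw [Finset.sum_congr rfl (fun u _ => expand u)]
  rw [Finset.sum_comm]
  have inner : ∀ j : Fin K, ∑ u : Fin L → Bool, ∑ k : Fin K, cb (u (e j)) * cb (u (e k))
      = 2^L * (1/4 : ℝ) := by
    intro j
    rw [Finset.sum_comm]
    have : ∀ k : Fin K, ∑ u : Fin L → Bool, cb (u (e j)) * cb (u (e k))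
        = if k = j then 2^L * (1/4 : ℝ) else 0 := by
      intro k
      by_cases hk : k = j
      · subst hk
        simp only [if_pos rfl]
        rw [Finset.sum_congr rfl (fun u _ => cb_sq (u (e k)))]
        rw [Finset.sum_const, nsmul_eq_mul]
        have : (Finset.univ : Finset (Fin L → Bool)).card = 2^L := by
          rw [Finset.card_univ, Fintype.card_fun]
          simp
        rw [this]
        push_cast
        ring
      · rw [if_neg hk]
        exact sum_flip_zero L (e j) (e k) (fun hc => hk (he hc).symm)
    rw [Finset.sum_congr rfl (fun k _ => this k)]
    rw [Finset.sum_ite_eq' Finset.univ j (fun _ => 2^L * (1/4 : ℝ))]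
    simp
  rw [Finset.sum_congr rfl (fun j _ => inner j), Finset.sum_const, nsmul_eq_mul]
  simp only [Finset.card_univ, Fintype.card_fin]
  ring



noncomputable def ind (A : Set ℕ) (m : ℕ) : ℝ := if m ∈ A then 1 else 0

lemma ind_nonneg (A : Set ℕ) (m : ℕ) : 0 ≤ ind A m := by
  unfold ind; split <;> norm_num

lemma cb_decide (A : Set ℕ) (m : ℕ) : cb (decide (m ∈ A)) = ind A m - 1/2 := by
  by_cases h : m ∈ A <;> norm_num [cb, ind, h]


lemma density_lb (A : Set ℕ) (hA : IsNormalSet A) (a : ℕ) (ha : 0 < a) (ha7 : a ≤ 697) :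
    ∀ᶠ N : ℕ in Filter.atTop,
      (7/20 : ℝ) * N ≤ ∑ z ∈ Finset.Icc 1 N, ind A (a * z) := by
  obtain ⟨K, hK⟩ : ∃ K : ℕ, K = 69700000 := ⟨_, rfl⟩
  obtain ⟨L, hLdef⟩ : ∃ L : ℕ, L = a * K := ⟨_, rfl⟩
  have hKpos' : 0 < K := by omega
  have hLpos : 0 < L := by rw [hLdef]; exact Nat.mul_pos ha hKpos'
  have hemb : ∀ j : Fin K, a * (j : ℕ) < L :=
    fun j => hLdef ▸ Nat.mul_lt_mul_of_le_of_lt (le_refl a) j.isLt ha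
  have hinj : Function.Injective (fun j : Fin K => (⟨a * (j:ℕ), hemb j⟩ : Fin L)) := by
    intro x y hxy
    have : a * (x:ℕ) = a * (y:ℕ) := congrArg Fin.val hxy
    exact Fin.ext (Nat.eq_of_mul_eq_mul_left ha this)
  obtain ⟨S, hSdef⟩ : ∃ S : ℕ → ℝ, S = fun n => ∑ j ∈ Finset.range K, (ind A (n + a*j) - 1/2) :=
    ⟨_, rfl⟩
  -- main second-moment limit
  have hS' : Filter.Tendsto (fun N : ℕ => (∑ n ∈ Finset.Icc 1 N, (S n)^2) / N)
      Filter.atTop (nhds ((K:ℝ)/4)) := by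
    have h0 := lemA A hA L hLpos (fun u => (∑ j : Fin K, cb (u ⟨a*(j:ℕ), hemb j⟩))^2) ((K:ℝ)/4)
      (by
        show (∑ w : Fin L → Bool, (∑ j : Fin K, cb (w ⟨a*(j:ℕ), hemb j⟩))^2) / 2^L = (K:ℝ)/4
        rw [lemB L K (fun j => ⟨a*(j:ℕ), hemb j⟩) hinj]
        rw [mul_comm, mul_div_assoc]
        rw [div_self (by positivity : (2:ℝ)^L ≠ 0)]
        ring)
    refine h0.congr fun N => ?_
    have hterm : ∀ n : ℕ, (∑ j : Fin K, cb (decide (n + a*(j:ℕ) ∈ A)))^2 = (S n)^2 := by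
      intro n
      have h1 : ∀ j : Fin K, cb (decide (n + a*(j:ℕ) ∈ A)) = ind A (n + a*(j:ℕ)) - 1/2 :=
        fun j => cb_decide A _
      have h2 : (∑ j : Fin K, (ind A (n + a*(j:ℕ)) - 1/2)) = S n := by
        rw [hSdef]
        exact Fin.sum_univ_eq_sum_range (fun j => ind A (n + a*j) - 1/2) K
      rw [Finset.sum_congr rfl fun j _ => h1 j, h2]
    have hsum : (∑ n ∈ Finset.Icc 1 N, (∑ j : Fin K, cb (decide (n + a*(j:ℕ) ∈ A)))^2)
        = ∑ n ∈ Finset.Icc 1 N, (S n)^2 := Finset.sum_congr rfl fun n _ => hterm n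
    show (∑ n ∈ Finset.Icc 1 N, (∑ j : Fin K, cb (decide (n + a*(j:ℕ) ∈ A)))^2) / N
        = (∑ n ∈ Finset.Icc 1 N, (S n)^2) / N
    rw [hsum]
  -- Markov
  have hMk : ∀ᶠ N : ℕ in Filter.atTop,
      (∑ n ∈ Finset.Icc 1 N, (S n)^2) ≤ (N:ℝ) * ((K:ℝ)/3) := by
    have hlt : (K:ℝ)/4 < (K:ℝ)/3 := by
      have : (0:ℝ) < K := by rw [hK]; norm_num
      linarith
    filter_upwards [hS'.eventually_lt_const hlt, Filter.eventually_gt_atTop 0] with N h1 h2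
    have hN0 : (0:ℝ) < N := by exact_mod_cast h2
    rw [div_lt_iff₀ hN0] at h1
    linarith
  obtain ⟨N₁, hN₁⟩ := Filter.eventually_atTop.mp hMk
  refine Filter.eventually_atTop.mpr ⟨10*K + K*N₁ + N₁ + 10, fun N hN => ?_⟩
  obtain ⟨M, hMdef⟩ : ∃ M : ℕ, M = N - K + 1 := ⟨_, rfl⟩
  have hKN : K ≤ N := by omega
  have hMN : M + K - 1 = N := by omega
  have hM1 : 1 ≤ M := by omega
  have hMge : N₁ ≤ M := by omega
  have hN₁aM : N₁ ≤ a * M := le_trans hMge (Nat.le_mul_of_pos_left M ha)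
  have Skey : (∑ n ∈ Finset.Icc 1 (a*M), (S n)^2) ≤ ((a*M : ℕ):ℝ) * ((K:ℝ)/3) := hN₁ (a*M) hN₁aM
  -- bad set bound
  have bad1 : (((Finset.Icc 1 M).filter (fun m => S (a*m) < -((K:ℝ)/10))).card : ℝ) * ((K:ℝ)/10)^2 ≤ ∑ m ∈ (Finset.Icc 1 M).filter (fun m => S (a*m) < -((K:ℝ)/10)), (S (a*m))^2 := by
    have := Finset.card_nsmul_le_sum ((Finset.Icc 1 M).filter (fun m => S (a*m) < -((K:ℝ)/10))) (fun m => (S (a*m))^2) (((K:ℝ)/10)^2) ?_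
    · rw [nsmul_eq_mul] at this; exact_mod_cast this
    · intro m hm
      have hm2 := (Finset.mem_filter.mp hm).2
      have hKpos : (0:ℝ) < (K:ℝ)/10 := by rw [hK]; norm_num
      nlinarith
  have bad2 : ∑ m ∈ (Finset.Icc 1 M).filter (fun m => S (a*m) < -((K:ℝ)/10)), (S (a*m))^2 ≤ ∑ n ∈ Finset.Icc 1 (a*M), (S n)^2 := by
    have himg : ∑ m ∈ (Finset.Icc 1 M).filter (fun m => S (a*m) < -((K:ℝ)/10)), (S (a*m))^2 = ∑ n ∈ ((Finset.Icc 1 M).filter (fun m => S (a*m) < -((K:ℝ)/10))).image (fun m => a*m), (S n)^2 := by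
      rw [Finset.sum_image]
      intro x _ y _ hxy
      exact Nat.eq_of_mul_eq_mul_left ha hxy
    rw [himg]
    apply Finset.sum_le_sum_of_subset_of_nonneg
    · intro n hn
      obtain ⟨m, hm, rfl⟩ := Finset.mem_image.mp hn
      have hm1 := Finset.mem_Icc.mp (Finset.mem_filter.mp hm).1
      rw [Finset.mem_Icc]
      constructor
      · exact Nat.mul_pos ha hm1.1
      · exact Nat.mul_le_mul_left a hm1.2
    · intro _ _ _; positivity
  have hBcard : (((Finset.Icc 1 M).filter (fun m => S (a*m) < -((K:ℝ)/10))).card : ℝ) ≤ (M:ℝ)/3000 := by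
    have hcast : ((a*M : ℕ):ℝ) = (a:ℝ) * M := by push_cast; ring
    rw [hcast] at Skey
    have ha7' : (a:ℝ) ≤ 697 := by exact_mod_cast ha7
    have hM0 : (0:ℝ) ≤ M := by positivity
    have hKval : (K:ℝ) = 69700000 := by rw [hK]; norm_num
    have hsq : ((K:ℝ)/10)^2 = (48580900000000:ℝ) := by rw [hKval]; norm_num
    rw [hsq] at bad1
    have hA1 : (a:ℝ) * M ≤ 697 * M := mul_le_mul_of_nonneg_right ha7' hM0
    have Skey' : (∑ n ∈ Finset.Icc 1 (a*M), (S n)^2) ≤ 697 * (M:ℝ) * (69700000/3) := by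
      rw [hKval] at Skey
      nlinarith [Skey, hA1]
    linarith [bad1, bad2, Skey']
  -- counting identity
  have key5 : ∀ m : ℕ, S (a*m) + (K:ℝ)/2 = ∑ j ∈ Finset.range K, ind A (a*(m+j)) := by
    intro m
    have h1 : ∀ j ∈ Finset.range K, ind A (a*m + a*j) - 1/2 = ind A (a*(m+j)) - 1/2 := by
      intro j _
      rw [mul_add]
    rw [hSdef]
    simp only []
    rw [Finset.sum_congr rfl h1, Finset.sum_sub_distrib, Finset.sum_const, Finset.card_range,
      nsmul_eq_mul]
    ring
  -- lower bound for the window sums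
  have hgoodcard : (((Finset.Icc 1 M).filter (fun m => ¬ (S (a*m) < -((K:ℝ)/10)))).card : ℝ)
      = (M:ℝ) - (((Finset.Icc 1 M).filter (fun m => S (a*m) < -((K:ℝ)/10))).card:ℝ) := by
    have := Finset.card_filter_add_card_filter_not (s := Finset.Icc 1 M)
      (p := fun m => S (a*m) < -((K:ℝ)/10))
    have hcard : (Finset.Icc 1 M).card = M := by rw [Nat.card_Icc]; omega
    rw [hcard] at this
    have h2 : ((Finset.Icc 1 M).filter (fun m => ¬ (S (a*m) < -((K:ℝ)/10)))).card
        = M - ((Finset.Icc 1 M).filter (fun m => S (a*m) < -((K:ℝ)/10))).card := by omega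
    rw [h2]
    have hle : ((Finset.Icc 1 M).filter (fun m => S (a*m) < -((K:ℝ)/10))).card ≤ M := by omega
    exact_mod_cast Nat.cast_sub hle
  have hlow : ((M:ℝ) - (((Finset.Icc 1 M).filter (fun m => S (a*m) < -((K:ℝ)/10))).card:ℝ)) * (2*(K:ℝ)/5) ≤ ∑ m ∈ Finset.Icc 1 M, (S (a*m) + (K:ℝ)/2) := by
    rw [← Finset.sum_filter_add_sum_filter_not (Finset.Icc 1 M)
      (fun m => S (a*m) < -((K:ℝ)/10)) (fun m => S (a*m) + (K:ℝ)/2)]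
    have hpos : 0 ≤ ∑ m ∈ (Finset.Icc 1 M).filter (fun m => S (a*m) < -((K:ℝ)/10)), (S (a*m) + (K:ℝ)/2) := by
      apply Finset.sum_nonneg
      intro m _
      rw [key5 m]
      exact Finset.sum_nonneg fun j _ => ind_nonneg A _
    have hgood : ((M:ℝ) - (((Finset.Icc 1 M).filter (fun m => S (a*m) < -((K:ℝ)/10))).card:ℝ)) * (2*(K:ℝ)/5)
        ≤ ∑ m ∈ (Finset.Icc 1 M).filter (fun m => ¬ (S (a*m) < -((K:ℝ)/10))), (S (a*m) + (K:ℝ)/2) := by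
      rw [← hgoodcard]
      have := Finset.card_nsmul_le_sum ((Finset.Icc 1 M).filter (fun m => ¬ (S (a*m) < -((K:ℝ)/10))))
        (fun m => S (a*m) + (K:ℝ)/2) (2*(K:ℝ)/5) ?_
      · rw [nsmul_eq_mul] at this
        exact le_trans (le_of_eq (by ring)) this
      · intro m hm
        have hm2 := (Finset.mem_filter.mp hm).2
        push_neg at hm2
        linarith
    linarith
  -- upper bound: window sums vs count
  have hup : ∑ m ∈ Finset.Icc 1 M, (S (a*m) + (K:ℝ)/2)
      ≤ (K:ℝ) * ∑ z ∈ Finset.Icc 1 N, ind A (a * z) := by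
    have h1 : ∑ m ∈ Finset.Icc 1 M, (S (a*m) + (K:ℝ)/2)
        = ∑ j ∈ Finset.range K, ∑ m ∈ Finset.Icc 1 M, ind A (a*(j+m)) := by
      rw [Finset.sum_congr rfl (fun m _ => key5 m)]
      rw [Finset.sum_comm]
      refine Finset.sum_congr rfl fun j _ => Finset.sum_congr rfl fun m _ => ?_
      rw [add_comm m j]
    rw [h1]
    have h2 : ∀ j ∈ Finset.range K, ∑ m ∈ Finset.Icc 1 M, ind A (a*(j+m))
        ≤ ∑ z ∈ Finset.Icc 1 N, ind A (a * z) := by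
      intro j hj
      have hj' := Finset.mem_range.mp hj
      have hmap : ∑ m ∈ Finset.Icc 1 M, ind A (a*(j+m))
          = ∑ z ∈ Finset.Icc (j+1) (j+M), ind A (a*z) := by
        rw [← Finset.map_add_left_Icc 1 M j, Finset.sum_map]
        rfl
      rw [hmap]
      apply Finset.sum_le_sum_of_subset_of_nonneg
      · apply Finset.Icc_subset_Icc <;> omega
      · intro _ _ _; exact ind_nonneg A _
    calc ∑ j ∈ Finset.range K, ∑ m ∈ Finset.Icc 1 M, ind A (a*(j+m))
        ≤ ∑ j ∈ Finset.range K, ∑ z ∈ Finset.Icc 1 N, ind A (a * z) := Finset.sum_le_sum h2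
      _ = (K:ℝ) * ∑ z ∈ Finset.Icc 1 N, ind A (a * z) := by
          rw [Finset.sum_const, Finset.card_range, nsmul_eq_mul]
  -- combine
  have hKval : (K:ℝ) = 69700000 := by rw [hK]; norm_num
  have hMcast : (M:ℝ) = (N:ℝ) - K + 1 := by
    have h : M + K = N + 1 := by omega
    have h2 : (M:ℝ) + K = (N:ℝ) + 1 := by exact_mod_cast congrArg (Nat.cast : ℕ → ℝ) h
    linarith
  have hNge : (69700000:ℝ) * 10 ≤ (N:ℝ) := by
    have : 10 * K ≤ N := by omega
    rw [hKval] at *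
    exact_mod_cast le_trans (by norm_num [hK]) (Nat.cast_le.mpr this)
  rw [hKval] at hlow hup
  rw [hMcast, hKval] at hBcard
  rw [hMcast] at hlow
  linarith


theorem normal_set_difference_of_squares (A : Set ℕ) (hA : IsNormalSet A) :
    ∃ u ∈ A, ∃ v ∈ A, v < u ∧ IsSquare (u ^ 2 - v ^ 2) := by
  by_contra hcon
  push_neg at hcon
  have p12 : ∀ z : ℕ, 1 ≤ z → ¬(153*z ∈ A ∧ 185*z ∈ A) := by
    rintro z hz ⟨h1, h2⟩
    refine hcon (185*z) h2 (153*z) h1 (by omega) ⟨104*z, ?_⟩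
    have h : (185*z)^2 = (153*z)^2 + (104*z)*(104*z) := by ring
    omega
  have p13 : ∀ z : ℕ, 1 ≤ z → ¬(153*z ∈ A ∧ 697*z ∈ A) := by
    rintro z hz ⟨h1, h3⟩
    refine hcon (697*z) h3 (153*z) h1 (by omega) ⟨680*z, ?_⟩
    have h : (697*z)^2 = (153*z)^2 + (680*z)*(680*z) := by ring
    omega
  have p23 : ∀ z : ℕ, 1 ≤ z → ¬(185*z ∈ A ∧ 697*z ∈ A) := by
    rintro z hz ⟨h2, h3⟩
    refine hcon (697*z) h3 (185*z) h2 (by omega) ⟨672*z, ?_⟩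
    have h : (697*z)^2 = (185*z)^2 + (672*z)*(672*z) := by ring
    omega
  have e153 := density_lb A hA 153 (by norm_num) (by norm_num)
  have e185 := density_lb A hA 185 (by norm_num) (by norm_num)
  have e697 := density_lb A hA 697 (by norm_num) (by norm_num)
  obtain ⟨N₀, hN₀⟩ := Filter.eventually_atTop.mp ((e153.and e185).and e697)
  obtain ⟨⟨g1, g2⟩, g3⟩ := hN₀ (max N₀ 1) (le_max_left _ _)
  set N := max N₀ 1 with hNdef
  have hN1 : (1:ℝ) ≤ (N:ℝ) := by
    have : 1 ≤ N := le_max_right _ _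
    exact_mod_cast this
  have key : ∀ z ∈ Finset.Icc 1 N, ind A (153*z) + ind A (185*z) + ind A (697*z) ≤ 1 := by
    intro z hz
    have hz1 : 1 ≤ z := (Finset.mem_Icc.mp hz).1
    by_cases h1 : 153*z ∈ A <;> by_cases h2 : 185*z ∈ A <;> by_cases h3 : 697*z ∈ A
    · exact absurd ⟨h1, h2⟩ (p12 z hz1)
    · exact absurd ⟨h1, h2⟩ (p12 z hz1)
    · exact absurd ⟨h1, h3⟩ (p13 z hz1)
    · norm_num [ind, h1, h2, h3]
    · exact absurd ⟨h2, h3⟩ (p23 z hz1)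
    · norm_num [ind, h1, h2, h3]
    · norm_num [ind, h1, h2, h3]
    · norm_num [ind, h1, h2, h3]
  have hsum : ∑ z ∈ Finset.Icc 1 N, (ind A (153*z) + ind A (185*z) + ind A (697*z)) ≤ (N:ℝ) := by
    calc ∑ z ∈ Finset.Icc 1 N, (ind A (153*z) + ind A (185*z) + ind A (697*z))
        ≤ ∑ _z ∈ Finset.Icc 1 N, (1:ℝ) := Finset.sum_le_sum key
      _ = (N:ℝ) := by simp
  rw [Finset.sum_add_distrib, Finset.sum_add_distrib] at hsum
  linarith
end
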